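/- arXiv:1511.08341 — 5 statements merged into one kernel-verified Lean document; each statement's English description precedes it below -/
import Mathlib

section
/- Let a : ℝ → ℝ be continuous on [0,1] and let (u,p) be a classical solution of the damped wave system on [0,T]. Then for all 0 ≤ s ≤ t ≤ T the energy identity E⁰(t) = E⁰(s) − ∫ₛᵗ ∫₀¹ a(x)·u(r,x)² dx dr holds. In particular, if a(x) ≥ 0 for all x ∈ [0,1], then E⁰ is monotonically decreasing on [0,T]. -/
open MeasureTheory Set

/-- The L²(0,1) inner product `(f,g) = ∫₀¹ f g dx`. -/
noncomputable def L2ip (f g : ℝ → ℝ) : ℝ := ∫ x in (0:ℝ)..1, f x * g x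

/-- The squared L²(0,1) norm `‖f‖² = ∫₀¹ f² dx`. -/
noncomputable def L2nsq (f : ℝ → ℝ) : ℝ := ∫ x in (0:ℝ)..1, (f x) ^ 2

/-- The L²(0,1) norm. -/
noncomputable def L2nrm (f : ℝ → ℝ) : ℝ := Real.sqrt (L2nsq f)

/-- A classical solution of the damped wave system on `[0,T] × [0,1]`:
`u, p` (time first, space second) with partial derivatives `ut, ux, pt, px`
which are continuous on `[0,T] × [0,1]`, satisfying
`∂ₜ u + ∂ₓ p + a u = 0`, `∂ₜ p + ∂ₓ u = 0` and `p(t,0) = p(t,1) = 0`. -/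
def IsClassicalSolution (T : ℝ) (a : ℝ → ℝ) (u p ut ux pt px : ℝ → ℝ → ℝ) : Prop :=
  (∀ t ∈ Icc (0:ℝ) T, ∀ x ∈ Icc (0:ℝ) 1,
      HasDerivAt (fun s => u s x) (ut t x) t ∧
      HasDerivAt (fun y => u t y) (ux t x) x ∧
      HasDerivAt (fun s => p s x) (pt t x) t ∧
      HasDerivAt (fun y => p t y) (px t x) x) ∧
  ContinuousOn (Function.uncurry ut) (Icc (0:ℝ) T ×ˢ Icc (0:ℝ) 1) ∧
  ContinuousOn (Function.uncurry ux) (Icc (0:ℝ) T ×ˢ Icc (0:ℝ) 1) ∧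
  ContinuousOn (Function.uncurry pt) (Icc (0:ℝ) T ×ˢ Icc (0:ℝ) 1) ∧
  ContinuousOn (Function.uncurry px) (Icc (0:ℝ) T ×ˢ Icc (0:ℝ) 1) ∧
  (∀ t ∈ Icc (0:ℝ) T, ∀ x ∈ Icc (0:ℝ) 1,
      ut t x + px t x + a x * u t x = 0 ∧ pt t x + ux t x = 0) ∧
  (∀ t ∈ Icc (0:ℝ) T, p t 0 = 0 ∧ p t 1 = 0)

/-- Continuity in the second variable, for fixed first variable. -/
lemma contOn_slice_x {T : ℝ} {f : ℝ → ℝ → ℝ}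
    (hf : ContinuousOn (Function.uncurry f) (Icc (0:ℝ) T ×ˢ Icc (0:ℝ) 1))
    {r : ℝ} (hr : r ∈ Icc (0:ℝ) T) : ContinuousOn (fun x => f r x) (Icc (0:ℝ) 1) := by
  have h : (fun x => f r x) = Function.uncurry f ∘ (fun x => (r, x)) := rfl
  rw [h]
  exact hf.comp (Continuous.continuousOn (by continuity)) (fun x hx => ⟨hr, hx⟩)

/-- Continuity in the first variable, for fixed second variable. -/
lemma contOn_slice_t {T : ℝ} {f : ℝ → ℝ → ℝ}
    (hf : ContinuousOn (Function.uncurry f) (Icc (0:ℝ) T ×ˢ Icc (0:ℝ) 1))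
    {x : ℝ} (hx : x ∈ Icc (0:ℝ) 1) : ContinuousOn (fun r => f r x) (Icc (0:ℝ) T) := by
  have h : (fun r => f r x) = Function.uncurry f ∘ (fun r => (r, x)) := rfl
  rw [h]
  exact hf.comp (Continuous.continuousOn (by continuity)) (fun r hr => ⟨hr, hx⟩)

/-- Joint continuity from existence of bounded (continuous) partial derivatives. -/
lemma jointCont {T : ℝ} {f ft fx : ℝ → ℝ → ℝ}
    (hd : ∀ t ∈ Icc (0:ℝ) T, ∀ x ∈ Icc (0:ℝ) 1,
      HasDerivAt (fun s => f s x) (ft t x) t ∧ HasDerivAt (fun y => f t y) (fx t x) x)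
    (hft : ContinuousOn (Function.uncurry ft) (Icc (0:ℝ) T ×ˢ Icc (0:ℝ) 1))
    (hfx : ContinuousOn (Function.uncurry fx) (Icc (0:ℝ) T ×ˢ Icc (0:ℝ) 1)) :
    ContinuousOn (Function.uncurry f) (Icc (0:ℝ) T ×ˢ Icc (0:ℝ) 1) := by
  obtain ⟨M₁, hM₁⟩ := (isCompact_Icc.prod isCompact_Icc).exists_bound_of_continuousOn hft
  obtain ⟨M₂, hM₂⟩ := (isCompact_Icc.prod isCompact_Icc).exists_bound_of_continuousOn hfx
  have key : ∀ t ∈ Icc (0:ℝ) T, ∀ t' ∈ Icc (0:ℝ) T, ∀ x ∈ Icc (0:ℝ) 1, ∀ x' ∈ Icc (0:ℝ) 1,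
      |f t x - f t' x'| ≤ M₁ * |t - t'| + M₂ * |x - x'| := by
    intro t ht t' ht' x hx x' hx'
    have h1 : ‖f t x - f t' x‖ ≤ M₁ * ‖t - t'‖ :=
      (convex_Icc (0:ℝ) T).norm_image_sub_le_of_norm_hasDerivWithin_le
        (f' := fun s => ft s x)
        (fun s hs => ((hd s hs x hx).1).hasDerivWithinAt)
        (fun s hs => hM₁ (s, x) ⟨hs, hx⟩) ht' ht
    have h2 : ‖f t' x - f t' x'‖ ≤ M₂ * ‖x - x'‖ :=
      (convex_Icc (0:ℝ) 1).norm_image_sub_le_of_norm_hasDerivWithin_le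
        (f' := fun y => fx t' y)
        (fun y hy => ((hd t' ht' y hy).2).hasDerivWithinAt)
        (fun y hy => hM₂ (t', y) ⟨ht', hy⟩) hx' hx
    calc |f t x - f t' x'| ≤ |f t x - f t' x| + |f t' x - f t' x'| := abs_sub_le _ _ _
    _ ≤ M₁ * |t - t'| + M₂ * |x - x'| := add_le_add h1 h2
  intro q hq
  rw [Metric.continuousWithinAt_iff]
  intro ε hε
  have hM₁0 : 0 ≤ M₁ := le_trans (norm_nonneg _) (hM₁ q hq)
  have hM₂0 : 0 ≤ M₂ := le_trans (norm_nonneg _) (hM₂ q hq)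
  refine ⟨ε / (M₁ + M₂ + 1), by positivity, ?_⟩
  rintro ⟨t, x⟩ ⟨ht, hx⟩ hdist
  obtain ⟨ht', hx'⟩ := hq
  have hd1 : |t - q.1| < ε / (M₁ + M₂ + 1) := by
    have := le_max_left (dist t q.1) (dist x q.2)
    rw [Prod.dist_eq] at hdist
    rw [← Real.dist_eq]
    exact lt_of_le_of_lt this hdist
  have hd2 : |x - q.2| < ε / (M₁ + M₂ + 1) := by
    have := le_max_right (dist t q.1) (dist x q.2)
    rw [Prod.dist_eq] at hdist
    rw [← Real.dist_eq]
    exact lt_of_le_of_lt this hdist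
  have hb := key t ht q.1 ht' x hx q.2 hx'
  have hε' : 0 < ε / (M₁ + M₂ + 1) := by positivity
  have he : (M₁ + M₂ + 1) * (ε / (M₁ + M₂ + 1)) = ε := by field_simp
  have : dist (Function.uncurry f (t, x)) (Function.uncurry f q) = |f t x - f q.1 q.2| := by
    rw [Real.dist_eq]; rfl
  rw [this]
  nlinarith [mul_le_mul_of_nonneg_left hd1.le hM₁0, mul_le_mul_of_nonneg_left hd2.le hM₂0]

/-- Energy identity and monotone decay of the energy `E⁰` for classical solutions
of the damped wave system. -/
theorem stmt0 (T : ℝ) (hT : 0 < T) (a : ℝ → ℝ) (ha : ContinuousOn a (Icc (0:ℝ) 1))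
    (u p ut ux pt px : ℝ → ℝ → ℝ)
    (hsol : IsClassicalSolution T a u p ut ux pt px) :
    (∀ s t : ℝ, 0 ≤ s → s ≤ t → t ≤ T →
      (1/2) * (∫ x in (0:ℝ)..1, ((u t x) ^ 2 + (p t x) ^ 2))
        = (1/2) * (∫ x in (0:ℝ)..1, ((u s x) ^ 2 + (p s x) ^ 2))
          - ∫ r in s..t, ∫ x in (0:ℝ)..1, a x * (u r x) ^ 2) ∧
    ((∀ x ∈ Icc (0:ℝ) 1, 0 ≤ a x) →
      AntitoneOn (fun t => (1/2) * ∫ x in (0:ℝ)..1, ((u t x) ^ 2 + (p t x) ^ 2))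
        (Icc (0:ℝ) T)) := by
  obtain ⟨hderiv, hut, hux, hpt, hpx, hpde, hbc⟩ := hsol
  have hucont : ContinuousOn (Function.uncurry u) (Icc (0:ℝ) T ×ˢ Icc (0:ℝ) 1) :=
    jointCont (fun t ht x hx => ⟨(hderiv t ht x hx).1, (hderiv t ht x hx).2.1⟩) hut hux
  have hpcont : ContinuousOn (Function.uncurry p) (Icc (0:ℝ) T ×ˢ Icc (0:ℝ) 1) :=
    jointCont (fun t ht x hx => ⟨(hderiv t ht x hx).2.2.1, (hderiv t ht x hx).2.2.2⟩) hpt hpx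
  set g : ℝ → ℝ → ℝ := fun r x => u r x * ut r x + p r x * pt r x with hgdef
  have hGcont : ContinuousOn (Function.uncurry g) (Icc (0:ℝ) T ×ˢ Icc (0:ℝ) 1) :=
    (hucont.mul hut).add (hpcont.mul hpt)
  -- spatial identity from the PDE, integration by parts and boundary conditions
  have hspace : ∀ r ∈ Icc (0:ℝ) T,
      (∫ x in (0:ℝ)..1, g r x) = -∫ x in (0:ℝ)..1, a x * (u r x) ^ 2 := by
    intro r hr
    have hcu := contOn_slice_x hucont hr
    have hcp := contOn_slice_x hpcont hr
    have hcux := contOn_slice_x hux hr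
    have hcpx := contOn_slice_x hpx hr
    have hftc : (∫ x in (0:ℝ)..1, (ux r x * p r x + u r x * px r x))
        = u r 1 * p r 1 - u r 0 * p r 0 := by
      refine intervalIntegral.integral_eq_sub_of_hasDerivAt
        (f := fun y => u r y * p r y) ?_ ?_
      · intro x hx
        rw [uIcc_of_le (by norm_num : (0:ℝ) ≤ 1)] at hx
        exact (hderiv r hr x hx).2.1.mul (hderiv r hr x hx).2.2.2
      · apply ContinuousOn.intervalIntegrable
        rw [uIcc_of_le (by norm_num : (0:ℝ) ≤ 1)]
        exact (hcux.mul hcp).add (hcu.mul hcpx)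
    rw [(hbc r hr).1, (hbc r hr).2, mul_zero, mul_zero, sub_zero] at hftc
    have hEq : EqOn (fun x => g r x)
        (fun x => -(ux r x * p r x + u r x * px r x) - a x * (u r x) ^ 2)
        (uIcc (0:ℝ) 1) := by
      intro x hx
      rw [uIcc_of_le (by norm_num : (0:ℝ) ≤ 1)] at hx
      obtain ⟨e1, e2⟩ := hpde r hr x hx
      have h1 : ut r x = -px r x - a x * u r x := by linarith
      have h2 : pt r x = -ux r x := by linarith
      show u r x * ut r x + p r x * pt r x = _
      rw [h1, h2]; ring
    rw [intervalIntegral.integral_congr hEq, intervalIntegral.integral_sub,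
      intervalIntegral.integral_neg, hftc]
    · ring
    · apply ContinuousOn.intervalIntegrable
      rw [uIcc_of_le (by norm_num : (0:ℝ) ≤ 1)]
      exact ((hcux.mul hcp).add (hcu.mul hcpx)).neg
    · apply ContinuousOn.intervalIntegrable
      rw [uIcc_of_le (by norm_num : (0:ℝ) ≤ 1)]
      exact ha.mul (hcu.pow 2)
  -- time FTC pointwise in x
  have htime : ∀ s t : ℝ, 0 ≤ s → s ≤ t → t ≤ T → ∀ x ∈ Icc (0:ℝ) 1,
      (u t x) ^ 2 + (p t x) ^ 2 - ((u s x) ^ 2 + (p s x) ^ 2)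
        = ∫ r in s..t, 2 * g r x := by
    intro s t hs hst htT x hx
    have hsub : Icc s t ⊆ Icc 0 T := Icc_subset_Icc hs htT
    have hFTC := intervalIntegral.integral_eq_sub_of_hasDerivAt
      (f := fun r => (u r x) ^ 2 + (p r x) ^ 2) (f' := fun r => 2 * g r x)
      (a := s) (b := t) ?_ ?_
    · linarith [hFTC]
    · intro r hrm
      rw [uIcc_of_le hst] at hrm
      have hr := hsub hrm
      have d1 := (hderiv r hr x hx).1
      have d2 := (hderiv r hr x hx).2.2.1
      have hh := (d1.pow 2).add (d2.pow 2)
      convert hh using 1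
      show 2 * (u r x * ut r x + p r x * pt r x) = _
      push_cast
      ring
      rfl
    · apply ContinuousOn.intervalIntegrable
      rw [uIcc_of_le hst]
      have : ContinuousOn (fun r => 2 * g r x) (Icc (0:ℝ) T) :=
        continuousOn_const.mul
          ((contOn_slice_t hucont hx).mul (contOn_slice_t hut hx) |>.add
            ((contOn_slice_t hpcont hx).mul (contOn_slice_t hpt hx)))
      exact this.mono hsub
  -- the main identity
  have hmain : ∀ s t : ℝ, 0 ≤ s → s ≤ t → t ≤ T →
      (1/2) * (∫ x in (0:ℝ)..1, ((u t x) ^ 2 + (p t x) ^ 2))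
        = (1/2) * (∫ x in (0:ℝ)..1, ((u s x) ^ 2 + (p s x) ^ 2))
          - ∫ r in s..t, ∫ x in (0:ℝ)..1, a x * (u r x) ^ 2 := by
    intro s t hs hst htT
    have hsT : s ∈ Icc (0:ℝ) T := ⟨hs, le_trans hst htT⟩
    have htT' : t ∈ Icc (0:ℝ) T := ⟨le_trans hs hst, htT⟩
    have hsub : Icc s t ⊆ Icc 0 T := Icc_subset_Icc hs htT
    have hFt : IntervalIntegrable (fun x => (u t x) ^ 2 + (p t x) ^ 2) volume 0 1 := by
      apply ContinuousOn.intervalIntegrable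
      rw [uIcc_of_le (by norm_num : (0:ℝ) ≤ 1)]
      exact ((contOn_slice_x hucont htT').pow 2).add ((contOn_slice_x hpcont htT').pow 2)
    have hFs : IntervalIntegrable (fun x => (u s x) ^ 2 + (p s x) ^ 2) volume 0 1 := by
      apply ContinuousOn.intervalIntegrable
      rw [uIcc_of_le (by norm_num : (0:ℝ) ≤ 1)]
      exact ((contOn_slice_x hucont hsT).pow 2).add ((contOn_slice_x hpcont hsT).pow 2)
    have h1 : (∫ x in (0:ℝ)..1, ((u t x) ^ 2 + (p t x) ^ 2))
        - (∫ x in (0:ℝ)..1, ((u s x) ^ 2 + (p s x) ^ 2))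
        = ∫ x in (0:ℝ)..1, (∫ r in s..t, 2 * g r x) := by
      rw [← intervalIntegral.integral_sub hFt hFs]
      apply intervalIntegral.integral_congr
      intro x hx
      rw [uIcc_of_le (by norm_num : (0:ℝ) ≤ 1)] at hx
      exact htime s t hs hst htT x hx
    -- Fubini
    have hint : Integrable (Function.uncurry fun x r => 2 * g r x)
        ((volume.restrict (Ioc (0:ℝ) 1)).prod (volume.restrict (Ioc s t))) := by
      rw [Measure.prod_restrict]
      have hcont : ContinuousOn (fun z : ℝ × ℝ => 2 * g z.2 z.1)
          (Icc (0:ℝ) 1 ×ˢ Icc s t) := by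
        apply continuousOn_const.mul
        have hswapcont : ContinuousOn (fun z : ℝ × ℝ => g z.2 z.1)
            (Icc (0:ℝ) 1 ×ˢ Icc s t) := by
          have : (fun z : ℝ × ℝ => g z.2 z.1) = Function.uncurry g ∘ Prod.swap := rfl
          rw [this]
          exact hGcont.comp continuous_swap.continuousOn
            (fun z hz => ⟨hsub hz.2, hz.1⟩)
        exact hswapcont
      have hIcc : IntegrableOn (fun z : ℝ × ℝ => 2 * g z.2 z.1)
          (Icc (0:ℝ) 1 ×ˢ Icc s t) (volume.prod volume) :=
        hcont.integrableOn_compact (isCompact_Icc.prod isCompact_Icc)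
      exact hIcc.mono_set (prod_mono Ioc_subset_Icc_self Ioc_subset_Icc_self)
    have hswap : (∫ x in (0:ℝ)..1, ∫ r in s..t, 2 * g r x)
        = ∫ r in s..t, ∫ x in (0:ℝ)..1, 2 * g r x := by
      rw [intervalIntegral.integral_of_le (by norm_num : (0:ℝ) ≤ 1),
        intervalIntegral.integral_of_le hst]
      simp_rw [intervalIntegral.integral_of_le hst,
        intervalIntegral.integral_of_le (by norm_num : (0:ℝ) ≤ 1)]
      exact MeasureTheory.integral_integral_swap hint
    have h2 : (∫ r in s..t, ∫ x in (0:ℝ)..1, 2 * g r x)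
        = -2 * ∫ r in s..t, ∫ x in (0:ℝ)..1, a x * (u r x) ^ 2 := by
      rw [← intervalIntegral.integral_const_mul]
      apply intervalIntegral.integral_congr
      intro r hr
      rw [uIcc_of_le hst] at hr
      have hrT := hsub hr
      show (∫ x in (0:ℝ)..1, 2 * g r x) = -2 * ∫ x in (0:ℝ)..1, a x * (u r x) ^ 2
      rw [intervalIntegral.integral_const_mul, hspace r hrT]
      ring
    rw [hswap, h2] at h1
    linarith
  refine ⟨hmain, ?_⟩
  intro hpos s hs t ht hst
  have hid := hmain s t hs.1 hst ht.2
  have hnn : 0 ≤ ∫ r in s..t, ∫ x in (0:ℝ)..1, a x * (u r x) ^ 2 := by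
    apply intervalIntegral.integral_nonneg hst
    intro r _
    apply intervalIntegral.integral_nonneg (by norm_num : (0:ℝ) ≤ 1)
    intro x hx
    exact mul_nonneg (hpos x hx) (sq_nonneg _)
  simp only []
  linarith
end

section
/- Let a : ℝ → ℝ be continuous on [0,1] with 0 < a₀ ≤ a(x) ≤ a₁ for all x ∈ [0,1], and let (u,p) be a classical solution of the damped wave system on [0,T]. Then for all 0 ≤ s ≤ t ≤ T one has E⁰(t) ≤ 3·e^{−α(t−s)}·E⁰(s), where α = (4/3)·a₀³/(8a₀² + 4a₀²a₁ + 2a₀a₁ + a₁⁴). -/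
open MeasureTheory Set intervalIntegral

lemma ciInt {f : ℝ → ℝ} {b : ℝ} (hb : 0 ≤ b) (hf : ContinuousOn f (Icc 0 b)) :
    IntervalIntegrable f volume 0 b :=
  (hf.mono (by rw [uIcc_of_le hb])).intervalIntegrable

lemma ftc01 {g g' : ℝ → ℝ} {b : ℝ} (hb : 0 ≤ b) (hcont : ContinuousOn g (Icc 0 b))
    (hderiv : ∀ x ∈ Ioo 0 b, HasDerivAt g (g' x) x)
    (hint : IntervalIntegrable g' volume 0 b) :
    ∫ x in (0:ℝ)..b, g' x = g b - g 0 :=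
  integral_eq_sub_of_hasDeriv_right_of_le hb hcont
    (fun x hx => (hderiv x hx).hasDerivWithinAt) hint

lemma cs_sq {f : ℝ → ℝ} {x : ℝ} (hx : 0 ≤ x) (hf : ContinuousOn f (Icc 0 x)) :
    (∫ y in (0:ℝ)..x, f y) ^ 2 ≤ x * ∫ y in (0:ℝ)..x, (f y) ^ 2 := by
  rcases eq_or_lt_of_le hx with h | h
  · simp [← h]
  set m := ∫ y in (0:ℝ)..x, f y with hm
  have hif := ciInt hx hf
  have hif2 := ciInt hx (f := fun y => (f y)^2) (hf.pow 2)
  have h0 : (0:ℝ) ≤ ∫ y in (0:ℝ)..x, (f y - m / x) ^ 2 :=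
    intervalIntegral.integral_nonneg hx (fun y _ => sq_nonneg _)
  have hexp : ∫ y in (0:ℝ)..x, (f y - m / x) ^ 2
      = (∫ y in (0:ℝ)..x, (f y)^2) - 2 * (m/x) * m + (m/x)^2 * x := by
    have : ∀ y, (f y - m / x) ^ 2 = (f y)^2 - (2 * (m/x)) * f y + (m/x)^2 := by
      intro y; ring
    rw [intervalIntegral.integral_congr (fun y _ => this y)]
    rw [intervalIntegral.integral_add ((hif2.sub (hif.const_mul _))) intervalIntegrable_const,
        intervalIntegral.integral_sub hif2 (hif.const_mul _),
        intervalIntegral.integral_const_mul, intervalIntegral.integral_const]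
    rw [smul_eq_mul]; ring
  rw [hexp] at h0
  have hx' : x ≠ 0 := ne_of_gt h
  have h1 : (m/x)^2 * x = m^2/x := by field_simp
  have h1' : 2*(m/x)*m = 2*(m^2/x) := by field_simp
  have h2 : m^2/x ≤ ∫ y in (0:ℝ)..x, (f y)^2 := by
    rw [h1, h1'] at h0; linarith
  calc m^2 = (m^2/x) * x := by field_simp
  _ ≤ (∫ y in (0:ℝ)..x, (f y)^2) * x := mul_le_mul_of_nonneg_right h2 hx
  _ = x * ∫ y in (0:ℝ)..x, (f y)^2 := mul_comm _ _

lemma sliceCont {T : ℝ} {F : ℝ → ℝ → ℝ}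
    (h : ContinuousOn (Function.uncurry F) (Icc 0 T ×ˢ Icc 0 1)) {t : ℝ}
    (ht : t ∈ Icc 0 T) : ContinuousOn (F t) (Icc (0:ℝ) 1) := by
  have : F t = (Function.uncurry F) ∘ (fun x => (t, x)) := rfl
  rw [this]
  exact h.comp ((continuous_const.prodMk continuous_id).continuousOn)
    (fun x hx => ⟨ht, hx⟩)

lemma abs_int_le {f : ℝ → ℝ} {C b : ℝ} (hb : 0 ≤ b) (hb1 : b ≤ 1)
    (h : ∀ x ∈ Icc (0:ℝ) 1, |f x| ≤ C) : |∫ x in (0:ℝ)..b, f x| ≤ C * b := by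
  have := intervalIntegral.norm_integral_le_of_norm_le_const
    (C := C) (f := f) (a := 0) (b := b) (fun x hx => by
      rw [Real.norm_eq_abs]
      refine h x ⟨?_, ?_⟩
      · rw [uIoc_of_le hb] at hx; exact hx.1.le
      · rw [uIoc_of_le hb] at hx; exact hx.2.trans hb1)
  rw [Real.norm_eq_abs] at this
  calc |∫ x in (0:ℝ)..b, f x| ≤ C * |b - 0| := this
  _ = C * b := by rw [sub_zero, abs_of_nonneg hb]

lemma param_deriv {F F' : ℝ → ℝ → ℝ} {t₀ r b C : ℝ} (hr : 0 < r) (hb : 0 ≤ b) (hb1 : b ≤ 1)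
    (hmeas : ∀ τ ∈ Metric.ball t₀ r, ContinuousOn (F τ) (Icc 0 1))
    (hmeas' : ContinuousOn (F' t₀) (Icc 0 1))
    (hbound : ∀ τ ∈ Metric.ball t₀ r, ∀ x ∈ Icc (0:ℝ) 1, |F' τ x| ≤ C)
    (hdiff : ∀ τ ∈ Metric.ball t₀ r, ∀ x ∈ Icc (0:ℝ) 1,
      HasDerivAt (fun σ => F σ x) (F' τ x) τ) :
    HasDerivAt (fun τ => ∫ x in (0:ℝ)..b, F τ x) (∫ x in (0:ℝ)..b, F' t₀ x) t₀ := by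
  have hsub : uIoc (0:ℝ) b ⊆ Icc (0:ℝ) 1 := by
    rw [uIoc_of_le hb]; exact fun x hx => ⟨hx.1.le, hx.2.trans hb1⟩
  have hmem : t₀ ∈ Metric.ball t₀ r := Metric.mem_ball_self hr
  refine (intervalIntegral.hasDerivAt_integral_of_dominated_loc_of_deriv_le (Metric.ball_mem_nhds t₀ hr)
    (F := F) (F' := fun τ x => F' τ x) (bound := fun _ => C) ?_ ?_ ?_ ?_ ?_ ?_).2
  · filter_upwards [Metric.ball_mem_nhds t₀ hr] with τ hτ
    exact ((hmeas τ hτ).mono hsub).aestronglyMeasurable measurableSet_uIoc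
  · exact ciInt hb ((hmeas t₀ hmem).mono (Icc_subset_Icc le_rfl hb1))
  · exact (hmeas'.mono hsub).aestronglyMeasurable measurableSet_uIoc
  · exact ae_of_all _ fun x hx τ hτ => by
      rw [Real.norm_eq_abs]; exact hbound τ hτ x (hsub hx)
  · exact intervalIntegrable_const
  · exact ae_of_all _ fun x hx τ hτ => hdiff τ hτ x (hsub hx)

lemma scalar_ea1 (a₀ a₁ : ℝ) (ha₀ : 0 < a₀) (ha₁ : 0 < a₁) (ha01 : a₀ ≤ a₁)
    (hD0 : (0:ℝ) < 8 * a₀ ^ 2 + 4 * a₀ ^ 2 * a₁ + 2 * a₀ * a₁ + a₁ ^ 4) :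
    2 * a₀ ^ 3 / (8 * a₀ ^ 2 + 4 * a₀ ^ 2 * a₁ + 2 * a₀ * a₁ + a₁ ^ 4) * a₁ ≤ 2 := by
  rw [div_mul_eq_mul_div, div_le_iff₀ hD0]
  have h9 : a₀ ^ 3 ≤ a₁ ^ 3 := pow_le_pow_left₀ ha₀.le ha01 3
  have h10 : a₀ ^ 3 * a₁ ≤ a₁ ^ 3 * a₁ := mul_le_mul_of_nonneg_right h9 ha₁.le
  nlinarith [pow_pos ha₀ 2, mul_pos (mul_pos ha₀ ha₀) ha₁, mul_pos ha₀ ha₁]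

lemma scalar_num (a₀ a₁ D : ℝ) (ha₀ : 0 < a₀) (ha₁ : 0 < a₁) (ha01 : a₀ ≤ a₁)
    (hD : D = 8 * a₀ ^ 2 + 4 * a₀ ^ 2 * a₁ + 2 * a₀ * a₁ + a₁ ^ 4) :
    0 ≤ a₀ * (D - 3 * a₀ ^ 2 - a₀ ^ 3 * a₁ / 2) := by
  have h9 : a₀ ^ 3 ≤ a₁ ^ 3 := pow_le_pow_left₀ ha₀.le ha01 3
  have h10 : a₀ ^ 3 * a₁ ≤ a₁ ^ 3 * a₁ := mul_le_mul_of_nonneg_right h9 ha₁.le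
  apply mul_nonneg ha₀.le
  rw [hD]
  nlinarith [pow_pos ha₀ 2, mul_pos (mul_pos ha₀ ha₀) ha₁, mul_pos ha₀ ha₁]

lemma scalar_aQ (aa uu a₀ a₁ : ℝ) (k1 : a₀ ≤ aa) (k2 : aa ≤ a₁) (k3 : 0 < a₀) :
    (aa * uu) ^ 2 ≤ a₁ * (aa * uu ^ 2) := by
  nlinarith [sq_nonneg uu, mul_nonneg (le_trans k3.le k1) (sq_nonneg uu)]

lemma scalar_young (pp bb : ℝ) : -(pp * bb) ≤ 1/2 * pp ^ 2 + 1/2 * bb ^ 2 := by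
  nlinarith [sq_nonneg (pp + bb)]

lemma scalar_assembly (UU PP QQ mm RR rr e cv av a₀ a₁ : ℝ)
    (hU0 : 0 ≤ UU) (hP0 : 0 ≤ PP) (hQ0 : 0 ≤ QQ) (he0 : 0 < e)
    (hec : e = 2 * cv) (hac : av = 4/3 * cv) (he23 : e ≤ 2/3) (hea1 : e * a₁ ≤ 2)
    (hk1 : cv ≤ a₀ - e - e * a₀ * a₁ / 4) (hc0 : 0 < cv)
    (hQU : a₀ * UU ≤ QQ) (hRbd : -RR ≤ PP / 2 + a₁ * QQ / 4)
    (hrr : rr ≤ 3/8 * PP + 1/3 * UU) :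
    -QQ + e * (UU - mm * mm - PP - RR) ≤ -av * (1/2 * (UU + PP) + e * rr) := by
  have s1 : -QQ + e * (UU - mm * mm - PP - RR)
      ≤ -QQ + e * UU - e * PP + e * (PP / 2 + a₁ * QQ / 4) := by
    have w1 : e * (-RR - PP / 2 - a₁ * QQ / 4) ≤ 0 :=
      mul_nonpos_of_nonneg_of_nonpos he0.le (by linarith)
    have w2 : 0 ≤ e * (mm * mm) := mul_nonneg he0.le (mul_self_nonneg mm)
    nlinarith [w1, w2]
  have s2 : -QQ + e * UU - e * PP + e * (PP / 2 + a₁ * QQ / 4)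
      ≤ -cv * UU - cv * PP := by
    have w3 : (1 - e * a₁ / 4) * (a₀ * UU) ≤ (1 - e * a₁ / 4) * QQ :=
      mul_le_mul_of_nonneg_left hQU (by linarith)
    nlinarith [w3, mul_nonneg hU0 (by linarith : (0:ℝ) ≤ a₀ - e - e * a₀ * a₁ / 4 - cv)]
  have s3 : -cv * UU - cv * PP ≤ -av * (1/2 * (UU + PP) + e * rr) := by
    have w4 : e * rr ≤ (UU + PP) / 4 := by
      have w5 : e * rr ≤ e * (3/8 * PP + 1/3 * UU) :=
        mul_le_mul_of_nonneg_left hrr he0.le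
      nlinarith [w5, mul_nonneg (by linarith : (0:ℝ) ≤ 2/3 - e)
        (by linarith : (0:ℝ) ≤ 3/8 * PP + 1/3 * UU)]
    rw [hac]
    nlinarith [mul_le_mul_of_nonneg_left w4 (by positivity : (0:ℝ) ≤ 4/3 * cv)]
  linarith [s1, s2, s3]

lemma scalar_eq_lower (Uv Pv rv e : ℝ) (hU : 0 ≤ Uv) (hP : 0 ≤ Pv) (he0 : 0 < e)
    (he23 : e ≤ 2/3) (hr : -(3/8 * Pv + 1/3 * Uv) ≤ rv) :
    1/2 * (Uv + Pv) ≤ 2 * (1/2 * (Uv + Pv) + e * rv) := by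
  nlinarith [mul_le_mul_of_nonneg_left hr he0.le,
    mul_nonneg (by linarith : (0:ℝ) ≤ 2/3 - e) (by linarith : (0:ℝ) ≤ 3/8 * Pv + 1/3 * Uv)]

lemma scalar_eq_upper (Uv Pv rv e : ℝ) (hU : 0 ≤ Uv) (hP : 0 ≤ Pv) (he0 : 0 < e)
    (he23 : e ≤ 2/3) (hr : rv ≤ 3/8 * Pv + 1/3 * Uv) :
    1/2 * (Uv + Pv) + e * rv ≤ 3/2 * (1/2 * (Uv + Pv)) := by
  nlinarith [mul_le_mul_of_nonneg_left hr he0.le,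
    mul_nonneg (by linarith : (0:ℝ) ≤ 2/3 - e) (by linarith : (0:ℝ) ≤ 3/8 * Pv + 1/3 * Uv)]

lemma scalar_lip (u1 u2 p1 p2 w1 w2 e M Mu d : ℝ) (he0 : 0 ≤ e) (he1 : e ≤ 1)
    (hu : |u1 - u2| ≤ M * d) (hp : |p1 - p2| ≤ M * d) (hw : |w1 - w2| ≤ 2 * M * d)
    (hub : |u1| ≤ Mu) (hub2 : |u2| ≤ Mu) (hpb : |p1| ≤ Mu) (hpb2 : |p2| ≤ Mu)
    (hwb : |w1| ≤ 2 * Mu) (hd : 0 ≤ d) (hM0 : 0 ≤ M) (hMu0 : 0 ≤ Mu) :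
    |(1/2 * (u1 ^ 2 + p1 ^ 2) + e * (p1 * w1))
      - (1/2 * (u2 ^ 2 + p2 ^ 2) + e * (p2 * w2))| ≤ 6 * Mu * M * d := by
  have hdec : (1/2 * (u1 ^ 2 + p1 ^ 2) + e * (p1 * w1))
      - (1/2 * (u2 ^ 2 + p2 ^ 2) + e * (p2 * w2))
      = 1/2 * ((u1 - u2) * (u1 + u2)) + 1/2 * ((p1 - p2) * (p1 + p2))
        + e * ((p1 - p2) * w1 + p2 * (w1 - w2)) := by ring
  rw [hdec]
  have b1 : |1/2 * ((u1 - u2) * (u1 + u2))| ≤ 1/2 * ((M * d) * (2 * Mu)) := by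
    rw [abs_mul, abs_mul]
    have : |u1 + u2| ≤ 2 * Mu := (abs_add_le _ _).trans (by linarith)
    have h0 : |1/2| = (1/2 : ℝ) := by rw [abs_of_pos]; norm_num
    rw [h0]
    have := mul_le_mul hu this (abs_nonneg _) (by positivity)
    linarith
  have b2 : |1/2 * ((p1 - p2) * (p1 + p2))| ≤ 1/2 * ((M * d) * (2 * Mu)) := by
    rw [abs_mul, abs_mul]
    have : |p1 + p2| ≤ 2 * Mu := (abs_add_le _ _).trans (by linarith)
    have h0 : |1/2| = (1/2 : ℝ) := by rw [abs_of_pos]; norm_num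
    rw [h0]
    have := mul_le_mul hp this (abs_nonneg _) (by positivity)
    linarith
  have b3 : |e * ((p1 - p2) * w1 + p2 * (w1 - w2))| ≤ 1 * (M * d * (2 * Mu) + Mu * (2 * M * d)) := by
    rw [abs_mul]
    have h1 : |(p1 - p2) * w1| ≤ M * d * (2 * Mu) := by
      rw [abs_mul]; exact mul_le_mul hp hwb (abs_nonneg _) (by positivity)
    have h2 : |p2 * (w1 - w2)| ≤ Mu * (2 * M * d) := by
      rw [abs_mul]; exact mul_le_mul hpb2 hw (abs_nonneg _) hMu0
    have h3 : |(p1 - p2) * w1 + p2 * (w1 - w2)| ≤ M * d * (2 * Mu) + Mu * (2 * M * d) :=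
      (abs_add_le _ _).trans (add_le_add h1 h2)
    have he : |e| ≤ 1 := by rw [abs_of_nonneg he0]; exact he1
    exact mul_le_mul he h3 (abs_nonneg _) zero_le_one
  calc |1/2 * ((u1 - u2) * (u1 + u2)) + 1/2 * ((p1 - p2) * (p1 + p2))
      + e * ((p1 - p2) * w1 + p2 * (w1 - w2))|
      ≤ |1/2 * ((u1 - u2) * (u1 + u2)) + 1/2 * ((p1 - p2) * (p1 + p2))|
        + |e * ((p1 - p2) * w1 + p2 * (w1 - w2))| := abs_add_le _ _
  _ ≤ (|1/2 * ((u1 - u2) * (u1 + u2))| + |1/2 * ((p1 - p2) * (p1 + p2))|)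
        + |e * ((p1 - p2) * w1 + p2 * (w1 - w2))| := by
      have := abs_add_le (1/2 * ((u1 - u2) * (u1 + u2))) (1/2 * ((p1 - p2) * (p1 + p2)))
      linarith
  _ ≤ 6 * Mu * M * d := by nlinarith [b1, b2, b3]

set_option maxHeartbeats 2000000 in
/-- Exponential decay of the energy `E⁰` for classical solutions of the damped
wave system with uniformly positive bounded damping. -/
theorem stmt1 (T : ℝ) (hT : 0 < T) (a : ℝ → ℝ) (a₀ a₁ : ℝ)
    (ha : ContinuousOn a (Icc (0:ℝ) 1)) (ha₀ : 0 < a₀)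
    (hbd : ∀ x ∈ Icc (0:ℝ) 1, a₀ ≤ a x ∧ a x ≤ a₁)
    (u p ut ux pt px : ℝ → ℝ → ℝ)
    (hsol : IsClassicalSolution T a u p ut ux pt px) :
    ∀ s t : ℝ, 0 ≤ s → s ≤ t → t ≤ T →
      (1/2) * (∫ x in (0:ℝ)..1, ((u t x) ^ 2 + (p t x) ^ 2))
        ≤ 3 * Real.exp (-((4/3) * a₀ ^ 3 / (8 * a₀ ^ 2 + 4 * a₀ ^ 2 * a₁ + 2 * a₀ * a₁ + a₁ ^ 4)
              * (t - s)))
          * ((1/2) * ∫ x in (0:ℝ)..1, ((u s x) ^ 2 + (p s x) ^ 2)) := by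
  intro s t hs hst htT
  obtain ⟨hDrv, hutc, huxc, hptc, hpxc, hpde, hbc⟩ := hsol
  have h01 : (0:ℝ) ∈ Icc (0:ℝ) 1 := ⟨le_rfl, zero_le_one⟩
  have h0T : (0:ℝ) ∈ Icc (0:ℝ) T := ⟨le_rfl, hT.le⟩
  have ha01 : a₀ ≤ a₁ := (hbd 0 h01).1.trans (hbd 0 h01).2
  have ha₁ : 0 < a₁ := lt_of_lt_of_le ha₀ ha01
  -- slice continuity
  have hcu : ∀ τ ∈ Icc (0:ℝ) T, ContinuousOn (u τ) (Icc (0:ℝ) 1) :=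
    fun τ hτ x hx => ((hDrv τ hτ x hx).2.1.continuousAt).continuousWithinAt
  have hcp : ∀ τ ∈ Icc (0:ℝ) T, ContinuousOn (p τ) (Icc (0:ℝ) 1) :=
    fun τ hτ x hx => ((hDrv τ hτ x hx).2.2.2.continuousAt).continuousWithinAt
  have hcut : ∀ τ ∈ Icc (0:ℝ) T, ContinuousOn (ut τ) (Icc (0:ℝ) 1) :=
    fun τ hτ => sliceCont hutc hτ
  have hcux : ∀ τ ∈ Icc (0:ℝ) T, ContinuousOn (ux τ) (Icc (0:ℝ) 1) :=
    fun τ hτ => sliceCont huxc hτ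
  have hcpt : ∀ τ ∈ Icc (0:ℝ) T, ContinuousOn (pt τ) (Icc (0:ℝ) 1) :=
    fun τ hτ => sliceCont hptc hτ
  have hcpx : ∀ τ ∈ Icc (0:ℝ) T, ContinuousOn (px τ) (Icc (0:ℝ) 1) :=
    fun τ hτ => sliceCont hpxc hτ
  -- uniform bound on derivatives
  obtain ⟨M, hM⟩ : ∃ M, ∀ τ ∈ Icc (0:ℝ) T, ∀ x ∈ Icc (0:ℝ) 1,
      |ut τ x| ≤ M ∧ |ux τ x| ≤ M ∧ |pt τ x| ≤ M ∧ |px τ x| ≤ M := by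
    obtain ⟨M1, h1⟩ := (isCompact_Icc.prod isCompact_Icc).exists_bound_of_continuousOn hutc
    obtain ⟨M2, h2⟩ := (isCompact_Icc.prod isCompact_Icc).exists_bound_of_continuousOn huxc
    obtain ⟨M3, h3⟩ := (isCompact_Icc.prod isCompact_Icc).exists_bound_of_continuousOn hptc
    obtain ⟨M4, h4⟩ := (isCompact_Icc.prod isCompact_Icc).exists_bound_of_continuousOn hpxc
    refine ⟨max (max M1 M2) (max M3 M4), fun τ hτ x hx => ?_⟩
    have e1 := h1 (τ, x) ⟨hτ, hx⟩
    have e2 := h2 (τ, x) ⟨hτ, hx⟩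
    have e3 := h3 (τ, x) ⟨hτ, hx⟩
    have e4 := h4 (τ, x) ⟨hτ, hx⟩
    rw [Function.uncurry_apply_pair, Real.norm_eq_abs] at e1 e2 e3 e4
    refine ⟨e1.trans ?_, e2.trans ?_, e3.trans ?_, e4.trans ?_⟩
    · exact le_max_of_le_left (le_max_left _ _)
    · exact le_max_of_le_left (le_max_right _ _)
    · exact le_max_of_le_right (le_max_left _ _)
    · exact le_max_of_le_right (le_max_right _ _)
  have hM0 : 0 ≤ M := le_trans (abs_nonneg _) (hM 0 h0T 0 h01).1
  -- Lipschitz in time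
  have hLipu : ∀ x ∈ Icc (0:ℝ) 1, ∀ τ ∈ Icc (0:ℝ) T, ∀ σ ∈ Icc (0:ℝ) T,
      |u τ x - u σ x| ≤ M * |τ - σ| := by
    intro x hx τ hτ σ hσ
    have := (convex_Icc (0:ℝ) T).norm_image_sub_le_of_norm_hasDerivWithin_le
      (f := fun s => u s x) (f' := fun s => ut s x)
      (fun ρ hρ => (hDrv ρ hρ x hx).1.hasDerivWithinAt)
      (fun ρ hρ => by rw [Real.norm_eq_abs]; exact (hM ρ hρ x hx).1) hσ hτ
    simpa [Real.norm_eq_abs] using this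
  have hLipp : ∀ x ∈ Icc (0:ℝ) 1, ∀ τ ∈ Icc (0:ℝ) T, ∀ σ ∈ Icc (0:ℝ) T,
      |p τ x - p σ x| ≤ M * |τ - σ| := by
    intro x hx τ hτ σ hσ
    have := (convex_Icc (0:ℝ) T).norm_image_sub_le_of_norm_hasDerivWithin_le
      (f := fun s => p s x) (f' := fun s => pt s x)
      (fun ρ hρ => (hDrv ρ hρ x hx).2.2.1.hasDerivWithinAt)
      (fun ρ hρ => by rw [Real.norm_eq_abs]; exact (hM ρ hρ x hx).2.2.1) hσ hτ
    simpa [Real.norm_eq_abs] using this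
  -- uniform bound on u, p
  obtain ⟨Mu, hMu0, hMubd⟩ : ∃ Mu, 0 ≤ Mu ∧ ∀ τ ∈ Icc (0:ℝ) T, ∀ x ∈ Icc (0:ℝ) 1,
      |u τ x| ≤ Mu ∧ |p τ x| ≤ Mu := by
    obtain ⟨C1, h1⟩ := isCompact_Icc.exists_bound_of_continuousOn (hcu 0 h0T)
    obtain ⟨C2, h2⟩ := isCompact_Icc.exists_bound_of_continuousOn (hcp 0 h0T)
    have hC1 : 0 ≤ C1 := le_trans (norm_nonneg _) (h1 0 h01)
    refine ⟨max C1 C2 + M * T, by positivity, fun τ hτ x hx => ?_⟩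
    constructor
    · have e1 : |u τ x - u 0 x| ≤ M * |τ - 0| := hLipu x hx τ hτ 0 h0T
      have e2 : |u 0 x| ≤ C1 := by rw [← Real.norm_eq_abs]; exact h1 x hx
      have e3 : M * |τ - 0| ≤ M * T := by
        rw [sub_zero, abs_of_nonneg hτ.1]; exact mul_le_mul_of_nonneg_left hτ.2 hM0
      calc |u τ x| ≤ |u 0 x| + |u τ x - u 0 x| := by
            have := abs_add_le (u 0 x) (u τ x - u 0 x); simpa using this
      _ ≤ C1 + M * T := add_le_add e2 (e1.trans e3)
      _ ≤ max C1 C2 + M * T := by gcongr; exact le_max_left _ _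
    · have e1 : |p τ x - p 0 x| ≤ M * |τ - 0| := hLipp x hx τ hτ 0 h0T
      have e2 : |p 0 x| ≤ C2 := by rw [← Real.norm_eq_abs]; exact h2 x hx
      have e3 : M * |τ - 0| ≤ M * T := by
        rw [sub_zero, abs_of_nonneg hτ.1]; exact mul_le_mul_of_nonneg_left hτ.2 hM0
      calc |p τ x| ≤ |p 0 x| + |p τ x - p 0 x| := by
            have := abs_add_le (p 0 x) (p τ x - p 0 x); simpa using this
      _ ≤ C2 + M * T := add_le_add e2 (e1.trans e3)
      _ ≤ max C1 C2 + M * T := by gcongr; exact le_max_right _ _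
  -- constants
  set D : ℝ := 8 * a₀ ^ 2 + 4 * a₀ ^ 2 * a₁ + 2 * a₀ * a₁ + a₁ ^ 4 with hDdef
  have hD0 : 0 < D := by positivity
  set α : ℝ := 4 / 3 * a₀ ^ 3 / D with hαdef
  set ε : ℝ := 2 * a₀ ^ 3 / D with hεdef
  set c : ℝ := a₀ ^ 3 / D with hcdef
  have hc0 : 0 < c := by positivity
  have hε0 : 0 < ε := by positivity
  have hεc : ε = 2 * c := by rw [hεdef, hcdef]; ring
  have hαc : α = 4 / 3 * c := by rw [hαdef, hcdef]; ring
  have hε23 : ε ≤ 2 / 3 := by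
    rw [hεdef, div_le_iff₀ hD0]
    nlinarith [pow_pos ha₀ 2, pow_pos ha₀ 3, mul_pos (mul_pos ha₀ ha₀) ha₁, sq_nonneg a₁]
  -- functionals
  set W : ℝ → ℝ → ℝ :=
    fun τ x => (∫ y in (0:ℝ)..x, u τ y) - x * ∫ y in (0:ℝ)..1, u τ y with hWdef
  set Wd : ℝ → ℝ → ℝ :=
    fun τ x => (∫ y in (0:ℝ)..x, ut τ y) - x * ∫ y in (0:ℝ)..1, ut τ y with hWddef
  set L : ℝ → ℝ :=
    fun τ => ∫ x in (0:ℝ)..1,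
      ((1/2) * ((u τ x) ^ 2 + (p τ x) ^ 2) + ε * (p τ x * W τ x)) with hLdef
  set Ld : ℝ → ℝ :=
    fun τ => ∫ x in (0:ℝ)..1,
      (u τ x * ut τ x + p τ x * pt τ x
        + ε * (pt τ x * W τ x + p τ x * Wd τ x)) with hLddef
  -- continuity in x of W, Wd, A
  have hprim : ∀ g : ℝ → ℝ, ContinuousOn g (Icc (0:ℝ) 1) →
      ContinuousOn (fun x => ∫ y in (0:ℝ)..x, g y) (Icc (0:ℝ) 1) := by
    intro g hg
    have h1 : IntegrableOn g (uIcc (0:ℝ) 1) volume := by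
      rw [uIcc_of_le zero_le_one]; exact hg.integrableOn_Icc
    have := intervalIntegral.continuousOn_primitive_interval h1
    rwa [uIcc_of_le zero_le_one] at this
  have hWc : ∀ τ ∈ Icc (0:ℝ) T, ContinuousOn (W τ) (Icc (0:ℝ) 1) := by
    intro τ hτ
    exact (hprim _ (hcu τ hτ)).sub (continuousOn_id.mul continuousOn_const)
  have hWdc : ∀ τ ∈ Icc (0:ℝ) T, ContinuousOn (Wd τ) (Icc (0:ℝ) 1) := by
    intro τ hτ
    exact (hprim _ (hcut τ hτ)).sub (continuousOn_id.mul continuousOn_const)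
  have hAc : ∀ τ ∈ Icc (0:ℝ) T,
      ContinuousOn (fun x => ∫ y in (0:ℝ)..x, a y * u τ y) (Icc (0:ℝ) 1) := by
    intro τ hτ
    exact hprim _ (ha.mul (hcu τ hτ))
  -- pointwise bounds for W, Wd
  have hWbd : ∀ τ ∈ Icc (0:ℝ) T, ∀ x ∈ Icc (0:ℝ) 1, |W τ x| ≤ 2 * Mu := by
    intro τ hτ x hx
    have e1 : |∫ y in (0:ℝ)..x, u τ y| ≤ Mu * x :=
      abs_int_le hx.1 hx.2 (fun y hy => (hMubd τ hτ y hy).1)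
    have e2 : |∫ y in (0:ℝ)..1, u τ y| ≤ Mu * 1 :=
      abs_int_le zero_le_one le_rfl (fun y hy => (hMubd τ hτ y hy).1)
    have e3 : |x * ∫ y in (0:ℝ)..1, u τ y| ≤ 1 * (Mu * 1) := by
      rw [abs_mul]
      exact mul_le_mul (by rw [abs_of_nonneg hx.1]; exact hx.2) e2 (abs_nonneg _) zero_le_one
    calc |W τ x| ≤ |∫ y in (0:ℝ)..x, u τ y| + |x * ∫ y in (0:ℝ)..1, u τ y| := abs_sub _ _
    _ ≤ Mu * x + 1 * (Mu * 1) := add_le_add e1 e3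
    _ ≤ 2 * Mu := by nlinarith [hx.2, hx.1, hMu0]
  have hWdbd : ∀ τ ∈ Icc (0:ℝ) T, ∀ x ∈ Icc (0:ℝ) 1, |Wd τ x| ≤ 2 * M := by
    intro τ hτ x hx
    have e1 : |∫ y in (0:ℝ)..x, ut τ y| ≤ M * x :=
      abs_int_le hx.1 hx.2 (fun y hy => (hM τ hτ y hy).1)
    have e2 : |∫ y in (0:ℝ)..1, ut τ y| ≤ M * 1 :=
      abs_int_le zero_le_one le_rfl (fun y hy => (hM τ hτ y hy).1)
    have e3 : |x * ∫ y in (0:ℝ)..1, ut τ y| ≤ 1 * (M * 1) := by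
      rw [abs_mul]
      exact mul_le_mul (by rw [abs_of_nonneg hx.1]; exact hx.2) e2 (abs_nonneg _) zero_le_one
    calc |Wd τ x| ≤ |∫ y in (0:ℝ)..x, ut τ y| + |x * ∫ y in (0:ℝ)..1, ut τ y| := abs_sub _ _
    _ ≤ M * x + 1 * (M * 1) := add_le_add e1 e3
    _ ≤ 2 * M := by nlinarith [hx.2, hx.1, hM0]
  -- ball inside Ioo
  have hball : ∀ τ ∈ Ioo (0:ℝ) T, Metric.ball τ (min τ (T - τ)) ⊆ Ioo (0:ℝ) T := by
    intro τ hτ σ hσ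
    rw [Metric.mem_ball, Real.dist_eq] at hσ
    have h1 := abs_lt.1 hσ
    have h2 := min_le_left τ (T - τ)
    have h3 := min_le_right τ (T - τ)
    exact ⟨by linarith, by linarith⟩
  -- time derivative of W
  have hWderiv : ∀ τ ∈ Ioo (0:ℝ) T, ∀ x ∈ Icc (0:ℝ) 1,
      HasDerivAt (fun σ => W σ x) (Wd τ x) τ := by
    intro τ hτ x hx
    have hr0 : 0 < min τ (T - τ) := lt_min hτ.1 (sub_pos.2 hτ.2)
    have hsub : Metric.ball τ (min τ (T - τ)) ⊆ Icc (0:ℝ) T :=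
      (hball τ hτ).trans Ioo_subset_Icc_self
    have hτI : τ ∈ Icc (0:ℝ) T := Ioo_subset_Icc_self hτ
    have h1 : HasDerivAt (fun σ => ∫ y in (0:ℝ)..x, u σ y) (∫ y in (0:ℝ)..x, ut τ y) τ :=
      param_deriv hr0 hx.1 hx.2 (fun σ hσ => hcu σ (hsub hσ)) (hcut τ hτI)
        (fun σ hσ y hy => (hM σ (hsub hσ) y hy).1)
        (fun σ hσ y hy => (hDrv σ (hsub hσ) y hy).1)
    have h2 : HasDerivAt (fun σ => ∫ y in (0:ℝ)..1, u σ y) (∫ y in (0:ℝ)..1, ut τ y) τ :=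
      param_deriv hr0 zero_le_one le_rfl (fun σ hσ => hcu σ (hsub hσ)) (hcut τ hτI)
        (fun σ hσ y hy => (hM σ (hsub hσ) y hy).1)
        (fun σ hσ y hy => (hDrv σ (hsub hσ) y hy).1)
    exact h1.sub (h2.const_mul x)
  -- derivative of L in time
  have hLd : ∀ τ ∈ Ioo (0:ℝ) T, HasDerivAt L (Ld τ) τ := by
    intro τ hτ
    have hr0 : 0 < min τ (T - τ) := lt_min hτ.1 (sub_pos.2 hτ.2)
    have hsub : Metric.ball τ (min τ (T - τ)) ⊆ Icc (0:ℝ) T :=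
      (hball τ hτ).trans Ioo_subset_Icc_self
    have hτI : τ ∈ Icc (0:ℝ) T := Ioo_subset_Icc_self hτ
    have := param_deriv (t₀ := τ) (r := min τ (T - τ)) (b := 1)
      (C := 2 * Mu * M + ε * (4 * M * Mu))
      (F := fun σ x => (1/2) * ((u σ x) ^ 2 + (p σ x) ^ 2) + ε * (p σ x * W σ x))
      (F' := fun σ x => u σ x * ut σ x + p σ x * pt σ x
        + ε * (pt σ x * W σ x + p σ x * Wd σ x))
      hr0 zero_le_one le_rfl ?_ ?_ ?_ ?_
    · exact this
    · intro σ hσ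
      have hσI := hsub hσ
      exact ((((hcu σ hσI).pow 2).add ((hcp σ hσI).pow 2)).const_smul ((1:ℝ)/2)).add
        (((hcp σ hσI).mul (hWc σ hσI)).const_smul ε)
    · exact (((hcu τ hτI).mul (hcut τ hτI)).add ((hcp τ hτI).mul (hcpt τ hτI))).add
        ((((hcpt τ hτI).mul (hWc τ hτI)).add ((hcp τ hτI).mul (hWdc τ hτI))).const_smul ε)
    · intro σ hσ x hx
      have hσI := hsub hσ
      have b1 : |u σ x * ut σ x| ≤ Mu * M := by
        rw [abs_mul]
        exact mul_le_mul (hMubd σ hσI x hx).1 (hM σ hσI x hx).1 (abs_nonneg _) hMu0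
      have b2 : |p σ x * pt σ x| ≤ Mu * M := by
        rw [abs_mul]
        exact mul_le_mul (hMubd σ hσI x hx).2 (hM σ hσI x hx).2.2.1 (abs_nonneg _) hMu0
      have b3 : |pt σ x * W σ x| ≤ M * (2 * Mu) := by
        rw [abs_mul]
        exact mul_le_mul (hM σ hσI x hx).2.2.1 (hWbd σ hσI x hx) (abs_nonneg _) hM0
      have b4 : |p σ x * Wd σ x| ≤ Mu * (2 * M) := by
        rw [abs_mul]
        exact mul_le_mul (hMubd σ hσI x hx).2 (hWdbd σ hσI x hx) (abs_nonneg _) hMu0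
      have b5 : |pt σ x * W σ x + p σ x * Wd σ x| ≤ 4 * M * Mu :=
        (abs_add_le _ _).trans (by nlinarith [b3, b4])
      have b6 : |ε * (pt σ x * W σ x + p σ x * Wd σ x)| ≤ ε * (4 * M * Mu) := by
        rw [abs_mul, abs_of_pos hε0]
        exact mul_le_mul_of_nonneg_left b5 hε0.le
      calc |u σ x * ut σ x + p σ x * pt σ x + ε * (pt σ x * W σ x + p σ x * Wd σ x)|
          ≤ |u σ x * ut σ x + p σ x * pt σ x| + |ε * (pt σ x * W σ x + p σ x * Wd σ x)| :=
            abs_add_le _ _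
      _ ≤ (|u σ x * ut σ x| + |p σ x * pt σ x|) + ε * (4 * M * Mu) :=
            add_le_add (abs_add_le _ _) b6
      _ ≤ 2 * Mu * M + ε * (4 * M * Mu) := by nlinarith [b1, b2]
    · intro σ hσ x hx
      have hσI := hsub hσ
      have du := (hDrv σ hσI x hx).1
      have dp := (hDrv σ hσI x hx).2.2.1
      have dW := hWderiv σ (hball τ hτ hσ) x hx
      have h1 := (((du.fun_pow 2).fun_add (dp.fun_pow 2)).const_mul ((1:ℝ)/2)).fun_add
        ((dp.fun_mul dW).const_mul ε)
      exact h1.congr_deriv (by simp only [Nat.reduceSub, pow_one, Nat.cast_ofNat]; ring)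
  have hUnn : ∀ f : ℝ → ℝ, 0 ≤ ∫ x in (0:ℝ)..1, (f x) ^ 2 :=
    fun f => intervalIntegral.integral_nonneg zero_le_one (fun x _ => sq_nonneg _)
  have hEsplit : ∀ τ ∈ Icc (0:ℝ) T,
      ∫ x in (0:ℝ)..1, ((u τ x) ^ 2 + (p τ x) ^ 2)
        = (∫ x in (0:ℝ)..1, (u τ x) ^ 2) + ∫ x in (0:ℝ)..1, (p τ x) ^ 2 :=
    fun τ hτ => intervalIntegral.integral_add
      (ciInt zero_le_one ((hcu τ hτ).pow 2)) (ciInt zero_le_one ((hcp τ hτ).pow 2))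
  have hLsplit : ∀ τ ∈ Icc (0:ℝ) T,
      L τ = (1/2) * ((∫ x in (0:ℝ)..1, (u τ x) ^ 2) + ∫ x in (0:ℝ)..1, (p τ x) ^ 2)
        + ε * ∫ x in (0:ℝ)..1, p τ x * W τ x := by
    intro τ hτ
    have i1 : IntervalIntegrable (fun x => (1/2) * ((u τ x) ^ 2 + (p τ x) ^ 2)) volume 0 1 :=
      ciInt zero_le_one (continuousOn_const.mul (((hcu τ hτ).pow 2).add ((hcp τ hτ).pow 2)))
    have i2 : IntervalIntegrable (fun x => ε * (p τ x * W τ x)) volume 0 1 :=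
      ciInt zero_le_one (continuousOn_const.mul ((hcp τ hτ).mul (hWc τ hτ)))
    show (∫ x in (0:ℝ)..1, ((1/2) * ((u τ x) ^ 2 + (p τ x) ^ 2) + ε * (p τ x * W τ x))) = _
    rw [intervalIntegral.integral_add i1 i2, intervalIntegral.integral_const_mul,
      intervalIntegral.integral_const_mul, hEsplit τ hτ]
  -- the W-as-integral representation
  have hWint : ∀ τ ∈ Icc (0:ℝ) T, ∀ x ∈ Icc (0:ℝ) 1,
      W τ x = ∫ y in (0:ℝ)..x, (u τ y - ∫ z in (0:ℝ)..1, u τ z) := by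
    intro τ hτ x hx
    rw [intervalIntegral.integral_sub
      (ciInt hx.1 ((hcu τ hτ).mono (Icc_subset_Icc le_rfl hx.2))) intervalIntegrable_const,
      intervalIntegral.integral_const, hWdef]
    simp [smul_eq_mul]
  -- squared bound for W
  have hW2 : ∀ τ ∈ Icc (0:ℝ) T, ∀ x ∈ Icc (0:ℝ) 1,
      (W τ x) ^ 2 ≤ x * ∫ y in (0:ℝ)..1, (u τ y) ^ 2 := by
    intro τ hτ x hx
    have icu := hcu τ hτ
    rw [hWint τ hτ x hx]
    set m := ∫ z in (0:ℝ)..1, u τ z with hm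
    set U := ∫ y in (0:ℝ)..1, (u τ y) ^ 2 with hU
    have hcs := cs_sq (f := fun y => u τ y - m) hx.1
      ((icu.mono (Icc_subset_Icc le_rfl hx.2)).sub continuousOn_const)
    refine hcs.trans (mul_le_mul_of_nonneg_left ?_ hx.1)
    have i1 : IntervalIntegrable (fun y => (u τ y - m) ^ 2) volume 0 x :=
      ciInt hx.1 (((icu.mono (Icc_subset_Icc le_rfl hx.2)).sub continuousOn_const).pow 2)
    have i2 : IntervalIntegrable (fun y => (u τ y - m) ^ 2) volume x 1 := by
      apply ContinuousOn.intervalIntegrable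
      have : uIcc x 1 ⊆ Icc (0:ℝ) 1 := by
        rw [uIcc_of_le hx.2]; exact fun z hz => ⟨hx.1.trans hz.1, hz.2⟩
      exact ((icu.mono this).sub continuousOn_const).pow 2
    have hadj := intervalIntegral.integral_add_adjacent_intervals i1 i2
    have hnn : 0 ≤ ∫ y in x..(1:ℝ), (u τ y - m) ^ 2 :=
      intervalIntegral.integral_nonneg hx.2 (fun y _ => sq_nonneg _)
    have h1 : ∫ y in (0:ℝ)..x, (u τ y - m) ^ 2 ≤ ∫ y in (0:ℝ)..1, (u τ y - m) ^ 2 := by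
      linarith
    refine h1.trans ?_
    have hexp : ∀ y, (u τ y - m) ^ 2 = (u τ y) ^ 2 - (2 * m) * u τ y + m ^ 2 := fun y => by ring
    have i3 : IntervalIntegrable (fun y => (u τ y) ^ 2) volume 0 1 :=
      ciInt zero_le_one (icu.pow 2)
    have i4 : IntervalIntegrable (fun y => (2 * m) * u τ y) volume 0 1 :=
      ciInt zero_le_one (continuousOn_const.mul icu)
    rw [intervalIntegral.integral_congr (fun y _ => hexp y),
      intervalIntegral.integral_add (i3.sub i4) intervalIntegrable_const,
      intervalIntegral.integral_sub i3 i4, intervalIntegral.integral_const_mul,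
      intervalIntegral.integral_const]
    rw [smul_eq_mul]
    nlinarith [sq_nonneg m]
  -- bound on the cross term
  have hrho : ∀ τ ∈ Icc (0:ℝ) T, |∫ x in (0:ℝ)..1, p τ x * W τ x|
      ≤ 3/8 * (∫ x in (0:ℝ)..1, (p τ x) ^ 2) + 1/3 * ∫ x in (0:ℝ)..1, (u τ x) ^ 2 := by
    intro τ hτ
    set U := ∫ x in (0:ℝ)..1, (u τ x) ^ 2 with hU
    set P := ∫ x in (0:ℝ)..1, (p τ x) ^ 2 with hP
    have icp := hcp τ hτ
    have icW := hWc τ hτ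
    have hWsq : ∫ x in (0:ℝ)..1, (W τ x) ^ 2 ≤ U / 2 := by
      have h1 : ∫ x in (0:ℝ)..1, (W τ x) ^ 2 ≤ ∫ x in (0:ℝ)..1, x * U := by
        apply intervalIntegral.integral_mono_on zero_le_one
          (ciInt zero_le_one (icW.pow 2))
          (ciInt zero_le_one (continuousOn_id.mul continuousOn_const))
          (fun x hx => hW2 τ hτ x hx)
      have h2 : ∫ x in (0:ℝ)..1, x * U = U / 2 := by
        rw [intervalIntegral.integral_mul_const, integral_id]
        ring
      linarith
    have habs : |∫ x in (0:ℝ)..1, p τ x * W τ x| ≤ ∫ x in (0:ℝ)..1, |p τ x * W τ x| :=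
      intervalIntegral.abs_integral_le_integral_abs zero_le_one
    have hptw : ∫ x in (0:ℝ)..1, |p τ x * W τ x|
        ≤ ∫ x in (0:ℝ)..1, (3/8 * (p τ x) ^ 2 + 2/3 * (W τ x) ^ 2) := by
      apply intervalIntegral.integral_mono_on zero_le_one
        (ciInt zero_le_one (icp.mul icW).abs)
        (ciInt zero_le_one ((continuousOn_const.mul (icp.pow 2)).add
          (continuousOn_const.mul (icW.pow 2))))
      intro x hx
      show |p τ x * W τ x| ≤ 3/8 * (p τ x) ^ 2 + 2/3 * (W τ x) ^ 2
      rw [abs_mul]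
      have key : ∀ pp ww : ℝ, |pp| * |ww| ≤ 3/8 * pp ^ 2 + 2/3 * ww ^ 2 := by
        intro pp ww
        nlinarith [sq_nonneg (3 * |pp| - 4 * |ww|), sq_abs pp, sq_abs ww,
          abs_nonneg pp, abs_nonneg ww]
      exact key _ _
    have hsplit : ∫ x in (0:ℝ)..1, (3/8 * (p τ x) ^ 2 + 2/3 * (W τ x) ^ 2)
        = 3/8 * P + 2/3 * ∫ x in (0:ℝ)..1, (W τ x) ^ 2 := by
      rw [intervalIntegral.integral_add (ciInt zero_le_one (continuousOn_const.fun_mul (icp.fun_pow 2)))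
        (ciInt zero_le_one (continuousOn_const.fun_mul (icW.fun_pow 2))),
        intervalIntegral.integral_const_mul, intervalIntegral.integral_const_mul]
    calc |∫ x in (0:ℝ)..1, p τ x * W τ x|
        ≤ ∫ x in (0:ℝ)..1, (3/8 * (p τ x) ^ 2 + 2/3 * (W τ x) ^ 2) := habs.trans hptw
    _ = 3/8 * P + 2/3 * ∫ x in (0:ℝ)..1, (W τ x) ^ 2 := hsplit
    _ ≤ 3/8 * P + 1/3 * U := by linarith
  -- key differential inequality
  have hkey : ∀ τ ∈ Ioo (0:ℝ) T, Ld τ ≤ -α * L τ := by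
    intro τ hτ
    have hτI : τ ∈ Icc (0:ℝ) T := Ioo_subset_Icc_self hτ
    have icu := hcu τ hτI
    have icp := hcp τ hτI
    have icut := hcut τ hτI
    have icux := hcux τ hτI
    have icpt := hcpt τ hτI
    have icpx := hcpx τ hτI
    have icW := hWc τ hτI
    have icWd := hWdc τ hτI
    have icA := hAc τ hτI
    have icB : ContinuousOn (fun x => (∫ y in (0:ℝ)..x, a y * u τ y)
        - x * ∫ y in (0:ℝ)..1, a y * u τ y) (Icc (0:ℝ) 1) :=
      icA.sub (continuousOn_id.mul continuousOn_const)
    have hp0 : p τ 0 = 0 := (hbc τ hτI).1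
    have hp1 : p τ 1 = 0 := (hbc τ hτI).2
    -- boundary parts for u p
    have hparts1 : ∫ x in (0:ℝ)..1, (ux τ x * p τ x + u τ x * px τ x) = 0 := by
      have h := ftc01 (g := fun x => u τ x * p τ x)
        (g' := fun x => ux τ x * p τ x + u τ x * px τ x) zero_le_one (icu.mul icp)
        (fun x hx => (hDrv τ hτI x (Ioo_subset_Icc_self hx)).2.1.mul
          (hDrv τ hτI x (Ioo_subset_Icc_self hx)).2.2.2)
        (ciInt zero_le_one ((icux.mul icp).add (icu.mul icpx)))
      rw [h]; simp [hp0, hp1]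
    -- energy dissipation identity
    have h2 : ∫ x in (0:ℝ)..1, (u τ x * ut τ x + p τ x * pt τ x)
        = -∫ x in (0:ℝ)..1, a x * (u τ x) ^ 2 := by
      have hcong : ∀ x ∈ uIcc (0:ℝ) 1, u τ x * ut τ x + p τ x * pt τ x
          = -(ux τ x * p τ x + u τ x * px τ x) - a x * (u τ x) ^ 2 := by
        intro x hx
        rw [uIcc_of_le zero_le_one] at hx
        have e1 := (hpde τ hτI x hx).1
        have e2 := (hpde τ hτI x hx).2
        linear_combination (u τ x) * e1 + (p τ x) * e2
      have i1n : IntervalIntegrable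
          (fun x => -(ux τ x * p τ x + u τ x * px τ x)) volume 0 1 :=
        (ciInt zero_le_one ((icux.mul icp).add (icu.mul icpx))).neg
      rw [intervalIntegral.integral_congr hcong,
        intervalIntegral.integral_sub i1n (ciInt zero_le_one (ha.fun_mul (icu.fun_pow 2))),
        intervalIntegral.integral_neg, hparts1]
      ring
    -- spatial derivative of W
    have hWx : ∀ x ∈ Ioo (0:ℝ) 1,
        HasDerivAt (W τ) (u τ x - ∫ z in (0:ℝ)..1, u τ z) x := by
      intro x hx
      have hxI : x ∈ Icc (0:ℝ) 1 := Ioo_subset_Icc_self hx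
      have h1 : HasDerivAt (fun y => ∫ z in (0:ℝ)..y, u τ z) (u τ x) x := by
        apply intervalIntegral.integral_hasDerivAt_right
          (ciInt hxI.1 (icu.mono (Icc_subset_Icc le_rfl hxI.2)))
        · exact (icu.mono Ioo_subset_Icc_self).stronglyMeasurableAtFilter isOpen_Ioo x hx
        · exact (hDrv τ hτI x hxI).2.1.continuousAt
      have h2' : HasDerivAt (fun y : ℝ => y * ∫ z in (0:ℝ)..1, u τ z)
          (∫ z in (0:ℝ)..1, u τ z) x := by
        simpa using (hasDerivAt_id x).mul_const (∫ z in (0:ℝ)..1, u τ z)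
      exact h1.sub h2'
    have hW0 : W τ 0 = 0 := by simp [hWdef]
    have hW1 : W τ 1 = 0 := by simp [hWdef]
    have h3 : ∫ x in (0:ℝ)..1,
        (ux τ x * W τ x + u τ x * (u τ x - ∫ z in (0:ℝ)..1, u τ z)) = 0 := by
      have h := ftc01 (g := fun x => u τ x * W τ x)
        (g' := fun x => ux τ x * W τ x + u τ x * (u τ x - ∫ z in (0:ℝ)..1, u τ z))
        zero_le_one (icu.mul icW)
        (fun x hx => (hDrv τ hτI x (Ioo_subset_Icc_self hx)).2.1.mul (hWx x hx))
        (ciInt zero_le_one ((icux.mul icW).add (icu.mul (icu.sub continuousOn_const))))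
      rw [h]; simp [hW0, hW1]
    -- ∫ pt W = U - m²
    have h4 : ∫ x in (0:ℝ)..1, pt τ x * W τ x
        = (∫ x in (0:ℝ)..1, (u τ x) ^ 2)
          - (∫ x in (0:ℝ)..1, u τ x) * (∫ z in (0:ℝ)..1, u τ z) := by
      have i1 := ciInt zero_le_one (icux.fun_mul icW)
      have i2 : IntervalIntegrable
          (fun x => u τ x * (u τ x - ∫ z in (0:ℝ)..1, u τ z)) volume 0 1 :=
        ciInt zero_le_one (icu.mul (icu.sub continuousOn_const))
      rw [intervalIntegral.integral_add i1 i2] at h3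
      have hcong : ∀ x ∈ uIcc (0:ℝ) 1, pt τ x * W τ x = -(ux τ x * W τ x) := by
        intro x hx
        rw [uIcc_of_le zero_le_one] at hx
        have e2 := (hpde τ hτI x hx).2
        linear_combination W τ x * e2
      rw [intervalIntegral.integral_congr hcong, intervalIntegral.integral_neg]
      have h5 : ∫ x in (0:ℝ)..1, u τ x * (u τ x - ∫ z in (0:ℝ)..1, u τ z)
          = (∫ x in (0:ℝ)..1, (u τ x) ^ 2)
            - (∫ x in (0:ℝ)..1, u τ x) * (∫ z in (0:ℝ)..1, u τ z) := by
        have hcong2 : ∀ x ∈ uIcc (0:ℝ) 1, u τ x * (u τ x - ∫ z in (0:ℝ)..1, u τ z)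
            = (u τ x) ^ 2 - u τ x * ∫ z in (0:ℝ)..1, u τ z := fun x _ => by ring
        rw [intervalIntegral.integral_congr hcong2,
          intervalIntegral.integral_sub (ciInt zero_le_one (icu.fun_pow 2))
            (ciInt zero_le_one (icu.fun_mul continuousOn_const)),
          intervalIntegral.integral_mul_const]
      rw [h5] at h3
      linarith
    -- primitive of px
    have hprimpx : ∀ x ∈ Icc (0:ℝ) 1, ∫ y in (0:ℝ)..x, px τ y = p τ x := by
      intro x hx
      have h := ftc01 (g := p τ) (g' := px τ) hx.1
        (icp.mono (Icc_subset_Icc le_rfl hx.2))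
        (fun y hy => (hDrv τ hτI y ⟨hy.1.le, hy.2.le.trans hx.2⟩).2.2.2)
        (ciInt hx.1 (icpx.mono (Icc_subset_Icc le_rfl hx.2)))
      rw [h, hp0]; ring
    have hutint : ∀ x ∈ Icc (0:ℝ) 1, ∫ y in (0:ℝ)..x, ut τ y
        = -(p τ x) - ∫ y in (0:ℝ)..x, a y * u τ y := by
      intro x hx
      have hsub' : Icc (0:ℝ) x ⊆ Icc (0:ℝ) 1 := Icc_subset_Icc le_rfl hx.2
      have hcong : ∀ y ∈ uIcc (0:ℝ) x, ut τ y = -(px τ y) - a y * u τ y := by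
        intro y hy
        rw [uIcc_of_le hx.1] at hy
        have := (hpde τ hτI y (hsub' hy)).1
        linarith
      have i1n : IntervalIntegrable (fun y => -(px τ y)) volume 0 x :=
        (ciInt hx.1 (icpx.mono hsub')).neg
      rw [intervalIntegral.integral_congr hcong,
        intervalIntegral.integral_sub i1n
          (ciInt hx.1 ((ha.mono hsub').fun_mul (icu.mono hsub'))),
        intervalIntegral.integral_neg, hprimpx x hx]
    have hWdval : ∀ x ∈ Icc (0:ℝ) 1, Wd τ x
        = -(p τ x) - ((∫ y in (0:ℝ)..x, a y * u τ y)
            - x * ∫ y in (0:ℝ)..1, a y * u τ y) := by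
      intro x hx
      have e1 := hutint x hx
      have e2 := hutint 1 ⟨zero_le_one, le_rfl⟩
      show (∫ y in (0:ℝ)..x, ut τ y) - x * ∫ y in (0:ℝ)..1, ut τ y = _
      rw [e1, e2, hp1]
      ring
    -- ∫ p Wd
    have h6 : ∫ x in (0:ℝ)..1, p τ x * Wd τ x
        = -(∫ x in (0:ℝ)..1, (p τ x) ^ 2)
          - ∫ x in (0:ℝ)..1, p τ x * ((∫ y in (0:ℝ)..x, a y * u τ y)
              - x * ∫ y in (0:ℝ)..1, a y * u τ y) := by
      have hcong : ∀ x ∈ uIcc (0:ℝ) 1, p τ x * Wd τ x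
          = -((p τ x) ^ 2) - p τ x * ((∫ y in (0:ℝ)..x, a y * u τ y)
              - x * ∫ y in (0:ℝ)..1, a y * u τ y) := by
        intro x hx
        rw [uIcc_of_le zero_le_one] at hx
        rw [hWdval x hx]
        ring
      have i1n : IntervalIntegrable (fun x => -((p τ x) ^ 2)) volume 0 1 :=
        (ciInt zero_le_one (icp.pow 2)).neg
      rw [intervalIntegral.integral_congr hcong,
        intervalIntegral.integral_sub i1n
          (ciInt zero_le_one (icp.fun_mul icB)),
        intervalIntegral.integral_neg]
    -- Ld as explicit expression
    have hLdeq : Ld τ = -(∫ x in (0:ℝ)..1, a x * (u τ x) ^ 2)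
        + ε * ((∫ x in (0:ℝ)..1, (u τ x) ^ 2)
          - (∫ x in (0:ℝ)..1, u τ x) * (∫ z in (0:ℝ)..1, u τ z)
          - (∫ x in (0:ℝ)..1, (p τ x) ^ 2)
          - ∫ x in (0:ℝ)..1, p τ x * ((∫ y in (0:ℝ)..x, a y * u τ y)
              - x * ∫ y in (0:ℝ)..1, a y * u τ y)) := by
      show (∫ x in (0:ℝ)..1, (u τ x * ut τ x + p τ x * pt τ x
        + ε * (pt τ x * W τ x + p τ x * Wd τ x))) = _
      have i1 : IntervalIntegrable
          (fun x => u τ x * ut τ x + p τ x * pt τ x) volume 0 1 :=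
        ciInt zero_le_one ((icu.mul icut).add (icp.mul icpt))
      have i2 : IntervalIntegrable
          (fun x => ε * (pt τ x * W τ x + p τ x * Wd τ x)) volume 0 1 :=
        ciInt zero_le_one (continuousOn_const.mul ((icpt.mul icW).add (icp.mul icWd)))
      rw [intervalIntegral.integral_add i1 i2, intervalIntegral.integral_const_mul,
        intervalIntegral.integral_add (ciInt zero_le_one (icpt.fun_mul icW))
          (ciInt zero_le_one (icp.fun_mul icWd)), h2, h4, h6]
      ring
    -- dissipation dominates a₀ U
    have hQU : a₀ * (∫ x in (0:ℝ)..1, (u τ x) ^ 2)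
        ≤ ∫ x in (0:ℝ)..1, a x * (u τ x) ^ 2 := by
      rw [← intervalIntegral.integral_const_mul]
      exact intervalIntegral.integral_mono_on zero_le_one
        (ciInt zero_le_one (continuousOn_const.mul (icu.pow 2)))
        (ciInt zero_le_one (ha.mul (icu.pow 2)))
        (fun x hx => mul_le_mul_of_nonneg_right (hbd x hx).1 (sq_nonneg _))
    -- B bound
    have hB2 : ∀ x ∈ Icc (0:ℝ) 1,
        ((∫ y in (0:ℝ)..x, a y * u τ y) - x * ∫ y in (0:ℝ)..1, a y * u τ y) ^ 2
          ≤ x * (a₁ * ∫ y in (0:ℝ)..1, a y * (u τ y) ^ 2) := by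
      intro x hx
      have hsub' : Icc (0:ℝ) x ⊆ Icc (0:ℝ) 1 := Icc_subset_Icc le_rfl hx.2
      have hfc : ContinuousOn
          (fun y => a y * u τ y - ∫ z in (0:ℝ)..1, a z * u τ z) (Icc 0 x) :=
        ((ha.mono hsub').mul (icu.mono hsub')).sub continuousOn_const
      have hrepr : (∫ y in (0:ℝ)..x, a y * u τ y)
          - x * (∫ y in (0:ℝ)..1, a y * u τ y)
          = ∫ y in (0:ℝ)..x, (a y * u τ y - ∫ z in (0:ℝ)..1, a z * u τ z) := by
        rw [intervalIntegral.integral_sub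
          (ciInt hx.1 ((ha.mono hsub').fun_mul (icu.mono hsub'))) intervalIntegrable_const,
          intervalIntegral.integral_const, smul_eq_mul]
        ring
      rw [hrepr]
      have hcs := cs_sq (f := fun y => a y * u τ y - ∫ z in (0:ℝ)..1, a z * u τ z) hx.1 hfc
      refine hcs.trans (mul_le_mul_of_nonneg_left ?_ hx.1)
      have i1 : IntervalIntegrable
          (fun y => (a y * u τ y - ∫ z in (0:ℝ)..1, a z * u τ z) ^ 2) volume 0 x :=
        ciInt hx.1 (hfc.pow 2)
      have i2 : IntervalIntegrable
          (fun y => (a y * u τ y - ∫ z in (0:ℝ)..1, a z * u τ z) ^ 2) volume x 1 := by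
        apply ContinuousOn.intervalIntegrable
        have hsub2 : uIcc x 1 ⊆ Icc (0:ℝ) 1 := by
          rw [uIcc_of_le hx.2]
          exact fun z hz => ⟨hx.1.trans hz.1, hz.2⟩
        exact (((ha.mono hsub2).mul (icu.mono hsub2)).sub continuousOn_const).pow 2
      have hadj := intervalIntegral.integral_add_adjacent_intervals i1 i2
      have hnn : 0 ≤ ∫ y in x..(1:ℝ),
          (a y * u τ y - ∫ z in (0:ℝ)..1, a z * u τ z) ^ 2 :=
        intervalIntegral.integral_nonneg hx.2 (fun y _ => sq_nonneg _)
      have hle1 : ∫ y in (0:ℝ)..x, (a y * u τ y - ∫ z in (0:ℝ)..1, a z * u τ z) ^ 2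
          ≤ ∫ y in (0:ℝ)..1, (a y * u τ y - ∫ z in (0:ℝ)..1, a z * u τ z) ^ 2 := by
        linarith
      refine hle1.trans ?_
      have hexp : ∫ y in (0:ℝ)..1, (a y * u τ y - ∫ z in (0:ℝ)..1, a z * u τ z) ^ 2
          = (∫ y in (0:ℝ)..1, (a y * u τ y) ^ 2)
            - (∫ z in (0:ℝ)..1, a z * u τ z) ^ 2 := by
        have hcong2 : ∀ y ∈ uIcc (0:ℝ) 1,
            (a y * u τ y - ∫ z in (0:ℝ)..1, a z * u τ z) ^ 2
            = (a y * u τ y) ^ 2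
              - (2 * ∫ z in (0:ℝ)..1, a z * u τ z) * (a y * u τ y)
              + (∫ z in (0:ℝ)..1, a z * u τ z) ^ 2 := fun y _ => by ring
        rw [intervalIntegral.integral_congr hcong2,
          intervalIntegral.integral_add
            ((ciInt zero_le_one ((ha.fun_mul icu).fun_pow 2)).sub
              (ciInt zero_le_one (continuousOn_const.fun_mul (ha.fun_mul icu))))
            intervalIntegrable_const,
          intervalIntegral.integral_sub (ciInt zero_le_one ((ha.fun_mul icu).fun_pow 2))
            (ciInt zero_le_one (continuousOn_const.fun_mul (ha.fun_mul icu))),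
          intervalIntegral.integral_const_mul, intervalIntegral.integral_const,
          smul_eq_mul]
        ring
      have haQ : ∫ y in (0:ℝ)..1, (a y * u τ y) ^ 2
          ≤ a₁ * ∫ y in (0:ℝ)..1, a y * (u τ y) ^ 2 := by
        rw [← intervalIntegral.integral_const_mul]
        apply intervalIntegral.integral_mono_on zero_le_one
          (ciInt zero_le_one ((ha.mul icu).pow 2))
          (ciInt zero_le_one (continuousOn_const.mul (ha.mul (icu.pow 2))))
        intro y hy
        exact scalar_aQ _ _ _ _ (hbd y hy).1 (hbd y hy).2 ha₀
      rw [hexp]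
      nlinarith [sq_nonneg (∫ z in (0:ℝ)..1, a z * u τ z), haQ]
    -- ∫ B² bound
    have hBint : ∫ x in (0:ℝ)..1,
        ((∫ y in (0:ℝ)..x, a y * u τ y) - x * ∫ y in (0:ℝ)..1, a y * u τ y) ^ 2
          ≤ a₁ * (∫ y in (0:ℝ)..1, a y * (u τ y) ^ 2) / 2 := by
      have h1 : ∫ x in (0:ℝ)..1,
          ((∫ y in (0:ℝ)..x, a y * u τ y) - x * ∫ y in (0:ℝ)..1, a y * u τ y) ^ 2
            ≤ ∫ x in (0:ℝ)..1, x * (a₁ * ∫ y in (0:ℝ)..1, a y * (u τ y) ^ 2) := by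
        apply intervalIntegral.integral_mono_on zero_le_one
          (ciInt zero_le_one
            (icB.pow 2))
          (ciInt zero_le_one (continuousOn_id.mul continuousOn_const))
          (fun x hx => hB2 x hx)
      have h2' : ∫ x in (0:ℝ)..1, x * (a₁ * ∫ y in (0:ℝ)..1, a y * (u τ y) ^ 2)
          = a₁ * (∫ y in (0:ℝ)..1, a y * (u τ y) ^ 2) / 2 := by
        rw [intervalIntegral.integral_mul_const, integral_id]
        ring
      linarith
    -- R bound
    have hRbd : -(∫ x in (0:ℝ)..1, p τ x * ((∫ y in (0:ℝ)..x, a y * u τ y)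
          - x * ∫ y in (0:ℝ)..1, a y * u τ y))
        ≤ (∫ x in (0:ℝ)..1, (p τ x) ^ 2) / 2
          + a₁ * (∫ y in (0:ℝ)..1, a y * (u τ y) ^ 2) / 4 := by
      have h7 : ∫ x in (0:ℝ)..1, -(p τ x * ((∫ y in (0:ℝ)..x, a y * u τ y)
            - x * ∫ y in (0:ℝ)..1, a y * u τ y))
          ≤ ∫ x in (0:ℝ)..1, (1/2 * (p τ x) ^ 2
            + 1/2 * ((∫ y in (0:ℝ)..x, a y * u τ y)
              - x * ∫ y in (0:ℝ)..1, a y * u τ y) ^ 2) := by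
        apply intervalIntegral.integral_mono_on zero_le_one
          (ciInt zero_le_one
            (icp.mul icB).neg)
          (ciInt zero_le_one ((continuousOn_const.mul (icp.pow 2)).add
            (continuousOn_const.mul
              (icB.pow 2))))
        intro x hx
        exact scalar_young _ _
      rw [intervalIntegral.integral_neg] at h7
      have h8 : ∫ x in (0:ℝ)..1, (1/2 * (p τ x) ^ 2
          + 1/2 * ((∫ y in (0:ℝ)..x, a y * u τ y)
            - x * ∫ y in (0:ℝ)..1, a y * u τ y) ^ 2)
          = 1/2 * (∫ x in (0:ℝ)..1, (p τ x) ^ 2)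
            + 1/2 * ∫ x in (0:ℝ)..1, ((∫ y in (0:ℝ)..x, a y * u τ y)
              - x * ∫ y in (0:ℝ)..1, a y * u τ y) ^ 2 := by
        rw [intervalIntegral.integral_add
          (ciInt zero_le_one (continuousOn_const.fun_mul (icp.fun_pow 2)))
          (ciInt zero_le_one (continuousOn_const.fun_mul
            (icB.fun_pow 2))),
          intervalIntegral.integral_const_mul, intervalIntegral.integral_const_mul]
      rw [h8] at h7
      linarith
    -- scalar inequalities
    have hεa₁ : ε * a₁ ≤ 2 := by
      rw [hεdef, hDdef]
      exact scalar_ea1 a₀ a₁ ha₀ ha₁ ha01 (hDdef ▸ hD0)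
    have hkey1 : c ≤ a₀ - ε - ε * a₀ * a₁ / 4 := by
      have hnum : 0 ≤ a₀ * (D - 3 * a₀ ^ 2 - a₀ ^ 3 * a₁ / 2) :=
        scalar_num a₀ a₁ D ha₀ ha₁ ha01 hDdef
      have hexpand : a₀ - ε - ε * a₀ * a₁ / 4 - c
          = a₀ * (D - 3 * a₀ ^ 2 - a₀ ^ 3 * a₁ / 2) / D := by
        rw [hεdef, hcdef]
        field_simp
        ring
      have := div_nonneg hnum hD0.le
      linarith [hexpand ▸ this]
    -- instantiate global facts before abstraction
    have hrho' := (abs_le.1 (hrho τ hτI)).2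
    have hL' := hLsplit τ hτI
    have hU0 := hUnn (u τ)
    have hP0 := hUnn (p τ)
    set UU := ∫ x in (0:ℝ)..1, (u τ x) ^ 2 with hUU
    set PP := ∫ x in (0:ℝ)..1, (p τ x) ^ 2 with hPP
    set QQ := ∫ x in (0:ℝ)..1, a x * (u τ x) ^ 2 with hQQ
    set mm := ∫ x in (0:ℝ)..1, u τ x with hmm
    set RR := ∫ x in (0:ℝ)..1, p τ x * ((∫ y in (0:ℝ)..x, a y * u τ y)
      - x * ∫ y in (0:ℝ)..1, a y * u τ y) with hRR
    set rr := ∫ x in (0:ℝ)..1, p τ x * W τ x with hrr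
    have hQ0 : 0 ≤ QQ := le_trans (mul_nonneg ha₀.le hU0) hQU
    rw [hLdeq, hL']
    exact scalar_assembly UU PP QQ mm RR rr ε c α a₀ a₁ hU0 hP0 hQ0 hε0 hεc hαc hε23
      hεa₁ hkey1 hc0 hQU hRbd hrho'
  -- Lipschitz continuity of W in time
  have hWLip : ∀ x ∈ Icc (0:ℝ) 1, ∀ τ ∈ Icc (0:ℝ) T, ∀ σ ∈ Icc (0:ℝ) T,
      |W τ x - W σ x| ≤ 2 * M * |τ - σ| := by
    intro x hx τ hτ σ hσ
    have h1 : W τ x - W σ x = (∫ y in (0:ℝ)..x, (u τ y - u σ y))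
        - x * ∫ y in (0:ℝ)..1, (u τ y - u σ y) := by
      rw [intervalIntegral.integral_sub
        (ciInt hx.1 ((hcu τ hτ).mono (Icc_subset_Icc le_rfl hx.2)))
        (ciInt hx.1 ((hcu σ hσ).mono (Icc_subset_Icc le_rfl hx.2))),
        intervalIntegral.integral_sub (ciInt zero_le_one (hcu τ hτ))
        (ciInt zero_le_one (hcu σ hσ))]
      show ((∫ y in (0:ℝ)..x, u τ y) - x * ∫ y in (0:ℝ)..1, u τ y)
        - ((∫ y in (0:ℝ)..x, u σ y) - x * ∫ y in (0:ℝ)..1, u σ y) = _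
      ring
    rw [h1]
    have e1 : |∫ y in (0:ℝ)..x, (u τ y - u σ y)| ≤ (M * |τ - σ|) * x :=
      abs_int_le hx.1 hx.2 (fun y hy => hLipu y hy τ hτ σ hσ)
    have e2 : |∫ y in (0:ℝ)..1, (u τ y - u σ y)| ≤ (M * |τ - σ|) * 1 :=
      abs_int_le zero_le_one le_rfl (fun y hy => hLipu y hy τ hτ σ hσ)
    have e3 : |x * ∫ y in (0:ℝ)..1, (u τ y - u σ y)| ≤ 1 * ((M * |τ - σ|) * 1) := by
      rw [abs_mul]
      exact mul_le_mul (by rw [abs_of_nonneg hx.1]; exact hx.2) e2 (abs_nonneg _) zero_le_one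
    calc |(∫ y in (0:ℝ)..x, (u τ y - u σ y)) - x * ∫ y in (0:ℝ)..1, (u τ y - u σ y)|
        ≤ |∫ y in (0:ℝ)..x, (u τ y - u σ y)| + |x * ∫ y in (0:ℝ)..1, (u τ y - u σ y)| :=
          abs_sub _ _
    _ ≤ (M * |τ - σ|) * x + 1 * ((M * |τ - σ|) * 1) := add_le_add e1 e3
    _ ≤ 2 * M * |τ - σ| := by
        nlinarith [hx.1, hx.2, abs_nonneg (τ - σ), hM0,
          mul_nonneg hM0 (abs_nonneg (τ - σ))]
  -- Lipschitz continuity of L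
  have hLLip : ∀ τ ∈ Icc (0:ℝ) T, ∀ σ ∈ Icc (0:ℝ) T,
      |L τ - L σ| ≤ (6 * Mu * M) * |τ - σ| := by
    intro τ hτ σ hσ
    have i1 : IntervalIntegrable
        (fun x => 1/2 * ((u τ x) ^ 2 + (p τ x) ^ 2) + ε * (p τ x * W τ x)) volume 0 1 :=
      ciInt zero_le_one ((continuousOn_const.mul
        (((hcu τ hτ).pow 2).add ((hcp τ hτ).pow 2))).add
        (continuousOn_const.mul ((hcp τ hτ).mul (hWc τ hτ))))
    have i2 : IntervalIntegrable
        (fun x => 1/2 * ((u σ x) ^ 2 + (p σ x) ^ 2) + ε * (p σ x * W σ x)) volume 0 1 :=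
      ciInt zero_le_one ((continuousOn_const.mul
        (((hcu σ hσ).pow 2).add ((hcp σ hσ).pow 2))).add
        (continuousOn_const.mul ((hcp σ hσ).mul (hWc σ hσ))))
    have hdiff : L τ - L σ = ∫ x in (0:ℝ)..1,
        ((1/2 * ((u τ x) ^ 2 + (p τ x) ^ 2) + ε * (p τ x * W τ x))
          - (1/2 * ((u σ x) ^ 2 + (p σ x) ^ 2) + ε * (p σ x * W σ x))) := by
      rw [intervalIntegral.integral_sub i1 i2]
    rw [hdiff]
    have := abs_int_le zero_le_one le_rfl (C := 6 * Mu * M * |τ - σ|) (fun x hx => by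
      exact scalar_lip (u τ x) (u σ x) (p τ x) (p σ x) (W τ x) (W σ x) ε M Mu (|τ - σ|)
        hε0.le (by linarith) (hLipu x hx τ hτ σ hσ) (hLipp x hx τ hτ σ hσ)
        (hWLip x hx τ hτ σ hσ) (hMubd τ hτ x hx).1 (hMubd σ hσ x hx).1
        (hMubd τ hτ x hx).2 (hMubd σ hσ x hx).2 (hWbd τ hτ x hx)
        (abs_nonneg _) hM0 hMu0)
    calc |∫ x in (0:ℝ)..1,
        ((1/2 * ((u τ x) ^ 2 + (p τ x) ^ 2) + ε * (p τ x * W τ x))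
          - (1/2 * ((u σ x) ^ 2 + (p σ x) ^ 2) + ε * (p σ x * W σ x)))|
        ≤ (6 * Mu * M * |τ - σ|) * 1 := this
    _ = (6 * Mu * M) * |τ - σ| := by ring
  have hLcont : ContinuousOn L (Icc (0:ℝ) T) := by
    apply LipschitzOnWith.continuousOn (K := Real.toNNReal (6 * Mu * M))
    apply LipschitzOnWith.of_dist_le_mul
    intro τ hτ σ hσ
    rw [Real.dist_eq, Real.dist_eq, Real.coe_toNNReal _ (by positivity)]
    exact hLLip τ hτ σ hσ
  -- Grönwall
  have hsubst : Icc s t ⊆ Icc (0:ℝ) T := Icc_subset_Icc hs htT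
  have hIoosub : Ioo s t ⊆ Ioo (0:ℝ) T :=
    fun x hx => ⟨lt_of_le_of_lt hs hx.1, lt_of_lt_of_le hx.2 htT⟩
  have hgmono : AntitoneOn (fun τ => L τ * Real.exp (α * τ)) (Icc s t) := by
    apply antitoneOn_of_deriv_nonpos (convex_Icc s t)
    · exact (hLcont.mono hsubst).mul
        ((Real.continuous_exp.comp (continuous_const.mul continuous_id)).continuousOn)
    · intro x hx
      rw [interior_Icc] at hx
      have hin : HasDerivAt (fun y : ℝ => α * y) α x := by
        simpa using (hasDerivAt_id x).const_mul α
      exact (((hLd x (hIoosub hx)).mul hin.exp).differentiableAt).differentiableWithinAt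
    · intro x hx
      rw [interior_Icc] at hx
      have hin : HasDerivAt (fun y : ℝ => α * y) α x := by
        simpa using (hasDerivAt_id x).const_mul α
      have hDv := (hLd x (hIoosub hx)).fun_mul hin.exp
      rw [hDv.deriv]
      have hk := hkey x (hIoosub hx)
      have hexp := Real.exp_pos (α * x)
      nlinarith [mul_le_mul_of_nonneg_right
        (show Ld x + α * L x ≤ 0 by linarith) hexp.le]
  have hgle : L t * Real.exp (α * t) ≤ L s * Real.exp (α * s) :=
    hgmono ⟨le_rfl, hst⟩ ⟨hst, le_rfl⟩ hst
  -- equivalence at endpoints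
  have htI : t ∈ Icc (0:ℝ) T := ⟨hs.trans hst, htT⟩
  have hsI : s ∈ Icc (0:ℝ) T := ⟨hs, hst.trans htT⟩
  have hrt := hrho t htI
  have hrs := hrho s hsI
  have hLt := hLsplit t htI
  have hLs := hLsplit s hsI
  have hUt := hUnn (u t)
  have hPt := hUnn (p t)
  have hUs := hUnn (u s)
  have hPs := hUnn (p s)
  rw [hEsplit t htI, hEsplit s hsI]
  set Ut := ∫ x in (0:ℝ)..1, (u t x) ^ 2 with hUtd
  set Pt := ∫ x in (0:ℝ)..1, (p t x) ^ 2 with hPtd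
  set Us := ∫ x in (0:ℝ)..1, (u s x) ^ 2 with hUsd
  set Ps := ∫ x in (0:ℝ)..1, (p s x) ^ 2 with hPsd
  set rt := ∫ x in (0:ℝ)..1, p t x * W t x with hrtd
  set rs := ∫ x in (0:ℝ)..1, p s x * W s x with hrsd
  have c1 : 1/2 * (Ut + Pt) ≤ 2 * L t := by
    rw [hLt]
    exact scalar_eq_lower Ut Pt rt ε hUt hPt hε0 hε23 (abs_le.1 hrt).1
  have c2 : L s ≤ 3/2 * (1/2 * (Us + Ps)) := by
    rw [hLs]
    exact scalar_eq_upper Us Ps rs ε hUs hPs hε0 hε23 (abs_le.1 hrs).2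
  have hexp_eq : Real.exp (-(α * (t - s))) = Real.exp (α * s) / Real.exp (α * t) := by
    rw [← Real.exp_sub]
    congr 1
    ring
  have hLt_le : L t ≤ Real.exp (-(α * (t - s))) * L s := by
    have h10 : 0 < Real.exp (α * t) := Real.exp_pos _
    rw [hexp_eq, div_mul_eq_mul_div, le_div_iff₀ h10]
    calc L t * Real.exp (α * t) ≤ L s * Real.exp (α * s) := hgle
    _ = Real.exp (α * s) * L s := by ring
  have e0 : (0:ℝ) < Real.exp (-(α * (t - s))) := Real.exp_pos _
  calc 1/2 * (Ut + Pt) ≤ 2 * L t := c1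
  _ ≤ 2 * (Real.exp (-(α * (t - s))) * L s) := by linarith
  _ ≤ 3 * Real.exp (-(α * (t - s))) * (1/2 * (Us + Ps)) := by
      nlinarith [mul_le_mul_of_nonneg_left c2 e0.le]
end

section
/- Let a : ℝ → ℝ be continuous on [0,1] with 0 < a₀ ≤ a(x) ≤ a₁ for all x ∈ [0,1], and let (u,p) be a classical solution of the damped wave system on [0,T] that is in addition twice continuously differentiable on [0,T] × [0,1]. Then for all 0 ≤ s ≤ t ≤ T one has E¹(t) ≤ 3·e^{−α(t−s)}·E¹(s), where α = (4/3)·a₀³/(8a₀² + 4a₀²a₁ + 2a₀a₁ + a₁⁴) and E¹(t) = (1/2) ∫₀¹ ((∂ₜu(t,x))² + (∂ₜp(t,x))²) dx. -/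
open MeasureTheory Set

open intervalIntegral Function


lemma myftc {A B : ℝ} (hAB : A ≤ B) {f f' : ℝ → ℝ} (hc : ContinuousOn f (Icc A B))
    (hi : IntervalIntegrable f' volume A B)
    (hd : ∀ x ∈ Ioo A B, HasDerivAt f (f' x) x) :
    ∫ y in A..B, f' y = f B - f A :=
  integral_eq_sub_of_hasDeriv_right_of_le hAB hc (fun x hx => (hd x hx).hasDerivWithinAt) hi

lemma myswap {A B C D : ℝ} (hAB : A ≤ B) (hCD : C ≤ D) {f : ℝ → ℝ → ℝ}
    (hf : Continuous (uncurry f)) :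
    ∫ t in A..B, (∫ x in C..D, f t x) = ∫ x in C..D, (∫ t in A..B, f t x) := by
  simp only [intervalIntegral.integral_of_le hAB, intervalIntegral.integral_of_le hCD]
  have hint : Integrable (uncurry f)
      ((volume.restrict (Ioc A B)).prod (volume.restrict (Ioc C D))) := by
    rw [Measure.prod_restrict]
    have hIcc : IntegrableOn (uncurry f) (Icc A B ×ˢ Icc C D) (volume.prod volume) := by
      have h0 : IntegrableOn (uncurry f) (Icc A B ×ˢ Icc C D) (volume : Measure (ℝ × ℝ)) :=
        hf.continuousOn.integrableOn_compact (isCompact_Icc.prod isCompact_Icc)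
      rwa [MeasureTheory.Measure.volume_eq_prod] at h0
    exact hIcc.mono_set (prod_mono Ioc_subset_Icc_self Ioc_subset_Icc_self)
  exact MeasureTheory.integral_integral_swap hint

lemma slice_contT {f : ℝ → ℝ → ℝ} (hf : Continuous (uncurry f)) (x : ℝ) :
    Continuous (fun r => f r x) := hf.comp (continuous_id.prodMk continuous_const)

lemma slice_contX {f : ℝ → ℝ → ℝ} (hf : Continuous (uncurry f)) (t : ℝ) :
    Continuous (fun y => f t y) := hf.comp (continuous_const.prodMk continuous_id)

/-- Differentiation under the integral sign, via FTC + Fubini. -/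
lemma dparam {T c : ℝ} (hc : 0 ≤ c) {g gt : ℝ → ℝ → ℝ}
    (hg : Continuous (uncurry g)) (hgt : Continuous (uncurry gt))
    (hd : ∀ τ ∈ Ioo (0:ℝ) T, ∀ x ∈ Icc (0:ℝ) c, HasDerivAt (fun r => g r x) (gt τ x) τ)
    {t : ℝ} (ht : t ∈ Icc (0:ℝ) T) :
    HasDerivWithinAt (fun r => ∫ x in (0:ℝ)..c, g r x) (∫ x in (0:ℝ)..c, gt t x)
      (Icc (0:ℝ) T) t := by
  set M : ℝ → ℝ := fun r => ∫ x in (0:ℝ)..c, gt r x with hM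
  have hMc : Continuous M :=
    intervalIntegral.continuous_parametric_intervalIntegral_of_continuous' hgt 0 c
  have key : ∀ r ∈ Icc (0:ℝ) T,
      (∫ x in (0:ℝ)..c, g r x) = (∫ x in (0:ℝ)..c, g 0 x) + ∫ τ in (0:ℝ)..r, M τ := by
    intro r hr
    have hswap : (∫ τ in (0:ℝ)..r, M τ)
        = ∫ x in (0:ℝ)..c, (∫ τ in (0:ℝ)..r, gt τ x) := myswap hr.1 hc hgt
    have hftc : ∀ x ∈ Icc (0:ℝ) c, (∫ τ in (0:ℝ)..r, gt τ x) = g r x - g 0 x := by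
      intro x hx
      apply myftc hr.1 (slice_contT hg x).continuousOn
        ((slice_contT hgt x).intervalIntegrable 0 r)
      intro τ hτ
      exact hd τ ⟨hτ.1, lt_of_lt_of_le hτ.2 hr.2⟩ x hx
    have h2 : (∫ x in (0:ℝ)..c, (∫ τ in (0:ℝ)..r, gt τ x))
        = (∫ x in (0:ℝ)..c, g r x) - ∫ x in (0:ℝ)..c, g 0 x := by
      rw [← intervalIntegral.integral_sub ((slice_contX hg r).intervalIntegrable 0 c)
        ((slice_contX hg 0).intervalIntegrable 0 c)]
      apply intervalIntegral.integral_congr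
      intro x hx; rw [uIcc_of_le hc] at hx; exact hftc x hx
    rw [hswap, h2]; ring
  have hΨ : HasDerivAt (fun r => (∫ x in (0:ℝ)..c, g 0 x) + ∫ τ in (0:ℝ)..r, M τ) (M t) t := by
    have h0 := intervalIntegral.integral_hasDerivAt_right (hMc.intervalIntegrable 0 t)
      (hMc.stronglyMeasurableAtFilter volume (nhds t)) hMc.continuousAt
    simpa using h0.const_add (∫ x in (0:ℝ)..c, g 0 x)
  exact (hΨ.hasDerivWithinAt.congr (fun r hr => key r hr) (key t ht))

/-- Poincaré–Wirtinger inequality with constant 1 on `[0,1]`. -/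
lemma poincare {g g' : ℝ → ℝ} (hd : ∀ x, HasDerivAt g (g' x) x) (hg' : Continuous g') :
    (∫ x in (0:ℝ)..1, ((∫ y in (0:ℝ)..1, g y) - g x)^2) ≤ ∫ x in (0:ℝ)..1, (g' x)^2 := by
  have hg : Continuous g := by
    rw [continuous_iff_continuousAt]; exact fun x => (hd x).continuousAt
  set C : ℝ := ∫ y in (0:ℝ)..1, |g' y| with hC
  have habs : Continuous fun y => |g' y| := hg'.abs
  have hC0 : 0 ≤ C := intervalIntegral.integral_nonneg zero_le_one (fun y _ => abs_nonneg _)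
  have step1 : ∀ x ∈ Icc (0:ℝ) 1, ∀ y ∈ Icc (0:ℝ) 1, |g x - g y| ≤ C := by
    intro x hx y hy
    have habs_mono : ∀ {A B : ℝ}, 0 ≤ A → A ≤ B → B ≤ 1 →
        (∫ τ in A..B, |g' τ|) ≤ C := by
      intro A B h0 hAB h1
      exact intervalIntegral.integral_mono_interval h0 hAB h1
        (Filter.Eventually.of_forall fun τ => abs_nonneg _) (habs.intervalIntegrable 0 1)
    rcases le_total y x with h | h
    · have hftc : ∫ τ in y..x, g' τ = g x - g y :=
        intervalIntegral.integral_eq_sub_of_hasDerivAt (fun τ _ => hd τ)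
          (hg'.intervalIntegrable y x)
      rw [← hftc]
      calc |∫ τ in y..x, g' τ| ≤ ∫ τ in y..x, |g' τ| :=
            intervalIntegral.abs_integral_le_integral_abs h
        _ ≤ C := habs_mono hy.1 h hx.2
    · have hftc : ∫ τ in x..y, g' τ = g y - g x :=
        intervalIntegral.integral_eq_sub_of_hasDerivAt (fun τ _ => hd τ)
          (hg'.intervalIntegrable x y)
      rw [abs_sub_comm, ← hftc]
      calc |∫ τ in x..y, g' τ| ≤ ∫ τ in x..y, |g' τ| :=
            intervalIntegral.abs_integral_le_integral_abs h
        _ ≤ C := habs_mono hx.1 h hy.2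
  have step2 : C^2 ≤ ∫ x in (0:ℝ)..1, (g' x)^2 := by
    have hnn : (0:ℝ) ≤ ∫ x in (0:ℝ)..1, (|g' x| - C)^2 :=
      intervalIntegral.integral_nonneg zero_le_one (fun x _ => sq_nonneg _)
    have hexp : (∫ x in (0:ℝ)..1, (|g' x| - C)^2)
        = (∫ x in (0:ℝ)..1, (g' x)^2) - C^2 := by
      have hptw : ∀ x : ℝ, (|g' x| - C)^2 = (g' x)^2 - (2*C)*|g' x| + C^2 := by
        intro x; rw [sub_sq, sq_abs]; ring
      rw [intervalIntegral.integral_congr (g := fun x => (g' x)^2 - (2*C)*|g' x| + C^2)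
        (fun x _ => hptw x)]
      rw [intervalIntegral.integral_add
        (((hg'.fun_pow 2).fun_sub (continuous_const.fun_mul habs)).intervalIntegrable 0 1)
        (continuous_const.intervalIntegrable 0 1),
        intervalIntegral.integral_sub ((hg'.fun_pow 2).intervalIntegrable 0 1)
          ((continuous_const.fun_mul habs).intervalIntegrable 0 1),
        intervalIntegral.integral_const_mul, intervalIntegral.integral_const]
      rw [smul_eq_mul]; ring
    linarith [hnn, hexp.ge, hexp.le]
  have step3 : ∀ x ∈ Icc (0:ℝ) 1, |(∫ y in (0:ℝ)..1, g y) - g x| ≤ C := by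
    intro x hx
    have h1 : (∫ y in (0:ℝ)..1, g y) - g x = ∫ y in (0:ℝ)..1, (g y - g x) := by
      rw [intervalIntegral.integral_sub (hg.intervalIntegrable 0 1)
        (continuous_const.intervalIntegrable 0 1), intervalIntegral.integral_const]
      simp
    rw [h1]
    calc |∫ y in (0:ℝ)..1, (g y - g x)| ≤ ∫ y in (0:ℝ)..1, |g y - g x| :=
          intervalIntegral.abs_integral_le_integral_abs zero_le_one
      _ ≤ ∫ y in (0:ℝ)..1, C := by
          apply intervalIntegral.integral_mono_on zero_le_one
            ((hg.fun_sub continuous_const).abs.intervalIntegrable 0 1)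
            (continuous_const.intervalIntegrable 0 1)
          intro y hy; exact step1 y hy x hx
      _ = C := by simp
  calc (∫ x in (0:ℝ)..1, ((∫ y in (0:ℝ)..1, g y) - g x)^2)
      ≤ ∫ x in (0:ℝ)..1, C^2 := by
        apply intervalIntegral.integral_mono_on zero_le_one
          (((continuous_const.fun_sub hg).fun_pow 2).intervalIntegrable 0 1)
          (continuous_const.intervalIntegrable 0 1)
        intro x hx
        have h := step3 x hx
        nlinarith [abs_nonneg ((∫ y in (0:ℝ)..1, g y) - g x),
          sq_abs ((∫ y in (0:ℝ)..1, g y) - g x)]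
    _ = C^2 := by simp
    _ ≤ _ := step2
lemma secondDerivs {T : ℝ} (hT : 0 < T) {f ft fx : ℝ → ℝ → ℝ}
    (hf2 : ContDiffOn ℝ 2 (Function.uncurry f) (Icc (0:ℝ) T ×ˢ Icc (0:ℝ) 1))
    (hft : ∀ t ∈ Icc (0:ℝ) T, ∀ x ∈ Icc (0:ℝ) 1, HasDerivAt (fun s => f s x) (ft t x) t)
    (hfx : ∀ t ∈ Icc (0:ℝ) T, ∀ x ∈ Icc (0:ℝ) 1, HasDerivAt (fun y => f t y) (fx t x) x) :
    ∃ ftt ftx : ℝ → ℝ → ℝ,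
      ContinuousOn (Function.uncurry ftt) (Icc (0:ℝ) T ×ˢ Icc (0:ℝ) 1) ∧
      ContinuousOn (Function.uncurry ftx) (Icc (0:ℝ) T ×ˢ Icc (0:ℝ) 1) ∧
      (∀ t ∈ Icc (0:ℝ) T, ∀ x ∈ Icc (0:ℝ) 1,
        HasDerivWithinAt (fun s => ft s x) (ftt t x) (Icc (0:ℝ) T) t ∧
        HasDerivWithinAt (fun y => ft t y) (ftx t x) (Icc (0:ℝ) 1) x ∧
        HasDerivWithinAt (fun s => fx s x) (ftx t x) (Icc (0:ℝ) T) t) := by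
  set R : Set (ℝ × ℝ) := Icc (0:ℝ) T ×ˢ Icc (0:ℝ) 1 with hRdef
  have hRu : UniqueDiffOn ℝ R := (uniqueDiffOn_Icc hT).prod (uniqueDiffOn_Icc one_pos)
  set F1 := fderivWithin ℝ (Function.uncurry f) R with hF1
  set F2 := fderivWithin ℝ F1 R with hF2
  have hC1 : ContDiffOn ℝ 1 F1 R := hf2.fderivWithin hRu (by norm_num)
  have hC2 : ContinuousOn F2 R := hC1.continuousOn_fderivWithin hRu le_rfl
  have hdiff1 : ∀ z ∈ R, HasFDerivWithinAt (Function.uncurry f) (F1 z) R z := fun z hz =>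
    ((hf2.differentiableOn (by norm_num)) z hz).hasFDerivWithinAt
  have hdiff2 : ∀ z ∈ R, HasFDerivWithinAt F1 (F2 z) R z := fun z hz =>
    ((hC1.differentiableOn one_ne_zero) z hz).hasFDerivWithinAt
  have hmem : ∀ {t x : ℝ}, t ∈ Icc (0:ℝ) T → x ∈ Icc (0:ℝ) 1 → ((t,x) : ℝ × ℝ) ∈ R :=
    fun ht hx => ⟨ht, hx⟩
  have hlineT : ∀ (x t : ℝ), HasDerivWithinAt (fun s => ((s, x) : ℝ × ℝ)) ((1:ℝ), (0:ℝ))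
      (Icc (0:ℝ) T) t :=
    fun x t => ((hasDerivAt_id t).prodMk (hasDerivAt_const t x)).hasDerivWithinAt
  have hlineX : ∀ (t x : ℝ), HasDerivWithinAt (fun y => ((t, y) : ℝ × ℝ)) ((0:ℝ), (1:ℝ))
      (Icc (0:ℝ) 1) x :=
    fun t x => ((hasDerivAt_const x t).prodMk (hasDerivAt_id x)).hasDerivWithinAt
  have hmapT : ∀ {x : ℝ}, x ∈ Icc (0:ℝ) 1 →
      MapsTo (fun s => ((s,x) : ℝ × ℝ)) (Icc (0:ℝ) T) R := fun hx s hs => ⟨hs, hx⟩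
  have hmapX : ∀ {t : ℝ}, t ∈ Icc (0:ℝ) T →
      MapsTo (fun y => ((t,y) : ℝ × ℝ)) (Icc (0:ℝ) 1) R := fun ht y hy => ⟨ht, hy⟩
  -- first-order identification
  have hsliceT : ∀ t ∈ Icc (0:ℝ) T, ∀ x ∈ Icc (0:ℝ) 1,
      HasDerivWithinAt (fun s => f s x) (F1 (t,x) (1,0)) (Icc (0:ℝ) T) t := fun t ht x hx => by
    have h := (hdiff1 _ (hmem ht hx)).comp_hasDerivWithinAt t (hlineT x t) (hmapT hx); exact h
  have hsliceX : ∀ t ∈ Icc (0:ℝ) T, ∀ x ∈ Icc (0:ℝ) 1,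
      HasDerivWithinAt (fun y => f t y) (F1 (t,x) (0,1)) (Icc (0:ℝ) 1) x := fun t ht x hx => by
    have h := (hdiff1 _ (hmem ht hx)).comp_hasDerivWithinAt x (hlineX t x) (hmapX ht); exact h
  have hF1T : ∀ t ∈ Icc (0:ℝ) T, ∀ x ∈ Icc (0:ℝ) 1, F1 (t,x) (1,0) = ft t x := by
    intro t ht x hx
    have h1 := hsliceT t ht x hx
    have h2 := (hft t ht x hx).hasDerivWithinAt (s := Icc (0:ℝ) T)
    have hu := (uniqueDiffOn_Icc hT) t ht
    exact (h1.derivWithin hu).symm.trans (h2.derivWithin hu)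
  have hF1X : ∀ t ∈ Icc (0:ℝ) T, ∀ x ∈ Icc (0:ℝ) 1, F1 (t,x) (0,1) = fx t x := by
    intro t ht x hx
    have h1 := hsliceX t ht x hx
    have h2 := (hfx t ht x hx).hasDerivWithinAt (s := Icc (0:ℝ) 1)
    have hu := (uniqueDiffOn_Icc (one_pos : (0:ℝ) < 1)) x hx
    exact (h1.derivWithin hu).symm.trans (h2.derivWithin hu)
  -- second-order slices
  have hslice2T : ∀ (w : ℝ × ℝ), ∀ t ∈ Icc (0:ℝ) T, ∀ x ∈ Icc (0:ℝ) 1,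
      HasDerivWithinAt (fun s => F1 (s, x) w) (F2 (t,x) (1,0) w) (Icc (0:ℝ) T) t := by
    intro w t ht x hx
    have h := (hdiff2 _ (hmem ht hx)).comp_hasDerivWithinAt t (hlineT x t) (hmapT hx)
    have h2 := h.clm_apply (hasDerivWithinAt_const t _ w)
    simpa using h2
  have hslice2X : ∀ (w : ℝ × ℝ), ∀ t ∈ Icc (0:ℝ) T, ∀ x ∈ Icc (0:ℝ) 1,
      HasDerivWithinAt (fun y => F1 (t, y) w) (F2 (t,x) (0,1) w) (Icc (0:ℝ) 1) x := by
    intro w t ht x hx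
    have h := (hdiff2 _ (hmem ht hx)).comp_hasDerivWithinAt x (hlineX t x) (hmapX ht)
    have h2 := h.clm_apply (hasDerivWithinAt_const x _ w)
    simpa using h2
  refine ⟨fun t x => F2 (t,x) (1,0) (1,0), fun t x => F2 (t,x) (0,1) (1,0), ?_, ?_, ?_⟩
  · exact (hC2.clm_apply continuousOn_const).clm_apply continuousOn_const
  · exact (hC2.clm_apply continuousOn_const).clm_apply continuousOn_const
  · intro t ht x hx
    have hSym : ∀ v w : ℝ × ℝ, F2 (t,x) v w = F2 (t,x) w v := by
      have hcl : ((t,x) : ℝ × ℝ) ∈ closure (interior R) := by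
        rw [hRdef, interior_prod_eq, interior_Icc, interior_Icc, closure_prod_eq,
          closure_Ioo hT.ne, closure_Ioo (one_ne_zero : (1:ℝ) ≠ 0).symm]
        exact ⟨ht, hx⟩
      have hsym := (hf2 _ (hmem ht hx)).isSymmSndFDerivWithinAt (by simp) hRu hcl (hmem ht hx)
      exact fun v w => hsym.eq v w
    refine ⟨?_, ?_, ?_⟩
    · exact (hslice2T (1,0) t ht x hx).congr
        (fun s hs => (hF1T s hs x hx).symm) ((hF1T t ht x hx).symm)
    · exact (hslice2X (1,0) t ht x hx).congr
        (fun y hy => (hF1T t ht y hy).symm) ((hF1T t ht x hx).symm)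
    · have h := (hslice2T (0,1) t ht x hx).congr
        (fun s hs => (hF1X s hs x hx).symm) ((hF1X t ht x hx).symm)
      rwa [hSym (1,0) (0,1)] at h
noncomputable def Vof (q : ℝ → ℝ → ℝ) (t x : ℝ) : ℝ := ∫ y in (0:ℝ)..x, q t y
noncomputable def Vbof (q : ℝ → ℝ → ℝ) (t : ℝ) : ℝ := ∫ x in (0:ℝ)..1, Vof q t x
noncomputable def mof (v : ℝ → ℝ → ℝ) (t : ℝ) : ℝ := ∫ x in (0:ℝ)..1, v t x

set_option maxHeartbeats 1000000 in
lemma coreDecay (T : ℝ) (a : ℝ → ℝ) (a₀ a₁ : ℝ) (ha : Continuous a)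
    (ha₀ : 0 < a₀) (ha₀₁ : a₀ ≤ a₁)
    (hbd : ∀ x ∈ Icc (0:ℝ) 1, a₀ ≤ a x ∧ a x ≤ a₁)
    (v q vt vx qt qx : ℝ → ℝ → ℝ)
    (hv : Continuous (uncurry v)) (hq : Continuous (uncurry q))
    (hvt : Continuous (uncurry vt)) (hvx : Continuous (uncurry vx))
    (hqt : Continuous (uncurry qt)) (hqx : Continuous (uncurry qx))
    (hdvt : ∀ t ∈ Icc (0:ℝ) T, ∀ x ∈ Icc (0:ℝ) 1,
      HasDerivWithinAt (fun r => v r x) (vt t x) (Icc (0:ℝ) T) t)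
    (hdqt : ∀ t ∈ Icc (0:ℝ) T, ∀ x ∈ Icc (0:ℝ) 1,
      HasDerivWithinAt (fun r => q r x) (qt t x) (Icc (0:ℝ) T) t)
    (hdvx : ∀ t ∈ Icc (0:ℝ) T, ∀ x ∈ Icc (0:ℝ) 1,
      HasDerivWithinAt (fun y => v t y) (vx t x) (Icc (0:ℝ) 1) x)
    (hdqx : ∀ t ∈ Icc (0:ℝ) T, ∀ x ∈ Icc (0:ℝ) 1,
      HasDerivWithinAt (fun y => q t y) (qx t x) (Icc (0:ℝ) 1) x)
    (hpde1 : ∀ t ∈ Icc (0:ℝ) T, ∀ x ∈ Icc (0:ℝ) 1, vt t x + qx t x + a x * v t x = 0)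
    (hpde2 : ∀ t ∈ Icc (0:ℝ) T, ∀ x ∈ Icc (0:ℝ) 1, qt t x + vx t x = 0)
    (hbc : ∀ t ∈ Icc (0:ℝ) T, q t 0 = 0 ∧ q t 1 = 0) :
    ∀ s t : ℝ, 0 ≤ s → s ≤ t → t ≤ T →
      (1/2) * (∫ x in (0:ℝ)..1, ((v t x) ^ 2 + (q t x) ^ 2))
        ≤ 3 * Real.exp (-((4/3) * a₀ ^ 3 / (8 * a₀ ^ 2 + 4 * a₀ ^ 2 * a₁ + 2 * a₀ * a₁ + a₁ ^ 4)
              * (t - s)))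
          * ((1/2) * ∫ x in (0:ℝ)..1, ((v s x) ^ 2 + (q s x) ^ 2)) := by
  intro s tf hs hstf htfT
  -- constants
  set D : ℝ := 8 * a₀ ^ 2 + 4 * a₀ ^ 2 * a₁ + 2 * a₀ * a₁ + a₁ ^ 4 with hDdef
  set α : ℝ := (4/3) * a₀ ^ 3 / D with hαdef
  have ha₁ : 0 < a₁ := lt_of_lt_of_le ha₀ ha₀₁
  have hDpos : 0 < D := by rw [hDdef]; positivity
  have hα0 : 0 < α := by rw [hαdef]; positivity
  have hαD : α * D = (4/3) * a₀ ^ 3 := by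
    rw [hαdef, div_mul_cancel₀ _ hDpos.ne']
  have hα13 : α ≤ 1/3 := by
    rw [hαdef, div_le_iff₀ hDpos, hDdef]
    nlinarith [mul_nonneg (mul_nonneg ha₀.le ha₀.le) (sub_nonneg.2 ha₀₁),
      mul_pos ha₀ ha₁, sq_nonneg a₀, sq_nonneg a₁, sq_nonneg (a₁^2), mul_pos (mul_pos ha₀ ha₀) ha₁]
  set ε : ℝ := (3/2) * α with hεdef
  have hε0 : 0 < ε := by rw [hεdef]; positivity
  have hε12 : ε ≤ 1/2 := by rw [hεdef]; linarith
  have k2 : α * (1 + ε) ≤ ε := by rw [hεdef]; nlinarith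
  have hk : a₀ ^ 2 * (3 + a₁ ^ 2) ≤ D := by
    rw [hDdef]
    nlinarith [mul_nonneg (sq_nonneg a₁) (sub_nonneg.2 (mul_self_le_mul_self ha₀.le ha₀₁)),
      mul_pos (mul_pos ha₀ ha₀) ha₁, mul_pos ha₀ ha₁, sq_nonneg a₀, sq_nonneg a₁]
  have k1 : α * (1 + ε) / 2 + ε * (1 + a₁ ^ 2 / 2) ≤ a₀ := by
    have h1 : α * (3 + a₁ ^ 2) * D = (4/3) * a₀ ^ 3 * (3 + a₁ ^ 2) := by
      rw [mul_right_comm, hαD]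
    have h2 : (4/3) * a₀ ^ 3 * (3 + a₁ ^ 2) ≤ (4/3) * a₀ * D := by
      nlinarith [mul_le_mul_of_nonneg_left hk (show (0:ℝ) ≤ (4/3) * a₀ by positivity)]
    have h34 : α * (3 + a₁ ^ 2) ≤ (4/3) * a₀ :=
      le_of_mul_le_mul_right (by linarith) hDpos
    rw [hεdef]
    nlinarith [mul_le_mul_of_nonneg_left hα13 hα0.le]
  -- basic slice continuity
  have hVc : Continuous (uncurry (Vof q)) :=
    intervalIntegral.continuous_parametric_primitive_of_continuous hq
  have hVbc : Continuous (Vbof q) :=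
    intervalIntegral.continuous_parametric_intervalIntegral_of_continuous' hVc 0 1
  have hmc : Continuous (mof v) :=
    intervalIntegral.continuous_parametric_intervalIntegral_of_continuous' hv 0 1
  -- interior upgrades
  have hdvt' : ∀ τ ∈ Ioo (0:ℝ) T, ∀ x ∈ Icc (0:ℝ) 1, HasDerivAt (fun r => v r x) (vt τ x) τ :=
    fun τ hτ x hx => (hdvt τ (Ioo_subset_Icc_self hτ) x hx).hasDerivAt (Icc_mem_nhds hτ.1 hτ.2)
  have hdqt' : ∀ τ ∈ Ioo (0:ℝ) T, ∀ x ∈ Icc (0:ℝ) 1, HasDerivAt (fun r => q r x) (qt τ x) τ :=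
    fun τ hτ x hx => (hdqt τ (Ioo_subset_Icc_self hτ) x hx).hasDerivAt (Icc_mem_nhds hτ.1 hτ.2)
  have hdvx' : ∀ t ∈ Icc (0:ℝ) T, ∀ x ∈ Ioo (0:ℝ) 1, HasDerivAt (fun y => v t y) (vx t x) x :=
    fun t ht x hx => (hdvx t ht x (Ioo_subset_Icc_self hx)).hasDerivAt (Icc_mem_nhds hx.1 hx.2)
  have hdqx' : ∀ t ∈ Icc (0:ℝ) T, ∀ x ∈ Ioo (0:ℝ) 1, HasDerivAt (fun y => q t y) (qx t x) x :=
    fun t ht x hx => (hdqx t ht x (Ioo_subset_Icc_self hx)).hasDerivAt (Icc_mem_nhds hx.1 hx.2)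
  -- x-direction FTC facts
  have e1 : ∀ t ∈ Icc (0:ℝ) T, ∀ c ∈ Icc (0:ℝ) 1,
      (∫ y in (0:ℝ)..c, vx t y) = v t c - v t 0 := by
    intro t ht c hc
    apply myftc hc.1 (slice_contX hv t).continuousOn ((slice_contX hvx t).intervalIntegrable 0 c)
    intro y hy; exact hdvx' t ht y ⟨hy.1, lt_of_lt_of_le hy.2 hc.2⟩
  have e2 : ∀ t ∈ Icc (0:ℝ) T,
      (∫ y in (0:ℝ)..1, (vx t y * q t y + v t y * qx t y)) = 0 := by
    intro t ht
    have h := myftc zero_le_one ((slice_contX hv t).fun_mul (slice_contX hq t)).continuousOn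
      ((((slice_contX hvx t).fun_mul (slice_contX hq t)).fun_add
        ((slice_contX hv t).fun_mul (slice_contX hqx t))).intervalIntegrable 0 1)
      (fun y hy => (hdvx' t ht y hy).fun_mul (hdqx' t ht y hy))
    rw [h, (hbc t ht).1, (hbc t ht).2]; ring
  -- FTC-1 in x for V
  have hVx : ∀ (t x : ℝ), HasDerivAt (fun c => Vof q t c) (q t x) x := by
    intro t x
    exact intervalIntegral.integral_hasDerivAt_right ((slice_contX hq t).intervalIntegrable 0 x)
      ((slice_contX hq t).stronglyMeasurableAtFilter volume (nhds x))
      (slice_contX hq t).continuousAt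
  -- t-derivative of V
  have hVt : ∀ τ ∈ Ioo (0:ℝ) T, ∀ c ∈ Icc (0:ℝ) 1,
      HasDerivAt (fun r => Vof q r c) (v τ 0 - v τ c) τ := by
    intro τ hτ c hc
    have hτI : τ ∈ Icc (0:ℝ) T := Ioo_subset_Icc_self hτ
    have h1 : HasDerivWithinAt (fun r => ∫ x in (0:ℝ)..c, q r x)
        (∫ x in (0:ℝ)..c, qt τ x) (Icc (0:ℝ) T) τ :=
      dparam hc.1 hq hqt (fun σ hσ x hx => hdqt' σ hσ x ⟨hx.1, hx.2.trans hc.2⟩) hτI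
    have h2 : HasDerivAt (fun r => ∫ x in (0:ℝ)..c, q r x)
        (∫ x in (0:ℝ)..c, qt τ x) τ := h1.hasDerivAt (Icc_mem_nhds hτ.1 hτ.2)
    have h3 : (∫ x in (0:ℝ)..c, qt τ x) = v τ 0 - v τ c := by
      have hcg : (∫ x in (0:ℝ)..c, qt τ x) = ∫ x in (0:ℝ)..c, (-(vx τ x)) := by
        apply intervalIntegral.integral_congr
        intro x hx; rw [uIcc_of_le hc.1] at hx
        have h := hpde2 τ hτI x ⟨hx.1, hx.2.trans hc.2⟩
        show qt τ x = -(vx τ x)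
        linarith
      rw [hcg, intervalIntegral.integral_neg, e1 τ hτI c hc]; ring
    exact h3 ▸ h2
  -- t-derivative of Vb
  have hVbt : ∀ τ ∈ Ioo (0:ℝ) T, HasDerivAt (Vbof q) (v τ 0 - mof v τ) τ := by
    intro τ hτ
    have hτI : τ ∈ Icc (0:ℝ) T := Ioo_subset_Icc_self hτ
    have hgt : Continuous (uncurry (fun (t x : ℝ) => v t 0 - v t x)) :=
      ((slice_contT hv 0).comp continuous_fst).fun_sub hv
    have h1 : HasDerivWithinAt (fun r => ∫ x in (0:ℝ)..1, Vof q r x)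
        (∫ x in (0:ℝ)..1, (v τ 0 - v τ x)) (Icc (0:ℝ) T) τ :=
      dparam zero_le_one hVc hgt (fun σ hσ x hx => hVt σ hσ x hx) hτI
    have h2 := h1.hasDerivAt (Icc_mem_nhds hτ.1 hτ.2)
    have h3 : (∫ x in (0:ℝ)..1, (v τ 0 - v τ x)) = v τ 0 - mof v τ := by
      rw [intervalIntegral.integral_sub (continuous_const.intervalIntegrable 0 1)
        ((slice_contX hv τ).intervalIntegrable 0 1), intervalIntegral.integral_const]
      simp [mof]
    exact h3 ▸ h2
  -- energy and cross functionals
  set Fv : ℝ → ℝ := fun t => (1/2) * ∫ x in (0:ℝ)..1, ((v t x) ^ 2 + (q t x) ^ 2) with hFvdef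
  set Gv : ℝ → ℝ := fun t => ∫ x in (0:ℝ)..1, v t x * (Vbof q t - Vof q t x) with hGvdef
  set L : ℝ → ℝ := fun t => Fv t + ε * Gv t with hLdef
  set Fd : ℝ → ℝ := fun t => -(∫ x in (0:ℝ)..1, a x * (v t x) ^ 2) with hFddef
  set Gd : ℝ → ℝ := fun t => ∫ x in (0:ℝ)..1,
    (vt t x * (Vbof q t - Vof q t x) + v t x * (v t x - mof v t)) with hGddef
  set Ld : ℝ → ℝ := fun t => Fd t + ε * Gd t with hLddef
  -- derivative of F
  have hFder : ∀ t ∈ Icc (0:ℝ) T, HasDerivWithinAt Fv (Fd t) (Icc (0:ℝ) T) t := by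
    intro t ht
    have h1 : HasDerivWithinAt (fun r => ∫ x in (0:ℝ)..1, ((v r x) ^ 2 + (q r x) ^ 2))
        (∫ x in (0:ℝ)..1, (2 * v t x * vt t x + 2 * q t x * qt t x)) (Icc (0:ℝ) T) t := by
      apply dparam (g := fun r x => (v r x) ^ 2 + (q r x) ^ 2)
        (gt := fun t x => 2 * v t x * vt t x + 2 * q t x * qt t x) zero_le_one
        ((hv.fun_pow 2).fun_add (hq.fun_pow 2))
        (((continuous_const.fun_mul hv).fun_mul hvt).fun_add ((continuous_const.fun_mul hq).fun_mul hqt))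
      · intro τ hτ x hx
        have hv2 : HasDerivAt (fun r => (v r x) ^ 2) (2 * v τ x * vt τ x) τ := by
          simpa using (hdvt' τ hτ x hx).fun_pow 2
        have hq2 : HasDerivAt (fun r => (q r x) ^ 2) (2 * q τ x * qt τ x) τ := by
          simpa using (hdqt' τ hτ x hx).fun_pow 2
        exact hv2.fun_add hq2
      · exact ht
    have h2 : (1/2) * (∫ x in (0:ℝ)..1, (2 * v t x * vt t x + 2 * q t x * qt t x)) = Fd t := by
      have hcong : (∫ x in (0:ℝ)..1, (2 * v t x * vt t x + 2 * q t x * qt t x))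
          = ∫ x in (0:ℝ)..1, ((-2) * (vx t x * q t x + v t x * qx t x)
              + (-2) * (a x * (v t x) ^ 2)) := by
        apply intervalIntegral.integral_congr
        intro x hx; rw [uIcc_of_le zero_le_one] at hx
        have h1' := hpde1 t ht x hx
        have h2' := hpde2 t ht x hx
        have hvtx : vt t x = -(qx t x) - a x * v t x := by linarith
        have hqtx : qt t x = -(vx t x) := by linarith
        show 2 * v t x * vt t x + 2 * q t x * qt t x
          = (-2) * (vx t x * q t x + v t x * qx t x) + (-2) * (a x * (v t x) ^ 2)
        rw [hvtx, hqtx]; ring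
      simp only [hFddef]
      rw [hcong, intervalIntegral.integral_add
        ((continuous_const.fun_mul (((slice_contX hvx t).fun_mul (slice_contX hq t)).fun_add
          ((slice_contX hv t).fun_mul (slice_contX hqx t)))).intervalIntegrable 0 1)
        ((continuous_const.fun_mul (ha.fun_mul ((slice_contX hv t).fun_pow 2))).intervalIntegrable 0 1),
        intervalIntegral.integral_const_mul, intervalIntegral.integral_const_mul, e2 t ht]
      ring
    simp only [hFvdef]
    exact h2 ▸ (h1.const_mul (1/2))
  -- derivative of G
  have hGder : ∀ t ∈ Icc (0:ℝ) T, HasDerivWithinAt Gv (Gd t) (Icc (0:ℝ) T) t := by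
    intro t ht
    have hgc : Continuous (uncurry (fun (t x : ℝ) => v t x * (Vbof q t - Vof q t x))) :=
      hv.fun_mul ((hVbc.comp continuous_fst).fun_sub hVc)
    have hgtc : Continuous (uncurry (fun (t x : ℝ) =>
        vt t x * (Vbof q t - Vof q t x) + v t x * (v t x - mof v t))) :=
      (hvt.fun_mul ((hVbc.comp continuous_fst).fun_sub hVc)).fun_add
        (hv.fun_mul (hv.fun_sub (hmc.comp continuous_fst)))
    have h1 := dparam zero_le_one hgc hgtc (fun τ hτ x hx => by
      have hd1 := hdvt' τ hτ x hx
      have hd2 : HasDerivAt (fun r => Vbof q r - Vof q r x)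
          ((v τ 0 - mof v τ) - (v τ 0 - v τ x)) τ := (hVbt τ hτ).fun_sub (hVt τ hτ x hx)
      have h := hd1.fun_mul hd2
      exact h.congr_deriv (by ring)) ht
    simp only [hGvdef, hGddef]
    exact h1
  -- derivative of L
  have hLder : ∀ t ∈ Icc (0:ℝ) T, HasDerivWithinAt L (Ld t) (Icc (0:ℝ) T) t := by
    intro t ht
    simp only [hLdef, hLddef]
    exact (hFder t ht).add ((hGder t ht).const_mul ε)
  -- identity for Gd
  have hGd_eq : ∀ t ∈ Icc (0:ℝ) T,
      Gd t = -(∫ x in (0:ℝ)..1, (q t x) ^ 2) + (∫ x in (0:ℝ)..1, (v t x) ^ 2)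
        - (mof v t) ^ 2 - ∫ x in (0:ℝ)..1, a x * v t x * (Vbof q t - Vof q t x) := by
    intro t ht
    have e3 : (∫ x in (0:ℝ)..1, (qx t x * (Vbof q t - Vof q t x) - (q t x) ^ 2)) = 0 := by
      have hW : Continuous (fun y => Vbof q t - Vof q t y) :=
        continuous_const.fun_sub (slice_contX hVc t)
      have h := myftc zero_le_one ((slice_contX hq t).fun_mul hW).continuousOn
        ((((slice_contX hqx t).fun_mul hW).fun_sub ((slice_contX hq t).fun_pow 2)).intervalIntegrable 0 1)
        (fun y hy => by
          have hd := (hdqx' t ht y hy).fun_mul ((hasDerivAt_const y (Vbof q t)).fun_sub (hVx t y))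
          exact hd.congr_deriv (by ring))
      rw [h, (hbc t ht).1, (hbc t ht).2]; ring
    have hW : Continuous (fun y => Vbof q t - Vof q t y) :=
      continuous_const.fun_sub (slice_contX hVc t)
    have hcong : Gd t = ∫ x in (0:ℝ)..1,
        ((-(qx t x * (Vbof q t - Vof q t x)) - a x * v t x * (Vbof q t - Vof q t x))
          + ((v t x) ^ 2 - v t x * mof v t)) := by
      simp only [hGddef]
      apply intervalIntegral.integral_congr
      intro x hx; rw [uIcc_of_le zero_le_one] at hx
      have h1' := hpde1 t ht x hx
      have hvtx : vt t x = -(qx t x) - a x * v t x := by linarith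
      show vt t x * (Vbof q t - Vof q t x) + v t x * (v t x - mof v t)
        = (-(qx t x * (Vbof q t - Vof q t x)) - a x * v t x * (Vbof q t - Vof q t x))
          + ((v t x) ^ 2 - v t x * mof v t)
      rw [hvtx]; ring
    have hi1 : IntervalIntegrable (fun x => -(qx t x * (Vbof q t - Vof q t x))
        - a x * v t x * (Vbof q t - Vof q t x)) volume 0 1 :=
      ((((slice_contX hqx t).fun_mul hW).fun_neg).fun_sub ((ha.fun_mul (slice_contX hv t)).fun_mul hW)).intervalIntegrable 0 1
    have hi2 : IntervalIntegrable (fun x => (v t x) ^ 2 - v t x * mof v t) volume 0 1 :=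
      (((slice_contX hv t).fun_pow 2).fun_sub ((slice_contX hv t).fun_mul continuous_const)).intervalIntegrable 0 1
    have hi3 : IntervalIntegrable (fun x => -(qx t x * (Vbof q t - Vof q t x))) volume 0 1 :=
      (((slice_contX hqx t).fun_mul hW).fun_neg).intervalIntegrable 0 1
    have hi4 : IntervalIntegrable (fun x => a x * v t x * (Vbof q t - Vof q t x)) volume 0 1 :=
      ((ha.fun_mul (slice_contX hv t)).fun_mul hW).intervalIntegrable 0 1
    have hi5 : IntervalIntegrable (fun x => (v t x) ^ 2) volume 0 1 :=
      ((slice_contX hv t).fun_pow 2).intervalIntegrable 0 1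
    have hi6 : IntervalIntegrable (fun x => v t x * mof v t) volume 0 1 :=
      ((slice_contX hv t).fun_mul continuous_const).intervalIntegrable 0 1
    rw [hcong, intervalIntegral.integral_add (hi3.sub hi4) hi2,
      intervalIntegral.integral_sub hi3 hi4, intervalIntegral.integral_sub hi5 hi6,
      intervalIntegral.integral_neg, intervalIntegral.integral_mul_const]
    have hsplit : (∫ x in (0:ℝ)..1, qx t x * (Vbof q t - Vof q t x))
        = ∫ x in (0:ℝ)..1, (q t x) ^ 2 := by
      have hsub : (∫ x in (0:ℝ)..1, (qx t x * (Vbof q t - Vof q t x) - (q t x) ^ 2))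
          = (∫ x in (0:ℝ)..1, qx t x * (Vbof q t - Vof q t x))
            - ∫ x in (0:ℝ)..1, (q t x) ^ 2 :=
        intervalIntegral.integral_sub (((slice_contX hqx t).fun_mul hW).intervalIntegrable 0 1)
          (((slice_contX hq t).fun_pow 2).intervalIntegrable 0 1)
      rw [e3] at hsub
      linarith [hsub]
    rw [hsplit]
    have hmm : (∫ x in (0:ℝ)..1, v t x) = mof v t := rfl
    rw [hmm]; ring
  -- nonnegativity and Poincaré
  have hIv0 : ∀ t, 0 ≤ ∫ x in (0:ℝ)..1, (v t x) ^ 2 :=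
    fun t => intervalIntegral.integral_nonneg zero_le_one (fun x _ => sq_nonneg _)
  have hIq0 : ∀ t, 0 ≤ ∫ x in (0:ℝ)..1, (q t x) ^ 2 :=
    fun t => intervalIntegral.integral_nonneg zero_le_one (fun x _ => sq_nonneg _)
  have hP : ∀ t, (∫ x in (0:ℝ)..1, (Vbof q t - Vof q t x) ^ 2)
      ≤ ∫ x in (0:ℝ)..1, (q t x) ^ 2 :=
    fun t => poincare (g := fun y => Vof q t y) (g' := fun y => q t y)
      (hVx t) (slice_contX hq t)
  have hIW0 : ∀ t, 0 ≤ ∫ x in (0:ℝ)..1, (Vbof q t - Vof q t x) ^ 2 :=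
    fun t => intervalIntegral.integral_nonneg zero_le_one (fun x _ => sq_nonneg _)
  -- split of F integral
  have hFsplit : ∀ t, Fv t = (1/2) * (∫ x in (0:ℝ)..1, (v t x) ^ 2)
      + (1/2) * ∫ x in (0:ℝ)..1, (q t x) ^ 2 := by
    intro t
    simp only [hFvdef]
    rw [intervalIntegral.integral_add (((slice_contX hv t).fun_pow 2).intervalIntegrable 0 1)
      (((slice_contX hq t).fun_pow 2).intervalIntegrable 0 1)]
    ring
  -- bounds on G
  have hGbnd : ∀ t ∈ Icc (0:ℝ) T, Gv t ≤ Fv t ∧ -(Gv t) ≤ Fv t := by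
    intro t ht
    have hW : Continuous (fun y => Vbof q t - Vof q t y) :=
      continuous_const.fun_sub (slice_contX hVc t)
    have hhalf : (∫ x in (0:ℝ)..1, ((1/2) * (v t x) ^ 2 + (1/2) * (Vbof q t - Vof q t x) ^ 2))
        = (1/2) * (∫ x in (0:ℝ)..1, (v t x) ^ 2)
          + (1/2) * ∫ x in (0:ℝ)..1, (Vbof q t - Vof q t x) ^ 2 := by
      rw [intervalIntegral.integral_add
        ((continuous_const.fun_mul ((slice_contX hv t).fun_pow 2)).intervalIntegrable 0 1)
        ((continuous_const.fun_mul (hW.fun_pow 2)).intervalIntegrable 0 1),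
        intervalIntegral.integral_const_mul, intervalIntegral.integral_const_mul]
    have h1 : Gv t ≤ (1/2) * (∫ x in (0:ℝ)..1, (v t x) ^ 2)
        + (1/2) * ∫ x in (0:ℝ)..1, (Vbof q t - Vof q t x) ^ 2 := by
      simp only [hGvdef]; rw [← hhalf]
      apply intervalIntegral.integral_mono_on zero_le_one
        (((slice_contX hv t).fun_mul hW).intervalIntegrable 0 1)
        (((continuous_const.fun_mul ((slice_contX hv t).fun_pow 2)).fun_add
          (continuous_const.fun_mul (hW.fun_pow 2))).intervalIntegrable 0 1)
      intro x hx
      nlinarith [sq_nonneg (v t x - (Vbof q t - Vof q t x))]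
    have h2 : -(Gv t) ≤ (1/2) * (∫ x in (0:ℝ)..1, (v t x) ^ 2)
        + (1/2) * ∫ x in (0:ℝ)..1, (Vbof q t - Vof q t x) ^ 2 := by
      simp only [hGvdef]; rw [← intervalIntegral.integral_neg, ← hhalf]
      apply intervalIntegral.integral_mono_on zero_le_one
        ((((slice_contX hv t).fun_mul hW).fun_neg).intervalIntegrable 0 1)
        (((continuous_const.fun_mul ((slice_contX hv t).fun_pow 2)).fun_add
          (continuous_const.fun_mul (hW.fun_pow 2))).intervalIntegrable 0 1)
      intro x hx
      nlinarith [sq_nonneg (v t x + (Vbof q t - Vof q t x))]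
    constructor
    · rw [hFsplit t]; linarith [hP t]
    · rw [hFsplit t]; linarith [hP t]
  have hFnn : ∀ t, 0 ≤ Fv t := by
    intro t; rw [hFsplit t]; linarith [hIv0 t, hIq0 t]
  -- the differential inequality
  have hbound : ∀ t ∈ Icc (0:ℝ) T, Ld t ≤ -α * L t := by
    intro t ht
    have hW : Continuous (fun y => Vbof q t - Vof q t y) :=
      continuous_const.fun_sub (slice_contX hVc t)
    -- dissipation bound
    have hb1 : a₀ * (∫ x in (0:ℝ)..1, (v t x) ^ 2) ≤ ∫ x in (0:ℝ)..1, a x * (v t x) ^ 2 := by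
      rw [← intervalIntegral.integral_const_mul]
      apply intervalIntegral.integral_mono_on zero_le_one
        ((continuous_const.fun_mul ((slice_contX hv t).fun_pow 2)).intervalIntegrable 0 1)
        ((ha.fun_mul ((slice_contX hv t).fun_pow 2)).intervalIntegrable 0 1)
      intro x hx
      exact mul_le_mul_of_nonneg_right (hbd x hx).1 (sq_nonneg _)
    -- cross term bound
    have hb2 : -(∫ x in (0:ℝ)..1, a x * v t x * (Vbof q t - Vof q t x))
        ≤ (a₁ ^ 2 / 2) * (∫ x in (0:ℝ)..1, (v t x) ^ 2)
          + (1/2) * ∫ x in (0:ℝ)..1, (Vbof q t - Vof q t x) ^ 2 := by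
      have hhalf : (∫ x in (0:ℝ)..1,
          ((a₁ ^ 2 / 2) * (v t x) ^ 2 + (1/2) * (Vbof q t - Vof q t x) ^ 2))
          = (a₁ ^ 2 / 2) * (∫ x in (0:ℝ)..1, (v t x) ^ 2)
            + (1/2) * ∫ x in (0:ℝ)..1, (Vbof q t - Vof q t x) ^ 2 := by
        rw [intervalIntegral.integral_add
          ((continuous_const.fun_mul ((slice_contX hv t).fun_pow 2)).intervalIntegrable 0 1)
          ((continuous_const.fun_mul (hW.fun_pow 2)).intervalIntegrable 0 1),
          intervalIntegral.integral_const_mul, intervalIntegral.integral_const_mul]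
      rw [← intervalIntegral.integral_neg, ← hhalf]
      apply intervalIntegral.integral_mono_on zero_le_one
        ((((ha.fun_mul (slice_contX hv t)).fun_mul hW).fun_neg).intervalIntegrable 0 1)
        (((continuous_const.fun_mul ((slice_contX hv t).fun_pow 2)).fun_add
          (continuous_const.fun_mul (hW.fun_pow 2))).intervalIntegrable 0 1)
      intro x hx
      obtain ⟨hax1, hax2⟩ := hbd x hx
      have hApos : 0 < a x := lt_of_lt_of_le ha₀ hax1
      show -(a x * v t x * (Vbof q t - Vof q t x))
        ≤ a₁ ^ 2 / 2 * (v t x) ^ 2 + 1/2 * (Vbof q t - Vof q t x) ^ 2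
      rcases le_or_gt 0 (v t x * (Vbof q t - Vof q t x)) with hc | hc
      · nlinarith [mul_nonneg hApos.le hc, sq_nonneg (a₁ * v t x),
          sq_nonneg (Vbof q t - Vof q t x)]
      · have h1 : a₁ * (v t x * (Vbof q t - Vof q t x))
            ≤ a x * (v t x * (Vbof q t - Vof q t x)) :=
          mul_le_mul_of_nonpos_right hax2 hc.le
        nlinarith [h1, sq_nonneg (a₁ * v t x + (Vbof q t - Vof q t x))]
    -- assemble
    have hGd2 : Gd t ≤ -(∫ x in (0:ℝ)..1, (q t x) ^ 2) + (∫ x in (0:ℝ)..1, (v t x) ^ 2)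
        + (a₁ ^ 2 / 2) * (∫ x in (0:ℝ)..1, (v t x) ^ 2)
        + (1/2) * ∫ x in (0:ℝ)..1, (q t x) ^ 2 := by
      have := hGd_eq t ht
      have hm2 : 0 ≤ (mof v t) ^ 2 := sq_nonneg _
      have hPt := hP t
      linarith [hb2]
    have hεGd : ε * Gd t ≤ ε * (-(∫ x in (0:ℝ)..1, (q t x) ^ 2)
        + (∫ x in (0:ℝ)..1, (v t x) ^ 2)
        + (a₁ ^ 2 / 2) * (∫ x in (0:ℝ)..1, (v t x) ^ 2)
        + (1/2) * ∫ x in (0:ℝ)..1, (q t x) ^ 2) :=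
      mul_le_mul_of_nonneg_left hGd2 hε0.le
    have hGF' : ε * α * Gv t ≤ ε * α * ((1/2) * (∫ x in (0:ℝ)..1, (v t x) ^ 2)
        + (1/2) * ∫ x in (0:ℝ)..1, (q t x) ^ 2) := by
      have hg := (hGbnd t ht).1
      rw [hFsplit t] at hg
      exact mul_le_mul_of_nonneg_left hg (by positivity)
    have hLdt : Ld t = Fd t + ε * Gd t := by simp only [hLddef]
    have hFdt : Fd t = -(∫ x in (0:ℝ)..1, a x * (v t x) ^ 2) := by simp only [hFddef]
    have hLt : L t = Fv t + ε * Gv t := by simp only [hLdef]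
    have hc1 : (α * (1 + ε) / 2) * (∫ x in (0:ℝ)..1, (v t x) ^ 2)
        ≤ (a₀ - ε * (1 + a₁ ^ 2 / 2)) * (∫ x in (0:ℝ)..1, (v t x) ^ 2) :=
      mul_le_mul_of_nonneg_right (by linarith [k1]) (hIv0 t)
    have hc2 : (α * (1 + ε) / 2) * (∫ x in (0:ℝ)..1, (q t x) ^ 2)
        ≤ (ε / 2) * (∫ x in (0:ℝ)..1, (q t x) ^ 2) :=
      mul_le_mul_of_nonneg_right (by linarith [k2]) (hIq0 t)
    rw [hLdt, hFdt, hLt, hFsplit t]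
    nlinarith [hb1, hεGd, hGF', hc1, hc2]
  -- continuity of L
  have hLc : Continuous L := by
    simp only [hLdef, hFvdef, hGvdef]
    apply Continuous.fun_add
    · exact continuous_const.fun_mul
        (intervalIntegral.continuous_parametric_intervalIntegral_of_continuous'
          (f := fun t x => (v t x) ^ 2 + (q t x) ^ 2) ((hv.fun_pow 2).fun_add (hq.fun_pow 2)) 0 1)
    · exact continuous_const.fun_mul
        (intervalIntegral.continuous_parametric_intervalIntegral_of_continuous'
          (f := fun t x => v t x * (Vbof q t - Vof q t x))
          (hv.fun_mul ((hVbc.comp continuous_fst).fun_sub hVc)) 0 1)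
  -- Gronwall
  have hsubIcc : Icc s tf ⊆ Icc (0:ℝ) T := fun r hr => ⟨hs.trans hr.1, hr.2.trans htfT⟩
  have grons : ∀ x ∈ Icc s tf, L x ≤ gronwallBound (L s) (-α) 0 (x - s) := by
    apply le_gronwallBound_of_liminf_deriv_right_le (f' := Ld) hLc.continuousOn
    · intro τ hτ r hr
      have hτIcc : τ ∈ Icc (0:ℝ) T := hsubIcc ⟨hτ.1, hτ.2.le⟩
      have hτT : τ < T := lt_of_lt_of_le hτ.2 htfT
      have hder := hLder τ hτIcc
      rw [hasDerivWithinAt_iff_tendsto_slope] at hder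
      have hmemf : Icc (0:ℝ) T \ {τ} ∈ nhdsWithin τ (Ioi τ) := by
        apply Filter.mem_of_superset (Ioc_mem_nhdsGT_of_mem (⟨le_rfl, hτT⟩ : τ ∈ Ico τ T))
        intro z hz
        exact ⟨⟨hτIcc.1.trans hz.1.le, hz.2⟩, by simpa using (ne_of_gt hz.1)⟩
      have htend := hder.mono_left (nhdsWithin_le_of_mem hmemf)
      have hev := htend.eventually_lt_const hr
      refine (hev.mono ?_).frequently
      intro z hz
      rwa [slope_def_field, div_eq_inv_mul] at hz
    · exact le_rfl
    · intro τ hτ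
      have hτIcc : τ ∈ Icc (0:ℝ) T := hsubIcc ⟨hτ.1, hτ.2.le⟩
      simpa using hbound τ hτIcc
  have hLtf : L tf ≤ L s * Real.exp ((-α) * (tf - s)) := by
    have := grons tf ⟨hstf, le_rfl⟩
    rwa [gronwallBound_ε0] at this
  -- final assembly
  have hsIcc : s ∈ Icc (0:ℝ) T := ⟨hs, hstf.trans htfT⟩
  have htfIcc : tf ∈ Icc (0:ℝ) T := ⟨hs.trans hstf, htfT⟩
  have hexp : 0 < Real.exp ((-α) * (tf - s)) := Real.exp_pos _
  have h1 : Fv tf ≤ 2 * L tf := by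
    have hg := (hGbnd tf htfIcc).2
    have hf := hFnn tf
    have hLt : L tf = Fv tf + ε * Gv tf := by simp only [hLdef]
    nlinarith [mul_le_mul_of_nonneg_left hg hε0.le,
      mul_nonneg (show (0:ℝ) ≤ 1 - 2*ε by linarith) hf]
  have h2 : L s ≤ (3/2) * Fv s := by
    have hg := (hGbnd s hsIcc).1
    have hf := hFnn s
    have hLt : L s = Fv s + ε * Gv s := by simp only [hLdef]
    nlinarith [mul_le_mul_of_nonneg_left hg hε0.le,
      mul_nonneg (show (0:ℝ) ≤ 1 - 2*ε by linarith) hf]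
  have hfinal : Fv tf ≤ 3 * Real.exp (-(α * (tf - s))) * Fv s := by
    have h3 : L s * Real.exp ((-α) * (tf - s)) ≤ (3/2) * Fv s * Real.exp ((-α) * (tf - s)) :=
      mul_le_mul_of_nonneg_right h2 hexp.le
    have h6 : 2 * L tf ≤ 2 * (L s * Real.exp ((-α) * (tf - s))) :=
      mul_le_mul_of_nonneg_left hLtf (by norm_num)
    have h7 : 2 * (L s * Real.exp ((-α) * (tf - s)))
        ≤ 2 * ((3/2) * Fv s * Real.exp ((-α) * (tf - s))) :=
      mul_le_mul_of_nonneg_left h3 (by norm_num)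
    have h8 := (h1.trans h6).trans h7
    calc Fv tf ≤ 2 * ((3/2) * Fv s * Real.exp ((-α) * (tf - s))) := h8
      _ = 3 * Real.exp ((-α) * (tf - s)) * Fv s := by ring
      _ = 3 * Real.exp (-(α * (tf - s))) * Fv s := by rw [neg_mul]
  have hFvtf : Fv tf = (1/2) * ∫ x in (0:ℝ)..1, ((v tf x) ^ 2 + (q tf x) ^ 2) := by
    simp only [hFvdef]
  have hFvs : Fv s = (1/2) * ∫ x in (0:ℝ)..1, ((v s x) ^ 2 + (q s x) ^ 2) := by
    simp only [hFvdef]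
  rw [← hFvtf, ← hFvs]
  exact hfinal

set_option maxHeartbeats 1000000 in
/-- Exponential decay of the first-order energy `E¹` for twice continuously
differentiable classical solutions of the damped wave system. -/
theorem stmt2 (T : ℝ) (hT : 0 < T) (a : ℝ → ℝ) (a₀ a₁ : ℝ)
    (ha : ContinuousOn a (Icc (0:ℝ) 1)) (ha₀ : 0 < a₀)
    (hbd : ∀ x ∈ Icc (0:ℝ) 1, a₀ ≤ a x ∧ a x ≤ a₁)
    (u p ut ux pt px : ℝ → ℝ → ℝ)
    (hsol : IsClassicalSolution T a u p ut ux pt px)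
    (hu2 : ContDiffOn ℝ 2 (Function.uncurry u) (Icc (0:ℝ) T ×ˢ Icc (0:ℝ) 1))
    (hp2 : ContDiffOn ℝ 2 (Function.uncurry p) (Icc (0:ℝ) T ×ˢ Icc (0:ℝ) 1)) :
    ∀ s t : ℝ, 0 ≤ s → s ≤ t → t ≤ T →
      (1/2) * (∫ x in (0:ℝ)..1, ((ut t x) ^ 2 + (pt t x) ^ 2))
        ≤ 3 * Real.exp (-((4/3) * a₀ ^ 3 / (8 * a₀ ^ 2 + 4 * a₀ ^ 2 * a₁ + 2 * a₀ * a₁ + a₁ ^ 4)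
              * (t - s)))
          * ((1/2) * ∫ x in (0:ℝ)..1, ((ut s x) ^ 2 + (pt s x) ^ 2)) := by
  obtain ⟨hder, hutc, huxc, hptc, hpxc, hpde, hbcp⟩ := hsol
  obtain ⟨utt, utx, huttc, hutxc, hu3⟩ := secondDerivs hT hu2
    (fun t ht x hx => (hder t ht x hx).1) (fun t ht x hx => (hder t ht x hx).2.1)
  obtain ⟨ptt, ptx, hpttc, hptxc, hp3⟩ := secondDerivs hT hp2
    (fun t ht x hx => (hder t ht x hx).2.2.1) (fun t ht x hx => (hder t ht x hx).2.2.2)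
  have hUDT : UniqueDiffOn ℝ (Icc (0:ℝ) T) := uniqueDiffOn_Icc hT
  have h01 : (0:ℝ) ∈ Icc (0:ℝ) 1 := ⟨le_rfl, zero_le_one⟩
  have h11 : (1:ℝ) ∈ Icc (0:ℝ) 1 := ⟨zero_le_one, le_rfl⟩
  -- derived PDEs
  have hDpde1 : ∀ t ∈ Icc (0:ℝ) T, ∀ x ∈ Icc (0:ℝ) 1,
      utt t x + ptx t x + a x * ut t x = 0 := by
    intro t ht x hx
    have h1 : HasDerivWithinAt (fun s => ut s x + px s x + a x * u s x)
        (utt t x + ptx t x + a x * ut t x) (Icc (0:ℝ) T) t := by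
      refine (((hu3 t ht x hx).1).add ((hp3 t ht x hx).2.2)).add ?_
      exact ((hder t ht x hx).1).hasDerivWithinAt.const_mul (a x)
    have h0 : HasDerivWithinAt (fun s => ut s x + px s x + a x * u s x) 0 (Icc (0:ℝ) T) t :=
      (hasDerivWithinAt_const t (Icc (0:ℝ) T) (0:ℝ)).congr
        (fun s hs => (hpde s hs x hx).1) ((hpde t ht x hx).1)
    exact (h1.derivWithin (hUDT t ht)).symm.trans (h0.derivWithin (hUDT t ht))
  have hDpde2 : ∀ t ∈ Icc (0:ℝ) T, ∀ x ∈ Icc (0:ℝ) 1, ptt t x + utx t x = 0 := by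
    intro t ht x hx
    have h1 : HasDerivWithinAt (fun s => pt s x + ux s x)
        (ptt t x + utx t x) (Icc (0:ℝ) T) t :=
      ((hp3 t ht x hx).1).add ((hu3 t ht x hx).2.2)
    have h0 : HasDerivWithinAt (fun s => pt s x + ux s x) 0 (Icc (0:ℝ) T) t :=
      (hasDerivWithinAt_const t (Icc (0:ℝ) T) (0:ℝ)).congr
        (fun s hs => (hpde s hs x hx).2) ((hpde t ht x hx).2)
    exact (h1.derivWithin (hUDT t ht)).symm.trans (h0.derivWithin (hUDT t ht))
  have hBC : ∀ t ∈ Icc (0:ℝ) T, pt t 0 = 0 ∧ pt t 1 = 0 := by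
    intro t ht
    constructor
    · have h1 : HasDerivWithinAt (fun s => p s 0) (pt t 0) (Icc (0:ℝ) T) t :=
        ((hder t ht 0 h01).2.2.1).hasDerivWithinAt
      have h0 : HasDerivWithinAt (fun s => p s 0) 0 (Icc (0:ℝ) T) t :=
        (hasDerivWithinAt_const t (Icc (0:ℝ) T) (0:ℝ)).congr
          (fun s hs => (hbcp s hs).1) ((hbcp t ht).1)
      exact (h1.derivWithin (hUDT t ht)).symm.trans (h0.derivWithin (hUDT t ht))
    · have h1 : HasDerivWithinAt (fun s => p s 1) (pt t 1) (Icc (0:ℝ) T) t :=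
        ((hder t ht 1 h11).2.2.1).hasDerivWithinAt
      have h0 : HasDerivWithinAt (fun s => p s 1) 0 (Icc (0:ℝ) T) t :=
        (hasDerivWithinAt_const t (Icc (0:ℝ) T) (0:ℝ)).congr
          (fun s hs => (hbcp s hs).2) ((hbcp t ht).2)
      exact (h1.derivWithin (hUDT t ht)).symm.trans (h0.derivWithin (hUDT t ht))
  -- clamping
  set πT : ℝ → ℝ := fun r => max 0 (min r T) with hπT
  set π1 : ℝ → ℝ := fun y => max 0 (min y 1) with hπ1
  have hπTc : Continuous πT := continuous_const.max (continuous_id.min continuous_const)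
  have hπ1c : Continuous π1 := continuous_const.max (continuous_id.min continuous_const)
  have hπTm : ∀ r, πT r ∈ Icc (0:ℝ) T := fun r => ⟨le_max_left _ _,
    max_le hT.le (min_le_right r T)⟩
  have hπ1m : ∀ y, π1 y ∈ Icc (0:ℝ) 1 := fun y => ⟨le_max_left _ _,
    max_le zero_le_one (min_le_right y 1)⟩
  have hπTid : ∀ r ∈ Icc (0:ℝ) T, πT r = r := by
    intro r hr; simp only [hπT]; rw [min_eq_left hr.2, max_eq_right hr.1]
  have hπ1id : ∀ y ∈ Icc (0:ℝ) 1, π1 y = y := by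
    intro y hy; simp only [hπ1]; rw [min_eq_left hy.2, max_eq_right hy.1]
  have hclc : ∀ {f : ℝ → ℝ → ℝ},
      ContinuousOn (Function.uncurry f) (Icc (0:ℝ) T ×ˢ Icc (0:ℝ) 1) →
      Continuous (Function.uncurry (fun t x => f (πT t) (π1 x))) := by
    intro f hf
    exact hf.comp_continuous ((hπTc.comp continuous_fst).prodMk (hπ1c.comp continuous_snd))
      (fun z => ⟨hπTm _, hπ1m _⟩)
  set av : ℝ → ℝ := fun y => a (π1 y) with havdef
  set cv : ℝ → ℝ → ℝ := fun t x => ut (πT t) (π1 x) with hcvdef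
  set cq : ℝ → ℝ → ℝ := fun t x => pt (πT t) (π1 x) with hcqdef
  set cvt : ℝ → ℝ → ℝ := fun t x => utt (πT t) (π1 x) with hcvtdef
  set cvx : ℝ → ℝ → ℝ := fun t x => utx (πT t) (π1 x) with hcvxdef
  set cqt : ℝ → ℝ → ℝ := fun t x => ptt (πT t) (π1 x) with hcqtdef
  set cqx : ℝ → ℝ → ℝ := fun t x => ptx (πT t) (π1 x) with hcqxdef
  have hav : Continuous av := ha.comp_continuous hπ1c hπ1m
  have ha₀₁ : a₀ ≤ a₁ := le_trans (hbd 0 h01).1 (hbd 0 h01).2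
  have hbd' : ∀ x ∈ Icc (0:ℝ) 1, a₀ ≤ av x ∧ av x ≤ a₁ := by
    intro x hx; simp only [havdef]; rw [hπ1id x hx]; exact hbd x hx
  have hcvc : Continuous (Function.uncurry cv) := hclc hutc
  have hcqc : Continuous (Function.uncurry cq) := hclc hptc
  have hcvtc : Continuous (Function.uncurry cvt) := hclc huttc
  have hcvxc : Continuous (Function.uncurry cvx) := hclc hutxc
  have hcqtc : Continuous (Function.uncurry cqt) := hclc hpttc
  have hcqxc : Continuous (Function.uncurry cqx) := hclc hptxc
  -- derivative transfers
  have hdcvt : ∀ t ∈ Icc (0:ℝ) T, ∀ x ∈ Icc (0:ℝ) 1,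
      HasDerivWithinAt (fun r => cv r x) (cvt t x) (Icc (0:ℝ) T) t := by
    intro t ht x hx
    have hval : cvt t x = utt t x := by
      simp only [hcvtdef]; rw [hπTid t ht, hπ1id x hx]
    rw [hval]
    refine ((hu3 t ht x hx).1).congr ?_ ?_
    · intro r hr; simp only [hcvdef]; rw [hπTid r hr, hπ1id x hx]
    · simp only [hcvdef]; rw [hπTid t ht, hπ1id x hx]
  have hdcqt : ∀ t ∈ Icc (0:ℝ) T, ∀ x ∈ Icc (0:ℝ) 1,
      HasDerivWithinAt (fun r => cq r x) (cqt t x) (Icc (0:ℝ) T) t := by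
    intro t ht x hx
    have hval : cqt t x = ptt t x := by
      simp only [hcqtdef]; rw [hπTid t ht, hπ1id x hx]
    rw [hval]
    refine ((hp3 t ht x hx).1).congr ?_ ?_
    · intro r hr; simp only [hcqdef]; rw [hπTid r hr, hπ1id x hx]
    · simp only [hcqdef]; rw [hπTid t ht, hπ1id x hx]
  have hdcvx : ∀ t ∈ Icc (0:ℝ) T, ∀ x ∈ Icc (0:ℝ) 1,
      HasDerivWithinAt (fun y => cv t y) (cvx t x) (Icc (0:ℝ) 1) x := by
    intro t ht x hx
    have hval : cvx t x = utx t x := by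
      simp only [hcvxdef]; rw [hπTid t ht, hπ1id x hx]
    rw [hval]
    refine ((hu3 t ht x hx).2.1).congr ?_ ?_
    · intro y hy; simp only [hcvdef]; rw [hπTid t ht, hπ1id y hy]
    · simp only [hcvdef]; rw [hπTid t ht, hπ1id x hx]
  have hdcqx : ∀ t ∈ Icc (0:ℝ) T, ∀ x ∈ Icc (0:ℝ) 1,
      HasDerivWithinAt (fun y => cq t y) (cqx t x) (Icc (0:ℝ) 1) x := by
    intro t ht x hx
    have hval : cqx t x = ptx t x := by
      simp only [hcqxdef]; rw [hπTid t ht, hπ1id x hx]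
    rw [hval]
    refine ((hp3 t ht x hx).2.1).congr ?_ ?_
    · intro y hy; simp only [hcqdef]; rw [hπTid t ht, hπ1id y hy]
    · simp only [hcqdef]; rw [hπTid t ht, hπ1id x hx]
  -- PDE transfers
  have hpde1' : ∀ t ∈ Icc (0:ℝ) T, ∀ x ∈ Icc (0:ℝ) 1,
      cvt t x + cqx t x + av x * cv t x = 0 := by
    intro t ht x hx
    simp only [hcvtdef, hcqxdef, havdef, hcvdef]
    rw [hπTid t ht, hπ1id x hx]
    exact hDpde1 t ht x hx
  have hpde2' : ∀ t ∈ Icc (0:ℝ) T, ∀ x ∈ Icc (0:ℝ) 1, cqt t x + cvx t x = 0 := by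
    intro t ht x hx
    simp only [hcqtdef, hcvxdef]
    rw [hπTid t ht, hπ1id x hx]
    exact hDpde2 t ht x hx
  have hbc' : ∀ t ∈ Icc (0:ℝ) T, cq t 0 = 0 ∧ cq t 1 = 0 := by
    intro t ht
    simp only [hcqdef]
    rw [hπTid t ht, hπ1id 0 h01, hπ1id 1 h11]
    exact hBC t ht
  -- apply the core decay lemma
  have hmain := coreDecay T av a₀ a₁ hav ha₀ ha₀₁ hbd' cv cq cvt cvx cqt cqx
    hcvc hcqc hcvtc hcvxc hcqtc hcqxc hdcvt hdcqt hdcvx hdcqx hpde1' hpde2' hbc'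
  intro s t hs hst htT
  have hsI : s ∈ Icc (0:ℝ) T := ⟨hs, hst.trans htT⟩
  have htI : t ∈ Icc (0:ℝ) T := ⟨hs.trans hst, htT⟩
  have hIt : (∫ x in (0:ℝ)..1, ((ut t x) ^ 2 + (pt t x) ^ 2))
      = ∫ x in (0:ℝ)..1, ((cv t x) ^ 2 + (cq t x) ^ 2) := by
    apply intervalIntegral.integral_congr
    intro x hx; rw [uIcc_of_le zero_le_one] at hx
    show (ut t x) ^ 2 + (pt t x) ^ 2 = (cv t x) ^ 2 + (cq t x) ^ 2
    simp only [hcvdef, hcqdef]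
    rw [hπTid t htI, hπ1id x hx]
  have hIs : (∫ x in (0:ℝ)..1, ((ut s x) ^ 2 + (pt s x) ^ 2))
      = ∫ x in (0:ℝ)..1, ((cv s x) ^ 2 + (cq s x) ^ 2) := by
    apply intervalIntegral.integral_congr
    intro x hx; rw [uIcc_of_le zero_le_one] at hx
    show (ut s x) ^ 2 + (pt s x) ^ 2 = (cv s x) ^ 2 + (cq s x) ^ 2
    simp only [hcvdef, hcqdef]
    rw [hπTid s hsI, hπ1id x hx]
  rw [hIt, hIs]
  exact hmain s t hs hst htT
end

section
/- Let a : ℝ → ℝ be square-integrable on (0,1) with positive mean ā := ∫₀¹ a(x) dx > 0, and let u : ℝ → ℝ be continuously differentiable on [0,1]. Then ‖u‖ ≤ (1/π)·(1 + (1/ā)·‖a − ā‖)·‖u′‖ + (1/ā)·|∫₀¹ a(x)·u(x) dx|, where ‖f‖ = (∫₀¹ f(x)² dx)^{1/2} denotes the L²(0,1) norm and a − ā is the function x ↦ a(x) − ā. -/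
open MeasureTheory Set

section helpers1
-- Cauchy-Schwarz helper
lemma integrable_mul_of_memL2 {α : Type*} {m : MeasurableSpace α} {μ : Measure α}
    {f g : α → ℝ} (hf : MemLp f 2 μ) (hg : MemLp g 2 μ) :
    Integrable (fun x => f x * g x) μ := by
  refine Integrable.mono' (((hf.integrable_sq.add hg.integrable_sq).div_const 2))
    (hf.aestronglyMeasurable.mul hg.aestronglyMeasurable) (ae_of_all _ fun x => ?_)
  have := sq_nonneg (|f x| - |g x|)
  simp only [Real.norm_eq_abs, abs_mul, Pi.add_apply]
  nlinarith [abs_nonneg (f x), abs_nonneg (g x), sq_abs (f x), sq_abs (g x)]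

lemma cs_L2 {α : Type*} {m : MeasurableSpace α} {μ : Measure α}
    {f g : α → ℝ} (hf : MemLp f 2 μ) (hg : MemLp g 2 μ) :
    |∫ x, f x * g x ∂μ| ≤ Real.sqrt (∫ x, (f x)^2 ∂μ) * Real.sqrt (∫ x, (g x)^2 ∂μ) := by
  have hmul := integrable_mul_of_memL2 hf hg
  have key : ∀ t : ℝ, 0 ≤ (∫ x, (f x)^2 ∂μ) * t^2 + (2 * ∫ x, f x * g x ∂μ) * t
      + ∫ x, (g x)^2 ∂μ := by
    intro t
    have h1 : Integrable (fun x => t^2 * (f x)^2 + (2*t) * (f x * g x) + (g x)^2) μ := by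
      exact ((hf.integrable_sq.const_mul _).add (hmul.const_mul _)).add hg.integrable_sq
    have h2 : 0 ≤ ∫ x, (t * f x + g x)^2 ∂μ := integral_nonneg fun x => sq_nonneg _
    have h3 : ∫ x, (t * f x + g x)^2 ∂μ
        = (∫ x, (f x)^2 ∂μ) * t^2 + (2 * ∫ x, f x * g x ∂μ) * t + ∫ x, (g x)^2 ∂μ := by
      have : (fun x => (t * f x + g x)^2)
          = fun x => t^2 * (f x)^2 + (2*t) * (f x * g x) + (g x)^2 := by
        funext x; ring
      have iA : Integrable (fun x => t^2 * (f x)^2) μ := hf.integrable_sq.const_mul _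
      have iB : Integrable (fun x => (2*t) * (f x * g x)) μ := hmul.const_mul _
      have iAB : Integrable (fun x => t^2 * (f x)^2 + (2*t) * (f x * g x)) μ := iA.add iB
      rw [this, integral_add iAB hg.integrable_sq, integral_add iA iB,
        integral_const_mul, integral_const_mul]
      ring
    linarith [h3 ▸ h2]
  have key' : ∀ t : ℝ, 0 ≤ (∫ x, (f x)^2 ∂μ) * (t*t) + (2 * ∫ x, f x * g x ∂μ) * t
      + ∫ x, (g x)^2 ∂μ := by
    intro t; have := key t; nlinarith [key t]
  have hd := discrim_le_zero key'
  rw [discrim] at hd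
  have hfg : (∫ x, f x * g x ∂μ)^2 ≤ (∫ x, (f x)^2 ∂μ) * (∫ x, (g x)^2 ∂μ) := by nlinarith
  calc |∫ x, f x * g x ∂μ| ≤ Real.sqrt ((∫ x, (f x)^2 ∂μ) * (∫ x, (g x)^2 ∂μ)) :=
        Real.abs_le_sqrt hfg
    _ = _ := Real.sqrt_mul (integral_nonneg fun x => sq_nonneg _) _

end helpers1

section helpers2
open AddCircle Complex
open scoped ENNReal Real

lemma hab2 : (-1:ℝ) < -1 + 2 := by norm_num

lemma parseval_aux (W : ℝ → ℂ) (hW : Measurable W) (C : ℝ) (hC : ∀ x, ‖W x‖ ≤ C) :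
    (Summable fun n : ℤ => ‖fourierCoeffOn hab2 W n‖^2) ∧
    ∑' n : ℤ, ‖fourierCoeffOn hab2 W n‖^2
      = (1/2) * ∫ x in (-1:ℝ)..(-1+2), ‖W x‖^2 := by
  haveI : Fact (0 < (2:ℝ)) := ⟨by norm_num⟩
  set L : AddCircle 2 → ℂ := AddCircle.liftIoc 2 (-1) W with hL
  have hLmeas : Measurable L :=
    (hW.comp measurable_subtype_coe).comp (AddCircle.measurableEquivIoc 2 (-1)).measurable
  have hLb : ∀ z, ‖L z‖ ≤ C := fun z => hC _
  have hmem : MemLp L 2 haarAddCircle :=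
    MemLp.of_bound hLmeas.aestronglyMeasurable C (ae_of_all _ hLb)
  set F := hmem.toLp L with hF
  have hFL : (⇑F) =ᵐ[haarAddCircle] L := hmem.coeFn_toLp
  have hcoeff : ∀ n : ℤ, fourierCoeff (⇑F) n = fourierCoeffOn hab2 W n := by
    intro n
    have h1 : fourierCoeff (⇑F) n = fourierCoeff L n := by
      refine integral_congr_ae ?_
      filter_upwards [hFL] with t ht
      rw [ht]
    rw [h1, hL, fourierCoeff_liftIoc_eq]
  have hpars := tsum_sq_fourierCoeff F
  have hsumm : Summable fun n : ℤ => ‖fourierCoeff (⇑F) n‖^2 := by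
    have hm := lp.memℓp (fourierBasis.repr F)
    rw [memℓp_gen_iff (by norm_num : 0 < (2:ℝ≥0∞).toReal)] at hm
    have : (fun n : ℤ => ‖fourierBasis.repr F n‖ ^ (2:ℝ≥0∞).toReal)
        = fun n : ℤ => ‖fourierCoeff (⇑F) n‖^2 := by
      funext n
      rw [fourierBasis_repr]
      norm_num [Real.rpow_natCast]
    rwa [this] at hm
  have hint : ∫ t : AddCircle 2, ‖F t‖^2 ∂haarAddCircle
      = (1/2) * ∫ x in (-1:ℝ)..(-1+2), ‖W x‖^2 := by
    have e1 : ∫ t : AddCircle 2, ‖F t‖^2 ∂haarAddCircle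
        = ∫ t : AddCircle 2, ‖L t‖^2 ∂haarAddCircle := by
      refine integral_congr_ae ?_
      filter_upwards [hFL] with t ht
      rw [ht]
    have e2 : ∫ x in Ioc (-1:ℝ) (-1+2), ‖L x‖^2 = ∫ b : AddCircle 2, ‖L b‖^2 :=
      AddCircle.integral_preimage 2 (-1) (fun t => ‖L t‖^2)
    have e3 : (∫ b : AddCircle 2, ‖L b‖^2)
        = 2 * ∫ t : AddCircle 2, ‖L t‖^2 ∂haarAddCircle := by
      rw [AddCircle.volume_eq_smul_haarAddCircle, integral_smul_measure]
      norm_num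
    have e4 : ∫ x in Ioc (-1:ℝ) (-1+2), ‖L x‖^2 = ∫ x in Ioc (-1:ℝ) (-1+2), ‖W x‖^2 := by
      refine setIntegral_congr_fun measurableSet_Ioc fun x hx => ?_
      rw [hL, AddCircle.liftIoc_coe_apply hx]
    rw [e1, intervalIntegral.integral_of_le (by norm_num : (-1:ℝ) ≤ -1+2), ← e4, e2, e3]
    ring
  constructor
  · exact hsumm.congr fun n => by rw [hcoeff n]
  · rw [show ∑' n : ℤ, ‖fourierCoeffOn hab2 W n‖^2 = ∑' n : ℤ, ‖fourierCoeff (⇑F) n‖^2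
      from tsum_congr fun n => by rw [hcoeff n], hpars, hint]

lemma intInt_of_bdd {E : Type*} [NormedAddCommGroup E] (g : ℝ → E) (C : ℝ)
    (hC : ∀ x, ‖g x‖ ≤ C) (a b : ℝ)
    (hm : AEStronglyMeasurable g (volume.restrict (uIoc a b))) :
    IntervalIntegrable g volume a b := by
  rw [intervalIntegrable_iff]
  have : IsFiniteMeasure (volume.restrict (uIoc a b)) :=
    ⟨by rw [Measure.restrict_apply_univ]; exact measure_Ioc_lt_top⟩
  exact (integrable_const C).mono' hm (ae_of_all _ hC)

lemma even_int (g : ℝ → ℝ) (hg : ∀ x, g (-x) = g x)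
    (h1 : IntervalIntegrable g volume (-1) 0) (h2 : IntervalIntegrable g volume 0 1) :
    ∫ x in (-1:ℝ)..(-1+2), g x = 2 * ∫ x in (0:ℝ)..1, g x := by
  rw [show (-1:ℝ)+2 = 1 by norm_num,
    ← intervalIntegral.integral_add_adjacent_intervals h1 h2]
  have h3 : ∫ x in (-1:ℝ)..0, g x = ∫ x in (0:ℝ)..1, g x := by
    rw [show (-1:ℝ) = -(1:ℝ) by norm_num, show (0:ℝ) = -(0:ℝ) by norm_num,
      ← intervalIntegral.integral_comp_neg]
    simp [hg]
  rw [h3]; ring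

lemma wirtinger (v v' : ℝ → ℝ)
    (hv : ∀ x ∈ Icc (0:ℝ) 1, HasDerivAt v (v' x) x)
    (hv' : ContinuousOn v' (Icc (0:ℝ) 1))
    (hmean : ∫ x in (0:ℝ)..1, v x = 0) :
    ∫ x in (0:ℝ)..1, (v x)^2 ≤ (1/Real.pi^2) * ∫ x in (0:ℝ)..1, (v' x)^2 := by
  have hvc : ContinuousOn v (Icc (0:ℝ) 1) :=
    fun x hx => (hv x hx).continuousAt.continuousWithinAt
  -- clamped absolute value
  set c : ℝ → ℝ := fun x => max 0 (min 1 |x|) with hcdef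
  have hcc : Continuous c := continuous_const.max (continuous_const.min continuous_abs)
  have hcmem : ∀ x, c x ∈ Icc (0:ℝ) 1 := fun x =>
    ⟨le_max_left _ _, max_le (by norm_num) (min_le_left _ _)⟩
  have hceven : ∀ x, c (-x) = c x := fun x => by simp [hcdef]
  have hc1 : ∀ y ∈ Icc (0:ℝ) 1, c y = y := fun y hy => by
    simp [hcdef, _root_.abs_of_nonneg hy.1, min_eq_right hy.2, max_eq_right hy.1]
  have hc2 : ∀ y ∈ Icc (-1:ℝ) 0, c y = -y := fun y hy => by
    rw [← hceven, hc1 (-y) ⟨by linarith [hy.2], by linarith [hy.1]⟩]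
  -- the even extension and its (one-sided) derivative
  set V : ℝ → ℂ := fun x => ((v (c x) : ℝ) : ℂ) with hVdef
  set G : ℝ → ℂ := fun x => if x < 0 then ((-(v' (c x)) : ℝ) : ℂ) else ((v' (c x) : ℝ) : ℂ)
    with hGdef
  have hVcont : Continuous V :=
    Complex.continuous_ofReal.comp (hvc.comp_continuous hcc hcmem)
  have hGmeas : Measurable G := by
    refine Measurable.ite (measurableSet_lt measurable_id measurable_const) ?_ ?_
    · exact (Complex.continuous_ofReal.comp
        ((hv'.comp_continuous hcc hcmem).neg)).measurable
    · exact (Complex.continuous_ofReal.comp (hv'.comp_continuous hcc hcmem)).measurable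
  -- bounds
  obtain ⟨Cv, hCv⟩ := isCompact_Icc.exists_bound_of_continuousOn hvc
  obtain ⟨Cg, hCg⟩ := isCompact_Icc.exists_bound_of_continuousOn hv'
  have hVb : ∀ x, ‖V x‖ ≤ Cv := fun x => by
    simp only [hVdef, Complex.norm_real]; exact hCv _ (hcmem x)
  have hGb : ∀ x, ‖G x‖ ≤ Cg := fun x => by
    by_cases h : x < 0 <;> simp only [hGdef, h, if_true, if_false, Complex.norm_real,
      norm_neg] <;> exact hCg _ (hcmem x)
  -- values of V and G on [0,1] and [-1,0]
  have hV01 : ∀ y ∈ Icc (0:ℝ) 1, V y = ((v y : ℝ) : ℂ) := fun y hy => by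
    simp [hVdef, hc1 y hy]
  have hVneg : ∀ y ∈ Icc (-1:ℝ) 0, V y = ((v (-y) : ℝ) : ℂ) := fun y hy => by
    simp [hVdef, hc2 y hy]
  -- one-sided derivatives
  have hderiv : ∀ x ∈ Ioo (-1:ℝ) (1:ℝ), HasDerivWithinAt V (G x) (Ioi x) x := by
    intro x hx
    rcases lt_trichotomy x 0 with hx0 | hx0 | hx0
    · -- x < 0
      have hmem : -x ∈ Icc (0:ℝ) 1 := ⟨by linarith [hx0], by linarith [hx.1]⟩
      have hd : HasDerivAt (v ∘ fun y => -y) (v' (-x) * (-1)) x :=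
        (hv (-x) hmem).comp x (hasDerivAt_neg x)
      have hdc : HasDerivAt (fun y => ((v (-y) : ℝ) : ℂ)) ((v' (-x) * (-1) : ℝ) : ℂ) x :=
        hd.ofReal_comp
      have heq : V =ᶠ[nhds x] fun y => ((v (-y) : ℝ) : ℂ) := by
        filter_upwards [Ioo_mem_nhds hx.1 hx0] with y hy
        exact hVneg y ⟨hy.1.le, hy.2.le⟩
      have : HasDerivAt V ((v' (-x) * (-1) : ℝ) : ℂ) x := hdc.congr_of_eventuallyEq heq
      have hGx : G x = ((v' (-x) * (-1) : ℝ) : ℂ) := by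
        rw [hGdef]; simp only [if_pos hx0, hc2 x ⟨hx.1.le, hx0.le⟩]; push_cast; ring
      rw [hGx]; exact this.hasDerivWithinAt
    · -- x = 0
      subst hx0
      have hd0 : HasDerivWithinAt v (v' 0) (Ioi 0) 0 :=
        (hv 0 ⟨le_refl 0, zero_le_one⟩).hasDerivWithinAt
      have hd0c : HasDerivWithinAt (fun y => ((v y : ℝ) : ℂ)) ((v' 0 : ℝ) : ℂ) (Ioi 0) 0 :=
        Complex.ofRealCLM.hasFDerivAt.comp_hasDerivWithinAt 0 hd0
      have heq : V =ᶠ[nhdsWithin 0 (Ioi 0)] fun y => ((v y : ℝ) : ℂ) := by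
        filter_upwards [Ioo_mem_nhdsGT zero_lt_one] with y hy
        exact hV01 y ⟨hy.1.le, hy.2.le⟩
      have hGx : G 0 = ((v' 0 : ℝ) : ℂ) := by
        rw [hGdef]; simp [hc1 0 ⟨le_refl 0, zero_le_one⟩]
      rw [hGx]
      exact hd0c.congr_of_eventuallyEq heq (by rw [hV01 0 ⟨le_refl 0, zero_le_one⟩])
    · -- x > 0
      have hmem : x ∈ Icc (0:ℝ) 1 := ⟨hx0.le, hx.2.le⟩
      have hdc : HasDerivAt (fun y => ((v y : ℝ) : ℂ)) ((v' x : ℝ) : ℂ) x :=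
        (hv x hmem).ofReal_comp
      have heq : V =ᶠ[nhds x] fun y => ((v y : ℝ) : ℂ) := by
        filter_upwards [Ioo_mem_nhds hx0 hx.2] with y hy
        exact hV01 y ⟨hy.1.le, hy.2.le⟩
      have hGx : G x = ((v' x : ℝ) : ℂ) := by
        rw [hGdef]; simp [not_lt.2 hx0.le, hc1 x hmem]
      rw [hGx]; exact (hdc.congr_of_eventuallyEq heq).hasDerivWithinAt
  have hGint : IntervalIntegrable G volume (-1) (-1+2) := intInt_of_bdd G Cg hGb _ _ hGmeas.aestronglyMeasurable
  have hV0 : V (-1+2) - V (-1) = 0 := by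
    have e1 : V (-1+2) = ((v 1 : ℝ) : ℂ) := by
      rw [show (-1:ℝ)+2 = 1 by norm_num]; exact hV01 1 ⟨zero_le_one, le_refl 1⟩
    have e2 : V (-1) = ((v 1 : ℝ) : ℂ) := by
      have := hVneg (-1) ⟨le_refl _, by norm_num⟩; simpa using this
    rw [e1, e2, sub_self]
  have hd' : ∀ x ∈ Ioo (min (-1:ℝ) (-1+2)) (max (-1:ℝ) (-1+2)),
      HasDerivWithinAt V (G x) (Ioi x) x := by
    have hmm : Ioo (min (-1:ℝ) (-1+2)) (max (-1:ℝ) (-1+2)) = Ioo (-1:ℝ) 1 := by norm_num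
    rw [hmm]; exact hderiv
  have hπ := Real.pi_pos
  have hnorm : ∀ n : ℤ, n ≠ 0 →
      ‖fourierCoeffOn hab2 V n‖ ≤ (1/Real.pi) * ‖fourierCoeffOn hab2 G n‖ := by
    intro n hn
    have h := fourierCoeffOn_of_hasDeriv_right hab2 hn hVcont.continuousOn hd' hGint
    rw [hV0, mul_zero, zero_sub] at h
    have hba : (((-1:ℝ)+2 :ℝ):ℂ) - ((-1:ℝ):ℂ) = 2 := by norm_num
    rw [hba] at h
    have hden : ‖(-2 * (Real.pi:ℂ) * Complex.I * (n:ℂ))‖ = 2 * Real.pi * |(n:ℝ)| := by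
      simp [norm_mul, Complex.norm_real, Complex.norm_intCast, _root_.abs_of_pos hπ]
    have hn1 : (1:ℝ) ≤ |(n:ℝ)| := by
      have := Int.one_le_abs hn
      calc (1:ℝ) = ((1:ℤ):ℝ) := by norm_num
        _ ≤ ((|n|:ℤ):ℝ) := by exact_mod_cast this
        _ = |(n:ℝ)| := by push_cast; ring
    have hGn0 : (0:ℝ) ≤ ‖fourierCoeffOn hab2 G n‖ := norm_nonneg _
    rw [h, norm_mul, norm_neg, norm_mul, norm_div, norm_one, hden,
      show ‖(2:ℂ)‖ = 2 by norm_num]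
    have hne : |(n:ℝ)| ≠ 0 := by positivity
    have e : 1/(2*Real.pi*|(n:ℝ)|) * (2 * ‖fourierCoeffOn hab2 G n‖)
        = ‖fourierCoeffOn hab2 G n‖ / (Real.pi * |(n:ℝ)|) := by
      field_simp
    rw [e, one_div, inv_mul_eq_div]
    exact div_le_div_of_nonneg_left hGn0 hπ (by nlinarith)
  have hsq : ∀ n : ℤ, ‖fourierCoeffOn hab2 V n‖^2
      ≤ (1/Real.pi^2) * ‖fourierCoeffOn hab2 G n‖^2 := by
    intro n
    by_cases hn : n = 0
    · subst hn
      have h0 : fourierCoeffOn hab2 V 0 = 0 := by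
        rw [fourierCoeffOn_eq_integral]
        simp only [neg_zero, fourier_zero, one_smul]
        have hintV : ∫ x in (-1:ℝ)..(-1+2), V x = 0 := by
          have e1 : ∫ x in (-1:ℝ)..(-1+2), V x
              = ((∫ x in (-1:ℝ)..(-1+2), v (c x) : ℝ) : ℂ) :=
            intervalIntegral.integral_ofReal
          have e2 : ∫ x in (-1:ℝ)..(-1+2), v (c x)
              = 2 * ∫ x in (0:ℝ)..1, v (c x) := by
            refine even_int _ (fun x => by rw [hceven]) ?_ ?_ <;>
              exact ((hvc.comp_continuous hcc hcmem)).intervalIntegrable _ _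
          have e3 : ∫ x in (0:ℝ)..1, v (c x) = ∫ x in (0:ℝ)..1, v x := by
            refine intervalIntegral.integral_congr fun x hx => ?_
            rw [uIcc_of_le zero_le_one] at hx
            rw [hc1 x hx]
          rw [e1, e2, e3, hmean]
          norm_num
        rw [hintV, smul_zero]
      rw [h0, norm_zero, show ((0:ℝ))^2 = 0 by norm_num]
      positivity
    · have h := hnorm n hn
      have h1 := norm_nonneg (fourierCoeffOn hab2 V n)
      have h2 := norm_nonneg (fourierCoeffOn hab2 G n)
      calc ‖fourierCoeffOn hab2 V n‖^2 ≤ (1/Real.pi * ‖fourierCoeffOn hab2 G n‖)^2 :=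
            pow_le_pow_left₀ h1 h 2
        _ = 1/Real.pi^2 * ‖fourierCoeffOn hab2 G n‖^2 := by
            rw [mul_pow, div_pow, one_pow]
  obtain ⟨hsumV, heqV⟩ := parseval_aux V hVcont.measurable Cv hVb
  obtain ⟨hsumG, heqG⟩ := parseval_aux G hGmeas Cg hGb
  have hV2 : (1/2) * ∫ x in (-1:ℝ)..(-1+2), ‖V x‖^2 = ∫ x in (0:ℝ)..1, (v x)^2 := by
    have e2 : ∫ x in (-1:ℝ)..(-1+2), ‖V x‖^2 = 2 * ∫ x in (0:ℝ)..1, ‖V x‖^2 := by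
      refine even_int _ (fun x => by simp only [hVdef, hceven]) ?_ ?_ <;>
        exact ((hVcont.norm.pow 2)).intervalIntegrable _ _
    have e3 : ∫ x in (0:ℝ)..1, ‖V x‖^2 = ∫ x in (0:ℝ)..1, (v x)^2 := by
      refine intervalIntegral.integral_congr fun x hx => ?_
      rw [uIcc_of_le zero_le_one] at hx
      rw [hV01 x hx, Complex.norm_real, Real.norm_eq_abs, _root_.sq_abs]
    rw [e2, e3]; ring
  have hGn : ∀ y, ‖G y‖ = |v' (c y)| := fun y => by
    by_cases h : y < 0 <;>
      simp [hGdef, h, Complex.norm_real, Real.norm_eq_abs, abs_neg]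
  have hG2 : (1/2) * ∫ x in (-1:ℝ)..(-1+2), ‖G x‖^2 = ∫ x in (0:ℝ)..1, (v' x)^2 := by
    have hmeas2 : Measurable (fun x => ‖G x‖^2) := (hGmeas.norm.pow_const 2)
    have hb2 : ∀ x, ‖‖G x‖^2‖ ≤ Cg^2 := fun x => by
      rw [Real.norm_eq_abs, _root_.abs_of_nonneg (by positivity)]
      have := hGb x
      nlinarith [norm_nonneg (G x)]
    have e2 : ∫ x in (-1:ℝ)..(-1+2), ‖G x‖^2 = 2 * ∫ x in (0:ℝ)..1, ‖G x‖^2 := by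
      refine even_int _ (fun x => by rw [hGn, hGn, hceven]) ?_ ?_ <;>
        exact intInt_of_bdd _ (Cg^2) hb2 _ _ hmeas2.aestronglyMeasurable
    have e3 : ∫ x in (0:ℝ)..1, ‖G x‖^2 = ∫ x in (0:ℝ)..1, (v' x)^2 := by
      refine intervalIntegral.integral_congr fun x hx => ?_
      rw [uIcc_of_le zero_le_one] at hx
      rw [hGn, hc1 x hx, _root_.sq_abs]
    rw [e2, e3]; ring
  calc ∫ x in (0:ℝ)..1, (v x)^2 = ∑' n : ℤ, ‖fourierCoeffOn hab2 V n‖^2 := by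
        rw [heqV, hV2]
    _ ≤ ∑' n : ℤ, (1/Real.pi^2) * ‖fourierCoeffOn hab2 G n‖^2 :=
        Summable.tsum_le_tsum hsq hsumV (hsumG.mul_left _)
    _ = (1/Real.pi^2) * ∑' n : ℤ, ‖fourierCoeffOn hab2 G n‖^2 := tsum_mul_left
    _ = (1/Real.pi^2) * ∫ x in (0:ℝ)..1, (v' x)^2 := by rw [heqG, hG2]

end helpers2

/-- A generalized Poincaré inequality: for `a ∈ L²(0,1)` with positive mean `ā`
and `u ∈ C¹([0,1])`,
`‖u‖ ≤ (1/π)(1 + ‖a − ā‖/ā)‖u′‖ + |∫₀¹ a u|/ā`. -/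
theorem stmt3 (a : ℝ → ℝ)
    (ha : MemLp a 2 (volume.restrict (Ioc (0:ℝ) 1)))
    (abar : ℝ) (habar : abar = ∫ x in (0:ℝ)..1, a x) (hpos : 0 < abar)
    (u u' : ℝ → ℝ)
    (hu : ∀ x ∈ Icc (0:ℝ) 1, HasDerivAt u (u' x) x)
    (hu' : ContinuousOn u' (Icc (0:ℝ) 1)) :
    L2nrm u ≤ (1 / Real.pi) * (1 + (1 / abar) * L2nrm (fun x => a x - abar)) * L2nrm u'
        + (1 / abar) * |∫ x in (0:ℝ)..1, a x * u x| := by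
  have hπ := Real.pi_pos
  set μ := volume.restrict (Ioc (0:ℝ) 1) with hμ
  haveI : IsFiniteMeasure μ :=
    ⟨by rw [hμ, Measure.restrict_apply_univ]; exact measure_Ioc_lt_top⟩
  have hucont : ContinuousOn u (Icc (0:ℝ) 1) :=
    fun x hx => (hu x hx).continuousAt.continuousWithinAt
  set ub := ∫ x in (0:ℝ)..1, u x with hub
  set w : ℝ → ℝ := fun x => u x - ub with hw
  have hwc : ContinuousOn w (Icc (0:ℝ) 1) := hucont.sub continuousOn_const
  have huint : IntervalIntegrable u volume 0 1 := by
    apply ContinuousOn.intervalIntegrable; rwa [uIcc_of_le zero_le_one]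
  have hwint : IntervalIntegrable w volume 0 1 := by
    apply ContinuousOn.intervalIntegrable; rwa [uIcc_of_le zero_le_one]
  have hw2int : IntervalIntegrable (fun x => (w x)^2) volume 0 1 := by
    apply ContinuousOn.intervalIntegrable
    rw [uIcc_of_le zero_le_one]; exact hwc.pow 2
  have hwd : ∀ x ∈ Icc (0:ℝ) 1, HasDerivAt w (u' x) x := fun x hx => (hu x hx).sub_const _
  have hwm : ∫ x in (0:ℝ)..1, w x = 0 := by
    rw [show w = fun x => u x - ub from rfl]
    rw [intervalIntegral.integral_sub huint intervalIntegrable_const,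
      intervalIntegral.integral_const]
    simp [hub]
  have hwirt := wirtinger w u' hwd hu' hwm
  have hA0 : 0 ≤ ∫ x in (0:ℝ)..1, (w x)^2 :=
    intervalIntegral.integral_nonneg zero_le_one (fun x _ => sq_nonneg _)
  have hU'0 : 0 ≤ ∫ x in (0:ℝ)..1, (u' x)^2 :=
    intervalIntegral.integral_nonneg zero_le_one (fun x _ => sq_nonneg _)
  -- split of the squared norm
  have hsplit : L2nsq u = (∫ x in (0:ℝ)..1, (w x)^2) + ub^2 := by
    rw [L2nsq]
    have hcg : ∀ x, (u x)^2 = ((w x)^2 + (2*ub) * w x) + ub^2 := fun x => by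
      rw [hw]; ring
    rw [intervalIntegral.integral_congr (fun x _ => hcg x)]
    rw [intervalIntegral.integral_add (hw2int.add (hwint.const_mul _))
      intervalIntegrable_const,
      intervalIntegral.integral_add hw2int (hwint.const_mul _),
      intervalIntegral.integral_const_mul, hwm, intervalIntegral.integral_const]
    simp
  set S := Real.sqrt (∫ x in (0:ℝ)..1, (w x)^2) with hS
  have hS0 : 0 ≤ S := Real.sqrt_nonneg _
  have h1 : L2nrm u ≤ S + |ub| := by
    rw [L2nrm, hsplit]
    have hstep : (∫ x in (0:ℝ)..1, (w x)^2) + ub^2 ≤ (S + |ub|)^2 := by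
      have hs := Real.sq_sqrt hA0
      nlinarith [abs_nonneg ub, sq_abs ub]
    calc Real.sqrt ((∫ x in (0:ℝ)..1, (w x)^2) + ub^2)
        ≤ Real.sqrt ((S + |ub|)^2) := Real.sqrt_le_sqrt hstep
      _ = S + |ub| := Real.sqrt_sq (by positivity)
  have h2 : S ≤ (1/Real.pi) * L2nrm u' := by
    rw [L2nrm, L2nsq, hS]
    calc Real.sqrt (∫ x in (0:ℝ)..1, (w x)^2)
        ≤ Real.sqrt ((1/Real.pi^2) * ∫ x in (0:ℝ)..1, (u' x)^2) := Real.sqrt_le_sqrt hwirt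
      _ = (1/Real.pi) * Real.sqrt (∫ x in (0:ℝ)..1, (u' x)^2) := by
          rw [show (1/Real.pi^2) = (1/Real.pi)^2 by rw [div_pow, one_pow],
            Real.sqrt_mul (by positivity), Real.sqrt_sq (by positivity)]
  -- measurability / MemLp facts
  have hmeas_u : AEStronglyMeasurable u μ :=
    (hucont.mono Ioc_subset_Icc_self).aestronglyMeasurable measurableSet_Ioc
  obtain ⟨Cu, hCu⟩ := isCompact_Icc.exists_bound_of_continuousOn hucont
  have hu2 : MemLp u 2 μ := MemLp.of_bound hmeas_u Cu
    ((ae_restrict_iff' measurableSet_Ioc).2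
      (ae_of_all _ fun x hx => hCu x (Ioc_subset_Icc_self hx)))
  have hw2 : MemLp w 2 μ := hu2.sub (memLp_const ub)
  have ham : MemLp (fun x => a x - abar) 2 μ := ha.sub (memLp_const abar)
  -- key identity
  have hid : abar * ub = (∫ x in (0:ℝ)..1, a x * u x)
      - ∫ x, (a x - abar) * (w x) ∂μ := by
    have hconv : ∫ x in (0:ℝ)..1, a x * u x = ∫ x, a x * u x ∂μ :=
      intervalIntegral.integral_of_le zero_le_one
    have ia : Integrable a μ := ha.integrable one_le_two
    have i1 : Integrable (fun x => (a x - abar) * w x) μ := integrable_mul_of_memL2 ham hw2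
    have i2 : Integrable (fun x => abar * w x) μ := (hw2.integrable one_le_two).const_mul _
    have i3 : Integrable (fun x => ub * a x) μ := ia.const_mul _
    have hia : ∫ x, a x ∂μ = abar := by
      rw [habar, intervalIntegral.integral_of_le zero_le_one]
    have hiw : ∫ x, w x ∂μ = 0 := by
      rw [← intervalIntegral.integral_of_le zero_le_one]; exact hwm
    have hsp : ∫ x, a x * u x ∂μ
        = ∫ x, (((a x - abar) * w x + abar * w x) + ub * a x) ∂μ := by
      refine integral_congr_ae (ae_of_all _ fun x => ?_)
      rw [hw]; ring
    have i12 : Integrable (fun x => (a x - abar) * w x + abar * w x) μ := i1.add i2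
    rw [hconv, hsp, integral_add i12 i3, integral_add i1 i2,
      integral_const_mul, integral_const_mul, hiw, hia]
    ring
  set Na := L2nrm (fun x => a x - abar) with hNa
  have hNa0 : 0 ≤ Na := Real.sqrt_nonneg _
  set J := |∫ x in (0:ℝ)..1, a x * u x| with hJ
  have hCS : |∫ x, (a x - abar) * w x ∂μ| ≤ Na * S := by
    have hcs := cs_L2 ham hw2
    rw [hNa, L2nrm, L2nsq, hS, intervalIntegral.integral_of_le zero_le_one,
      intervalIntegral.integral_of_le zero_le_one]
    exact hcs
  have hub2 : abar * |ub| ≤ J + Na * S := by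
    have e1 : |abar * ub| ≤ J + |∫ x, (a x - abar) * w x ∂μ| := by
      rw [hid, sub_eq_add_neg]
      exact (abs_add_le _ _).trans (by rw [abs_neg])
    rw [abs_mul, abs_of_pos hpos] at e1
    linarith [hCS]
  have hub3 : |ub| ≤ (1/abar) * (J + Na * S) := by
    have h' : |ub| = (1/abar) * (abar * |ub|) := by field_simp
    rw [h']
    exact mul_le_mul_of_nonneg_left hub2 (by positivity)
  calc L2nrm u ≤ S + |ub| := h1
    _ ≤ S + (1/abar) * (J + Na * S) := by linarith
    _ = (1 + (1/abar) * Na) * S + (1/abar) * J := by ring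
    _ ≤ (1 + (1/abar) * Na) * ((1/Real.pi) * L2nrm u') + (1/abar) * J := by
        have hcoef : (0:ℝ) ≤ 1 + (1/abar) * Na := by positivity
        nlinarith [mul_le_mul_of_nonneg_left h2 hcoef]
    _ = (1/Real.pi) * (1 + (1/abar) * Na) * L2nrm u' + (1/abar) * J := by ring
end

section
/- Let a : ℝ → ℝ be continuous on [0,1] with 0 < a₀ ≤ a(x) ≤ a₁ for all x ∈ [0,1], and let (u,p) be a classical solution of the damped wave system on [0,T]. Then for every t ∈ [0,T]: ‖u(t,·)‖ ≤ (a₁/a₀)·‖∂ₜp(t,·)‖ + (1/a₀)·‖∂ₜu(t,·)‖, where ‖f‖ = (∫₀¹ f(x)² dx)^{1/2} denotes the L²(0,1) norm in the spatial variable. -/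
open MeasureTheory Set

lemma L2nsq_nonneg (f : ℝ → ℝ) : 0 ≤ L2nsq f :=
  intervalIntegral.integral_nonneg (by norm_num) (fun x _ => sq_nonneg _)

lemma slice_cont {T : ℝ} {f : ℝ → ℝ → ℝ}
    (h : ContinuousOn (Function.uncurry f) (Icc (0:ℝ) T ×ˢ Icc (0:ℝ) 1))
    {t : ℝ} (ht : t ∈ Icc (0:ℝ) T) : ContinuousOn (f t) (Icc (0:ℝ) 1) := by
  have : f t = Function.uncurry f ∘ (fun x => (t, x)) := rfl
  rw [this]
  exact h.comp ((continuous_const.prodMk continuous_id).continuousOn)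
    (fun x hx => ⟨ht, hx⟩)

/-- interval Cauchy–Schwarz against the constant 1. -/
lemma abs_int_le_L2nrm {f : ℝ → ℝ} (hf : ContinuousOn f (Icc 0 1)) :
    (∫ x in (0:ℝ)..1, |f x|) ≤ L2nrm f := by
  have h01 : (0:ℝ) ≤ 1 := by norm_num
  have huIcc : uIcc (0:ℝ) 1 = Icc 0 1 := uIcc_of_le h01
  have hfi : IntervalIntegrable f volume 0 1 := (huIcc ▸ hf).intervalIntegrable
  have hS : 0 ≤ L2nsq f := L2nsq_nonneg f
  set s := Real.sqrt (L2nsq f) with hs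
  have hs0 : 0 ≤ s := Real.sqrt_nonneg _
  have hss : s ^ 2 = L2nsq f := Real.sq_sqrt hS
  refine le_of_forall_pos_le_add (fun ε hε => ?_)
  have hc : 0 < s + ε := by linarith
  have key : ∀ x ∈ Icc (0:ℝ) 1, |f x| ≤ (f x ^ 2 + (s + ε) ^ 2) / (2 * (s + ε)) := by
    intro x _
    rw [le_div_iff₀ (by linarith)]
    nlinarith [sq_nonneg (|f x| - (s + ε)), abs_nonneg (f x), sq_abs (f x)]
  have hint2 : IntervalIntegrable (fun x => (f x ^ 2 + (s + ε) ^ 2) / (2 * (s + ε)))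
      volume 0 1 := by
    apply ContinuousOn.intervalIntegrable
    rw [huIcc]
    exact ((hf.pow 2).add continuousOn_const).div_const _
  have hmono := intervalIntegral.integral_mono_on h01
    (hfi.abs) hint2 key
  have hval : (∫ x in (0:ℝ)..1, (f x ^ 2 + (s + ε) ^ 2) / (2 * (s + ε)))
      = (L2nsq f + (s + ε) ^ 2) / (2 * (s + ε)) := by
    rw [intervalIntegral.integral_div, intervalIntegral.integral_add
      ((huIcc ▸ (hf.pow 2)).intervalIntegrable) intervalIntegrable_const,
      intervalIntegral.integral_const]
    simp [L2nsq]
  rw [hval] at hmono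
  refine hmono.trans ?_
  have hLf : L2nrm f = s := rfl
  rw [hLf, div_le_iff₀ (by linarith)]
  nlinarith [hss, hs0, hε.le]

lemma abs_intervalIntegral_le {f : ℝ → ℝ} (hf : ContinuousOn f (Icc 0 1))
    {x y : ℝ} (hx : x ∈ Icc (0:ℝ) 1) (hy : y ∈ Icc (0:ℝ) 1) :
    |∫ z in y..x, f z| ≤ ∫ z in (0:ℝ)..1, |f z| := by
  have h01 : (0:ℝ) ≤ 1 := by norm_num
  have huIcc : uIcc (0:ℝ) 1 = Icc 0 1 := uIcc_of_le h01
  have hfi : IntervalIntegrable (fun z => |f z|) volume 0 1 :=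
    (huIcc ▸ hf.abs).intervalIntegrable
  have hsub : uIoc y x ⊆ uIoc (0:ℝ) 1 := by
    rw [uIoc_of_le h01, uIoc]
    exact Ioc_subset_Ioc (le_min hy.1 hx.1) (max_le hy.2 hx.2)
  have h1 : |∫ z in y..x, f z| ≤ |(∫ z in y..x, |f z|)| := by
    rcases le_total y x with h | h
    · exact (intervalIntegral.abs_integral_le_integral_abs h).trans (le_abs_self _)
    · rw [intervalIntegral.integral_symm x y, intervalIntegral.integral_symm x y,
        abs_neg, abs_neg]
      exact (intervalIntegral.abs_integral_le_integral_abs h).trans (le_abs_self _)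
  have h2 : |(∫ z in y..x, |f z|)| ≤ |(∫ z in (0:ℝ)..1, |f z|)| :=
    intervalIntegral.abs_integral_mono_interval hsub
      (Filter.Eventually.of_forall (fun z => abs_nonneg _)) hfi
  have h3 : |(∫ z in (0:ℝ)..1, |f z|)| = ∫ z in (0:ℝ)..1, |f z| :=
    abs_of_nonneg (intervalIntegral.integral_nonneg h01 (fun z _ => abs_nonneg _))
  exact h1.trans (h2.trans_eq h3)

/-- For classical solutions of the damped wave system with `0 < a₀ ≤ a ≤ a₁`:
`‖u(t,·)‖ ≤ (a₁/a₀)‖∂ₜp(t,·)‖ + (1/a₀)‖∂ₜu(t,·)‖`. -/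
theorem stmt4 (T : ℝ) (hT : 0 < T) (a : ℝ → ℝ) (a₀ a₁ : ℝ)
    (ha : ContinuousOn a (Icc (0:ℝ) 1)) (ha₀ : 0 < a₀)
    (hbd : ∀ x ∈ Icc (0:ℝ) 1, a₀ ≤ a x ∧ a x ≤ a₁)
    (u p ut ux pt px : ℝ → ℝ → ℝ)
    (hsol : IsClassicalSolution T a u p ut ux pt px) :
    ∀ t ∈ Icc (0:ℝ) T,
      L2nrm (u t) ≤ (a₁ / a₀) * L2nrm (pt t) + (1 / a₀) * L2nrm (ut t) := by
  obtain ⟨hder, hutc, huxc, hptc, hpxc, heq, hbc⟩ := hsol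
  intro t ht
  have h01 : (0:ℝ) ≤ 1 := by norm_num
  have huIcc : uIcc (0:ℝ) 1 = Icc 0 1 := uIcc_of_le h01
  -- continuity of slices
  have hutc' : ContinuousOn (ut t) (Icc 0 1) := slice_cont hutc ht
  have huxc' : ContinuousOn (ux t) (Icc 0 1) := slice_cont huxc ht
  have hptc' : ContinuousOn (pt t) (Icc 0 1) := slice_cont hptc ht
  have hpxc' : ContinuousOn (px t) (Icc 0 1) := slice_cont hpxc ht
  have huc : ContinuousOn (u t) (Icc 0 1) := fun x hx =>
    ((hder t ht x hx).2.1.continuousAt).continuousWithinAt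
  -- a₁ bound positivity
  have ha₁ : a₀ ≤ a₁ := (hbd 0 (by norm_num)).1.trans (hbd 0 (by norm_num)).2
  -- ∫ px = 0
  have hpx_int : (∫ y in (0:ℝ)..1, px t y) = 0 := by
    have := intervalIntegral.integral_eq_sub_of_hasDerivAt
      (f := fun y => p t y) (f' := fun y => px t y)
      (fun x hx => (hder t ht x (huIcc ▸ hx)).2.2.2)
      ((huIcc ▸ hpxc').intervalIntegrable)
    rw [this]
    show p t 1 - p t 0 = 0
    rw [(hbc t ht).1, (hbc t ht).2, sub_zero]
  -- ∫ a u = - ∫ ut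
  have hiut : IntervalIntegrable (ut t) volume 0 1 := (huIcc ▸ hutc').intervalIntegrable
  have hipx : IntervalIntegrable (px t) volume 0 1 := (huIcc ▸ hpxc').intervalIntegrable
  have hiau : IntervalIntegrable (fun y => a y * u t y) volume 0 1 :=
    (huIcc ▸ (ha.mul huc)).intervalIntegrable
  have hzero : (∫ y in (0:ℝ)..1, (ut t y + px t y + a y * u t y)) = 0 := by
    rw [intervalIntegral.integral_congr (g := fun _ => (0:ℝ))
      (fun y hy => (heq t ht y (huIcc ▸ hy)).1)]
    simp
  have hau_eq : (∫ y in (0:ℝ)..1, a y * u t y) = - ∫ y in (0:ℝ)..1, ut t y := by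
    rw [intervalIntegral.integral_add (hiut.add hipx) hiau,
      intervalIntegral.integral_add hiut hipx, hpx_int] at hzero
    linarith
  -- ux = -pt on the interval, hence equal L2 norms
  have hux_pt : L2nrm (ux t) = L2nrm (pt t) := by
    unfold L2nrm L2nsq
    congr 1
    apply intervalIntegral.integral_congr
    intro y hy
    have h := (heq t ht y (huIcc ▸ hy)).2
    show ux t y ^ 2 = pt t y ^ 2
    have hx : ux t y = - pt t y := by linarith
    rw [hx]; ring
  set P := L2nrm (pt t) with hP
  set U := L2nrm (ut t) with hU
  have hP0 : 0 ≤ P := Real.sqrt_nonneg _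
  have hU0 : 0 ≤ U := Real.sqrt_nonneg _
  -- ∫ |ut| ≤ U, ∫ |ux| ≤ P
  have hIut : (∫ y in (0:ℝ)..1, |ut t y|) ≤ U := abs_int_le_L2nrm hutc'
  have hIux : (∫ y in (0:ℝ)..1, |ux t y|) ≤ P := by
    rw [← hux_pt]; exact abs_int_le_L2nrm huxc'
  have hIux0 : 0 ≤ ∫ y in (0:ℝ)..1, |ux t y| :=
    intervalIntegral.integral_nonneg h01 (fun y _ => abs_nonneg _)
  set Iux := ∫ y in (0:ℝ)..1, |ux t y| with hIuxdef
  -- A := ∫ a ≥ a₀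
  set A := ∫ y in (0:ℝ)..1, a y with hA
  have hia : IntervalIntegrable a volume 0 1 := (huIcc ▸ ha).intervalIntegrable
  have hAge : a₀ ≤ A := by
    have : (∫ y in (0:ℝ)..1, (a₀:ℝ)) ≤ A :=
      intervalIntegral.integral_mono_on h01 intervalIntegrable_const hia
        (fun y hy => (hbd y hy).1)
    simpa using this
  have hApos : 0 < A := lt_of_lt_of_le ha₀ hAge
  -- pointwise bound on |u t x|
  have hpoint : ∀ x ∈ Icc (0:ℝ) 1, |u t x| ≤ (a₁ * P + U) / a₀ := by
    intro x hx
    -- A * u t x = ∫ a u + ∫ a(y)(u t x - u t y)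
    have hkey : A * u t x = (∫ y in (0:ℝ)..1, a y * u t y)
        + ∫ y in (0:ℝ)..1, a y * (u t x - u t y) := by
      have hiau2 : IntervalIntegrable (fun y => a y * (u t x - u t y)) volume 0 1 := by
        apply ContinuousOn.intervalIntegrable
        rw [huIcc]
        exact ha.mul (continuousOn_const.sub huc)
      rw [← intervalIntegral.integral_add hiau hiau2]
      have : (∫ y in (0:ℝ)..1, (a y * u t y + a y * (u t x - u t y)))
          = ∫ y in (0:ℝ)..1, a y * u t x := by
        apply intervalIntegral.integral_congr
        intro y _; ring
      rw [this, intervalIntegral.integral_mul_const]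
    -- bound the second term pointwise
    have hdiff : ∀ y ∈ Icc (0:ℝ) 1, |a y * (u t x - u t y)| ≤ a₁ * Iux := by
      intro y hy
      have hfuy : u t x - u t y = ∫ z in y..x, ux t z := by
        have := intervalIntegral.integral_eq_sub_of_hasDerivAt
          (f := fun z => u t z) (f' := fun z => ux t z)
          (a := y) (b := x) (fun z hz => (hder t ht z ?_).2.1)
          ?_
        · rw [this]
        · rcases le_total y x with h | h
          · rw [uIcc_of_le h] at hz
            exact ⟨hy.1.trans hz.1, hz.2.trans hx.2⟩
          · rw [uIcc_of_ge h] at hz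
            exact ⟨hx.1.trans hz.1, hz.2.trans hy.2⟩
        · apply ContinuousOn.intervalIntegrable
          apply huxc'.mono
          rcases le_total y x with h | h
          · rw [uIcc_of_le h]
            exact Icc_subset_Icc hy.1 hx.2
          · rw [uIcc_of_ge h]
            exact Icc_subset_Icc hx.1 hy.2
      have h1 : |u t x - u t y| ≤ Iux := by
        rw [hfuy]
        exact abs_intervalIntegral_le huxc' hx hy
      have h2 : |a y| ≤ a₁ := by
        rw [abs_of_pos (lt_of_lt_of_le ha₀ (hbd y hy).1)]
        exact (hbd y hy).2
      calc |a y * (u t x - u t y)| = |a y| * |u t x - u t y| := abs_mul _ _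
        _ ≤ a₁ * Iux := by
            apply mul_le_mul h2 h1 (abs_nonneg _) (le_trans (abs_nonneg _) h2)
    have hsecond : |∫ y in (0:ℝ)..1, a y * (u t x - u t y)| ≤ a₁ * Iux := by
      have hint : IntervalIntegrable (fun y => |a y * (u t x - u t y)|) volume 0 1 := by
        apply ContinuousOn.intervalIntegrable
        rw [huIcc]
        exact (ha.mul (continuousOn_const.sub huc)).abs
      calc |∫ y in (0:ℝ)..1, a y * (u t x - u t y)|
          ≤ ∫ y in (0:ℝ)..1, |a y * (u t x - u t y)| :=
            intervalIntegral.abs_integral_le_integral_abs h01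
        _ ≤ ∫ y in (0:ℝ)..1, a₁ * Iux :=
            intervalIntegral.integral_mono_on h01 hint intervalIntegrable_const hdiff
        _ = a₁ * Iux := by simp
    have hfirst : |∫ y in (0:ℝ)..1, a y * u t y| ≤ U := by
      rw [hau_eq, abs_neg]
      calc |∫ y in (0:ℝ)..1, ut t y| ≤ ∫ y in (0:ℝ)..1, |ut t y| :=
            intervalIntegral.abs_integral_le_integral_abs h01
        _ ≤ U := hIut
    have hnum : |u t x| * A ≤ a₁ * P + U := by
      have : |u t x| * A = |A * u t x| := by
        rw [abs_mul, abs_of_pos hApos, mul_comm]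
      rw [this, hkey]
      calc |(∫ y in (0:ℝ)..1, a y * u t y) + ∫ y in (0:ℝ)..1, a y * (u t x - u t y)|
          ≤ |∫ y in (0:ℝ)..1, a y * u t y| + |∫ y in (0:ℝ)..1, a y * (u t x - u t y)| :=
            abs_add_le _ _
        _ ≤ U + a₁ * Iux := add_le_add hfirst hsecond
        _ ≤ a₁ * P + U := by
            have ha₁0 : 0 ≤ a₁ := le_trans ha₀.le ha₁
            nlinarith [mul_le_mul_of_nonneg_left hIux ha₁0]
    rw [le_div_iff₀ ha₀]
    calc |u t x| * a₀ ≤ |u t x| * A :=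
          mul_le_mul_of_nonneg_left hAge (abs_nonneg _)
      _ ≤ a₁ * P + U := hnum
  -- conclude
  set M := (a₁ * P + U) / a₀ with hM
  have hM0 : 0 ≤ M := by
    apply div_nonneg _ ha₀.le
    have ha₁0 : 0 ≤ a₁ := le_trans ha₀.le ha₁
    positivity
  have hsq : L2nsq (u t) ≤ M ^ 2 := by
    have hiu2 : IntervalIntegrable (fun y => u t y ^ 2) volume 0 1 :=
      (huIcc ▸ (huc.pow 2)).intervalIntegrable
    calc L2nsq (u t) = ∫ y in (0:ℝ)..1, u t y ^ 2 := rfl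
      _ ≤ ∫ y in (0:ℝ)..1, M ^ 2 := by
          apply intervalIntegral.integral_mono_on h01 hiu2 intervalIntegrable_const
          intro y hy
          have := hpoint y hy
          nlinarith [abs_nonneg (u t y), sq_abs (u t y)]
      _ = M ^ 2 := by simp
  have : L2nrm (u t) ≤ M := by
    rw [L2nrm, show M = Real.sqrt (M ^ 2) from (Real.sqrt_sq hM0).symm]
    exact Real.sqrt_le_sqrt hsq
  refine this.trans (le_of_eq ?_)
  rw [hM]
  field_simp
end
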